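/- arXiv:1406.0217 — 6 statements merged into one kernel-verified Lean document; each statement's English description precedes it below -/
import Mathlib

section
/- For every binary phylogenetic tree T on leaf set {1,…,n} and every character f : {1,…,n} → {0,1}, the parsimony score satisfies ps(f,T) ≤ ⌊n/2⌋. -/
open Classical

/-- A binary phylogenetic tree on leaf set `{1, …, n}` (represented by `Fin n`),
with vertex set `Fin (2 * n - 2)`: a connected acyclic simple graph in which every
vertex has degree 1 or 3, together with a bijective labeling of the degree-1
vertices (the leaves) by `Fin n`.  The collection of such trees is `UB(n)`. -/
structure PhyloTree (n : ℕ) where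
  adj : SimpleGraph (Fin (2 * n - 2))
  connected : adj.Connected
  acyclic : adj.IsAcyclic
  degOneOrThree : ∀ v, (adj.neighborSet v).ncard = 1 ∨ (adj.neighborSet v).ncard = 3
  leaf : Fin n → Fin (2 * n - 2)
  leaf_inj : Function.Injective leaf
  leaf_range : ∀ v, (adj.neighborSet v).ncard = 1 ↔ ∃ i, leaf i = v

/-- The changing number of an assignment `g` of states to the vertices of `T`:
the number of edges of `T` whose two endpoints receive different states. -/
noncomputable def changingNumber {n : ℕ} (T : PhyloTree n)
    (g : Fin (2 * n - 2) → Bool) : ℕ :=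
  Set.ncard {e : Sym2 (Fin (2 * n - 2)) |
    e ∈ T.adj.edgeSet ∧ ∃ u v, e = s(u, v) ∧ g u ≠ g v}

/-- The parsimony score of a character `f` on a tree `T`: the minimum changing
number over all extensions of `f` to the vertices of `T`. -/
noncomputable def ps {n : ℕ} (f : Fin n → Bool) (T : PhyloTree n) : ℕ :=
  sInf {m | ∃ g : Fin (2 * n - 2) → Bool,
    (∀ i, g (T.leaf i) = f i) ∧ changingNumber T g = m}

/-- The set of splits of `T`: for each edge `s(u, v)` of `T`, the bipartition of the
leaf labels into those whose leaf lies in the component of `u` and those whose leaf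
lies in the component of `v`, after deleting the edge. -/
def splits {n : ℕ} (T : PhyloTree n) : Set (Set (Set (Fin n))) :=
  {σ | ∃ u v, s(u, v) ∈ T.adj.edgeSet ∧
    σ = { {i | (T.adj.deleteEdges {s(u, v)}).Reachable (T.leaf i) u},
          {i | (T.adj.deleteEdges {s(u, v)}).Reachable (T.leaf i) v} } }

/-- A character `f` is compatible with a tree `T` if it is non-constant and the
partition `{f⁻¹(0), f⁻¹(1)}` equals the split of `T` at some edge. -/
def CompatibleWithTree {n : ℕ} (f : Fin n → Bool) (T : PhyloTree n) : Prop :=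
  (∃ i j, f i ≠ f j) ∧
    ({ {i | f i = false}, {i | f i = true} } : Set (Set (Fin n))) ∈ splits T

/-- Two characters are compatible with each other if at least one of the four
intersections of their preimage sets is empty. -/
def CharCompatible {n : ℕ} (f₁ f₂ : Fin n → Bool) : Prop :=
  {i | f₁ i = false} ∩ {i | f₂ i = false} = ∅ ∨
  {i | f₁ i = false} ∩ {i | f₂ i = true} = ∅ ∨
  {i | f₁ i = true} ∩ {i | f₂ i = false} = ∅ ∨
  {i | f₁ i = true} ∩ {i | f₂ i = true} = ∅

/-- A tree on six leaves has the symmetric shape if some vertex has all three of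
its neighbors of degree 3. -/
def IsSymmetricShape (T : PhyloTree 6) : Prop :=
  ∃ v, (T.adj.neighborSet v).ncard = 3 ∧
    ∀ u ∈ T.adj.neighborSet v, (T.adj.neighborSet u).ncard = 3

/-- A tree on six leaves has the caterpillar shape if no vertex has all three of
its neighbors of degree 3. -/
def IsCaterpillarShape (T : PhyloTree 6) : Prop :=
  ¬ ∃ v, (T.adj.neighborSet v).ncard = 3 ∧
    ∀ u ∈ T.adj.neighborSet v, (T.adj.neighborSet u).ncard = 3

/-- `T` is a maximum parsimony tree for the sequence of characters `F`. -/
def IsMPTree {n k : ℕ} (F : Fin k → Fin n → Bool) (T : PhyloTree n) : Prop :=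
  ∀ T' : PhyloTree n, (∑ i, ps (F i) T) ≤ ∑ i, ps (F i) T'
-- aux: an edge containing a degree-1 vertex is unique
lemma edge_unique {n : ℕ} (T : PhyloTree n) (w : Fin (2 * n - 2))
    (hw : (T.adj.neighborSet w).ncard = 1) {e₁ e₂ : Sym2 (Fin (2 * n - 2))}
    (h₁ : e₁ ∈ T.adj.edgeSet) (h₂ : e₂ ∈ T.adj.edgeSet)
    (hw1 : w ∈ e₁) (hw2 : w ∈ e₂) : e₁ = e₂ := by
  obtain ⟨a, ha⟩ := Set.ncard_eq_one.mp hw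
  have key : ∀ e ∈ T.adj.edgeSet, w ∈ e → e = s(w, a) := by
    intro e he hwe
    induction e using Sym2.inductionOn with
    | hf x y =>
      rw [SimpleGraph.mem_edgeSet] at he
      rcases Sym2.mem_iff.mp hwe with rfl | rfl
      · have : y ∈ T.adj.neighborSet w := he
        rw [ha] at this; simp at this; subst this; rfl
      · have : x ∈ T.adj.neighborSet w := he.symm
        rw [ha] at this; simp at this; subst this
        exact Sym2.eq_swap
  rw [key e₁ h₁ hw1, key e₂ h₂ hw2]

/-- The parsimony score of any two-state character on a binary phylogenetic tree
on {1,…,n} is at most ⌊n/2⌋. -/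
theorem stmt2 (n : ℕ) (hn : 2 ≤ n) (T : PhyloTree n) (f : Fin n → Bool) :
    ps f T ≤ n / 2 := by
  -- choose majority color c
  obtain ⟨c, hc⟩ : ∃ c : Bool, {i | f i ≠ c}.ncard ≤ n / 2 := by
    by_cases h : ({i | f i = false} : Set (Fin n)).ncard ≤ n / 2
    · refine ⟨true, ?_⟩
      have : {i | f i ≠ true} = {i | f i = false} := by ext i; simp
      rw [this]; exact h
    · refine ⟨false, ?_⟩
      have h1 : ({i | f i ≠ false} : Set (Fin n)) = {i | f i = false}ᶜ := by
        ext i; simp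
      have h2 := Set.ncard_add_ncard_compl ({i | f i = false} : Set (Fin n))
      rw [Nat.card_eq_fintype_card, Fintype.card_fin] at h2
      rw [h1]; omega
  set g : Fin (2 * n - 2) → Bool :=
    fun v => if h : ∃ i, T.leaf i = v then f h.choose else c with hgdef
  have hg : ∀ i, g (T.leaf i) = f i := by
    intro i
    have hex : ∃ j, T.leaf j = T.leaf i := ⟨i, rfl⟩
    simp only [hgdef, dif_pos hex]
    congr 1
    exact T.leaf_inj hex.choose_spec
  have hps : ps f T ≤ changingNumber T g := Nat.sInf_le ⟨g, hg, rfl⟩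
  refine hps.trans ?_
  refine le_trans ?_ hc
  -- injection from counted edges to leaves with minority color
  set S := {e : Sym2 (Fin (2 * n - 2)) |
    e ∈ T.adj.edgeSet ∧ ∃ u v, e = s(u, v) ∧ g u ≠ g v} with hS
  have hmem : ∀ e ∈ S, ∃ i, T.leaf i ∈ e ∧ f i ≠ c := by
    rintro e ⟨he, u, v, rfl, hne⟩
    have key : ∀ w : Fin (2 * n - 2), g w ≠ c → ∃ i, T.leaf i = w ∧ f i ≠ c := by
      intro w hw
      by_cases hex : ∃ i, T.leaf i = w
      · refine ⟨hex.choose, hex.choose_spec, ?_⟩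
        simpa only [hgdef, dif_pos hex] using hw
      · exfalso; apply hw; simp only [hgdef, dif_neg hex]
    by_cases hu : g u = c
    · have hv : g v ≠ c := fun h => hne (hu.trans h.symm)
      obtain ⟨i, hi, hic⟩ := key v hv
      exact ⟨i, by rw [hi]; exact Sym2.mem_mk_right u v, hic⟩
    · obtain ⟨i, hi, hic⟩ := key u hu
      exact ⟨i, by rw [hi]; exact Sym2.mem_mk_left u v, hic⟩
  have hn0 : 0 < n := by omega
  set φ : Sym2 (Fin (2 * n - 2)) → Fin n :=
    fun e => if h : ∃ i, T.leaf i ∈ e ∧ f i ≠ c then h.choose else ⟨0, hn0⟩ with hφ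
  refine Set.ncard_le_ncard_of_injOn φ ?_ ?_ (Set.toFinite _)
  · intro e he
    have h := hmem e he
    simp only [hφ, dif_pos h]
    exact h.choose_spec.2
  · intro e₁ h₁ e₂ h₂ heq
    have hh₁ := hmem e₁ h₁
    have hh₂ := hmem e₂ h₂
    simp only [hφ, dif_pos hh₁, dif_pos hh₂] at heq
    have m₁ : T.leaf hh₁.choose ∈ e₁ := hh₁.choose_spec.1
    have m₂ : T.leaf hh₁.choose ∈ e₂ := by rw [heq]; exact hh₂.choose_spec.1
    exact edge_unique T _ ((T.leaf_range _).mpr ⟨_, rfl⟩) h₁.1 h₂.1 m₁ m₂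
end

section
/- Let T_1 and T_2 be binary phylogenetic trees on leaf set {1,…,n} that have the same shape, i.e., there is a graph isomorphism between the underlying graphs of T_1 and T_2. Then for every k ≥ 1, the number of k-tuples (f_1,…,f_k) of characters for which T_1 is a maximum parsimony tree equals the number of k-tuples for which T_2 is a maximum parsimony tree. -/
open Classical

/-- Relabel the leaves of a phylogenetic tree by a permutation. -/
def relabelTree {n : ℕ} (T : PhyloTree n) (π : Equiv.Perm (Fin n)) : PhyloTree n where
  adj := T.adj
  connected := T.connected
  acyclic := T.acyclic
  degOneOrThree := T.degOneOrThree
  leaf := T.leaf ∘ π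
  leaf_inj := T.leaf_inj.comp π.injective
  leaf_range := fun v => (T.leaf_range v).trans
    ⟨fun ⟨i, h⟩ => ⟨π.symm i, by simp [h]⟩, fun ⟨i, h⟩ => ⟨π i, h⟩⟩

lemma ps_relabel {n : ℕ} (T : PhyloTree n) (π : Equiv.Perm (Fin n)) (f : Fin n → Bool) :
    ps f (relabelTree T π) = ps (f ∘ π.symm) T := by
  unfold ps
  congr 1
  ext m
  constructor
  · rintro ⟨g, hg, hc⟩
    exact ⟨g, fun j => by simpa [relabelTree] using hg (π.symm j), hc⟩
  · rintro ⟨g, hg, hc⟩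
    exact ⟨g, fun i => by simpa [relabelTree] using hg (π i), hc⟩

lemma neighborSet_iso {n : ℕ} {T₁ T₂ : PhyloTree n} (φ : T₁.adj ≃g T₂.adj)
    (v : Fin (2 * n - 2)) :
    T₂.adj.neighborSet (φ v) = φ '' T₁.adj.neighborSet v := by
  ext u
  simp only [SimpleGraph.mem_neighborSet, Set.mem_image]
  constructor
  · intro h
    refine ⟨φ.symm u, ?_, by simp⟩
    have : T₂.adj.Adj (φ v) (φ (φ.symm u)) := by simpa using h
    exact φ.map_adj_iff.mp this
  · rintro ⟨w, hw, rfl⟩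
    exact φ.map_adj_iff.mpr hw

lemma ncard_neighbor_iso {n : ℕ} {T₁ T₂ : PhyloTree n} (φ : T₁.adj ≃g T₂.adj)
    (v : Fin (2 * n - 2)) :
    (T₂.adj.neighborSet (φ v)).ncard = (T₁.adj.neighborSet v).ncard := by
  rw [neighborSet_iso φ v, Set.ncard_image_of_injective _ φ.injective]

lemma cn_iso {n : ℕ} {T₁ T₂ : PhyloTree n} (φ : T₁.adj ≃g T₂.adj)
    (g : Fin (2 * n - 2) → Bool) :
    changingNumber T₂ (g ∘ φ.symm) = changingNumber T₁ g := by
  unfold changingNumber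
  have himg : {e : Sym2 (Fin (2 * n - 2)) |
      e ∈ T₂.adj.edgeSet ∧ ∃ u v, e = s(u, v) ∧ (g ∘ φ.symm) u ≠ (g ∘ φ.symm) v}
      = Sym2.map φ '' {e : Sym2 (Fin (2 * n - 2)) |
      e ∈ T₁.adj.edgeSet ∧ ∃ u v, e = s(u, v) ∧ g u ≠ g v} := by
    ext e
    constructor
    · rintro ⟨he, u, v, rfl, hne⟩
      refine ⟨s(φ.symm u, φ.symm v), ⟨?_, φ.symm u, φ.symm v, rfl, hne⟩, by simp⟩
      rw [SimpleGraph.mem_edgeSet] at he ⊢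
      exact φ.symm.map_adj_iff.mpr he
    · rintro ⟨e', ⟨he, u, v, rfl, hne⟩, rfl⟩
      refine ⟨?_, φ u, φ v, by simp, by simpa using hne⟩
      rw [SimpleGraph.mem_edgeSet] at he
      simpa using φ.map_adj_iff.mpr he
  rw [himg, Set.ncard_image_of_injective _ (Sym2.map.injective φ.injective)]

lemma ps_iso {n : ℕ} {T₁ T₂ : PhyloTree n} (φ : T₁.adj ≃g T₂.adj)
    (π : Equiv.Perm (Fin n)) (hπ : ∀ i, T₂.leaf (π i) = φ (T₁.leaf i))
    (f : Fin n → Bool) : ps f T₁ = ps (f ∘ π.symm) T₂ := by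
  unfold ps
  congr 1
  ext m
  constructor
  · rintro ⟨g, hg, rfl⟩
    refine ⟨g ∘ φ.symm, fun j => ?_, cn_iso φ g⟩
    have h1 := hπ (π.symm j)
    simp only [Equiv.apply_symm_apply] at h1
    simp [Function.comp, h1, hg]
  · rintro ⟨h, hh, rfl⟩
    refine ⟨h ∘ φ, fun i => ?_, ?_⟩
    · have := hh (π i)
      simp only [hπ i] at this
      simpa [Function.comp] using this
    · have h2 := cn_iso φ (h ∘ φ)
      have h3 : (h ∘ φ) ∘ φ.symm = h := by
        funext x; simp
      rw [h3] at h2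
      exact h2.symm

lemma mp_iff {n k : ℕ} {T₁ T₂ : PhyloTree n} (φ : T₁.adj ≃g T₂.adj)
    (π : Equiv.Perm (Fin n)) (hπ : ∀ i, T₂.leaf (π i) = φ (T₁.leaf i))
    (F : Fin k → Fin n → Bool) :
    IsMPTree F T₁ ↔ IsMPTree (fun j => F j ∘ π.symm) T₂ := by
  constructor
  · intro h T'
    calc ∑ i, ps (F i ∘ π.symm) T₂ = ∑ i, ps (F i) T₁ := by
          refine Finset.sum_congr rfl fun i _ => (ps_iso φ π hπ (F i)).symm
      _ ≤ ∑ i, ps (F i) (relabelTree T' π) := h (relabelTree T' π)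
      _ = ∑ i, ps (F i ∘ π.symm) T' := by
          refine Finset.sum_congr rfl fun i _ => ps_relabel T' π (F i)
  · intro h T'
    calc ∑ i, ps (F i) T₁ = ∑ i, ps (F i ∘ π.symm) T₂ := by
          refine Finset.sum_congr rfl fun i _ => ps_iso φ π hπ (F i)
      _ ≤ ∑ i, ps (F i ∘ π.symm) (relabelTree T' π.symm) := h (relabelTree T' π.symm)
      _ = ∑ i, ps (F i) T' := by
          refine Finset.sum_congr rfl fun i _ => ?_
          rw [ps_relabel T' π.symm (F i ∘ π.symm)]
          congr 1
          funext x
          simp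

/-- If two binary phylogenetic trees on {1,…,n} have the same shape (their
underlying graphs are isomorphic), then for every k ≥ 1 the number of k-tuples of
characters for which the first is a maximum parsimony tree equals the number for
which the second is. -/
theorem stmt6 (n k : ℕ) (hn : 2 ≤ n) (hk : 1 ≤ k) (T₁ T₂ : PhyloTree n)
    (hshape : Nonempty (T₁.adj ≃g T₂.adj)) :
    Set.ncard {F : Fin k → Fin n → Bool | IsMPTree F T₁} =
      Set.ncard {F : Fin k → Fin n → Bool | IsMPTree F T₂} := by
  obtain ⟨φ⟩ := hshape
  -- the isomorphism maps leaves to leaves; get the induced permutation of labels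
  have hdeg : ∀ i : Fin n, ∃ j, T₂.leaf j = φ (T₁.leaf i) := by
    intro i
    have h1 : (T₁.adj.neighborSet (T₁.leaf i)).ncard = 1 :=
      (T₁.leaf_range _).mpr ⟨i, rfl⟩
    have h2 : (T₂.adj.neighborSet (φ (T₁.leaf i))).ncard = 1 := by
      rw [ncard_neighbor_iso φ]; exact h1
    exact (T₂.leaf_range _).mp h2
  choose πf hπf using hdeg
  have hinj : Function.Injective πf := by
    intro i i' hii
    have : φ (T₁.leaf i) = φ (T₁.leaf i') := by rw [← hπf i, ← hπf i', hii]
    exact T₁.leaf_inj (φ.injective this)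
  have hbij : Function.Bijective πf := Finite.injective_iff_bijective.mp hinj
  let π : Equiv.Perm (Fin n) := Equiv.ofBijective πf hbij
  have hπ : ∀ i, T₂.leaf (π i) = φ (T₁.leaf i) := fun i => hπf i
  -- bijection on tuples of characters
  have hset : {F : Fin k → Fin n → Bool | IsMPTree F T₂}
      = (fun F : Fin k → Fin n → Bool => fun j => F j ∘ π.symm) ''
        {F : Fin k → Fin n → Bool | IsMPTree F T₁} := by
    ext G
    simp only [Set.mem_setOf_eq, Set.mem_image]
    constructor
    · intro hG
      refine ⟨fun j => G j ∘ π, ?_, ?_⟩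
      · rw [mp_iff φ π hπ]
        have : (fun j => (G j ∘ ⇑π) ∘ ⇑π.symm) = G := by
          funext j x; simp
        rwa [this]
      · funext j x; simp
    · rintro ⟨F, hF, rfl⟩
      exact (mp_iff φ π hπ F).mp hF
  rw [hset, Set.ncard_image_of_injective]
  intro F F' hFF
  funext j x
  have := congrFun (congrFun hFF j) (π x)
  simpa using this
end

section
/- Let T and T' be binary phylogenetic trees on leaf set {1,…,n} that induce different sets of splits. Then there exists a character f : {1,…,n} → {0,1} such that either ps(f,T) = 1 and ps(f,T') > 1, or ps(f,T') = 1 and ps(f,T) > 1. (Every binary phylogenetic tree is uniquely determined by its set of characters of parsimony score 1.) -/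
open Classical

section Lemmas

variable {V : Type*} {G : SimpleGraph V}

lemma myAcyclicDel (h : G.IsAcyclic) (s : Set (Sym2 V)) : (G.deleteEdges s).IsAcyclic :=
  fun _ c hc => h (c.mapLe (SimpleGraph.deleteEdges_le s)) (hc.mapLe _)

lemma myNotReach (h : G.IsAcyclic) {u v : V} (huv : G.Adj u v) :
    ¬ (G.deleteEdges {s(u, v)}).Reachable u v := by
  have hb := (SimpleGraph.isAcyclic_iff_forall_adj_isBridge.mp h) huv
  exact SimpleGraph.isBridge_iff.mp hb

lemma myReachOr {u v x : V} (p : G.Walk x u) :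
    (G.deleteEdges {s(u, v)}).Reachable x u ∨ (G.deleteEdges {s(u, v)}).Reachable x v := by
  induction p with
  | nil => exact Or.inl (SimpleGraph.Reachable.refl _)
  | @cons a b u' h q ih =>
    by_cases he : s(a, b) = s(u', v)
    · rw [Sym2.eq_iff] at he
      rcases he with ⟨ha, hb⟩ | ⟨ha, hb⟩
      · subst ha; exact Or.inl (SimpleGraph.Reachable.refl _)
      · subst ha; exact Or.inr (SimpleGraph.Reachable.refl _)
    · have hadj : (G.deleteEdges {s(u', v)}).Adj a b := by
        rw [SimpleGraph.deleteEdges_adj]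
        exact ⟨h, by simpa using he⟩
      rcases ih with h1 | h1
      · exact Or.inl (hadj.reachable.trans h1)
      · exact Or.inr (hadj.reachable.trans h1)

lemma myFirstEdge {w z : V} (pr : G.Walk w z) (hpr : pr.IsPath) :
    ∃ y₀, ∀ x, s(w, x) ∈ pr.edges → x = y₀ := by
  cases pr with
  | nil => exact ⟨w, by simp⟩
  | @cons _ y _ h q =>
    refine ⟨y, fun x hx => ?_⟩
    rw [SimpleGraph.Walk.edges_cons, List.mem_cons] at hx
    rcases hx with hx | hx
    · exact Sym2.congr_right.mp hx
    · exfalso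
      have hw : w ∈ q.support := q.fst_mem_support_of_mem_edges hx
      have := hpr.support_nodup
      rw [SimpleGraph.Walk.support_cons] at this
      exact (List.nodup_cons.mp this).1 hw

lemma myExistsPairIff (g : V → Bool) (a b : V) :
    (∃ x y, s(a, b) = s(x, y) ∧ g x ≠ g y) ↔ g a ≠ g b := by
  constructor
  · rintro ⟨x, y, hxy, hne⟩
    rw [Sym2.eq_iff] at hxy
    rcases hxy with ⟨rfl, rfl⟩ | ⟨rfl, rfl⟩
    · exact hne
    · exact hne.symm
  · exact fun h => ⟨a, b, rfl, h⟩

end Lemmas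

lemma leaf_in_comp {n : ℕ} (T : PhyloTree n) {u v : Fin (2 * n - 2)} (he : T.adj.Adj u v) :
    ∃ i, (T.adj.deleteEdges {s(u, v)}).Reachable (T.leaf i) v := by
  set G' := T.adj.deleteEdges {s(u, v)} with hG'
  have hac' : G'.IsAcyclic := myAcyclicDel T.acyclic _
  have aux : ∀ k : ℕ, ∀ w (p : G'.Walk v w), p.IsPath → 2 * n - 2 ≤ p.length + k →
      ∃ i, G'.Reachable (T.leaf i) v := by
    intro k
    induction k with
    | zero =>
      intro w p hp hlen
      have h2 : p.length < Fintype.card (Fin (2 * n - 2)) := hp.length_lt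
      rw [Fintype.card_fin] at h2
      omega
    | succ k ih =>
      intro w p hp hlen
      rcases T.degOneOrThree w with hd | hd
      · obtain ⟨i, hi⟩ := (T.leaf_range w).mp hd
        exact ⟨i, hi ▸ (SimpleGraph.Walk.reachable p.reverse)⟩
      · have hsub : T.adj.neighborSet w \ {if w = u then v else u} ⊆ G'.neighborSet w := by
          rintro x ⟨hx, hxz⟩
          simp only [Set.mem_singleton_iff] at hxz
          have : G'.Adj w x := by
            rw [hG', SimpleGraph.deleteEdges_adj]
            refine ⟨hx, ?_⟩
            simp only [Set.mem_singleton_iff, Sym2.eq_iff]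
            rintro (⟨h1, h2⟩ | ⟨h1, h2⟩)
            · exact hxz (by rw [if_pos h1]; exact h2)
            · refine hxz ?_
              rw [if_neg (by rw [h1]; exact he.ne'), h2]
          exact this
        have hge : 2 ≤ (G'.neighborSet w).ncard := by
          set z := if w = u then v else u with hz
          have h1 : T.adj.neighborSet w ⊆ insert z (G'.neighborSet w) := fun x hx => by
            by_cases hxz : x = z
            · exact hxz ▸ Set.mem_insert _ _
            · exact Set.mem_insert_of_mem _ (hsub ⟨hx, hxz⟩)
          have h2 : (T.adj.neighborSet w).ncard ≤ (insert z (G'.neighborSet w)).ncard :=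
            Set.ncard_le_ncard h1 (Set.toFinite _)
          have h3 : (insert z (G'.neighborSet w)).ncard ≤ (G'.neighborSet w).ncard + 1 :=
            Set.ncard_insert_le _ _
          omega
        obtain ⟨y₀, hy₀⟩ := myFirstEdge p.reverse hp.reverse
        obtain ⟨x, hxS, hxy⟩ :=
          Set.exists_ne_of_one_lt_ncard (s := G'.neighborSet w) (by omega) y₀
        have hadj : G'.Adj w x := hxS
        have hxsup : x ∉ p.support := by
          intro hxsup
          have hq : (p.dropUntil x hxsup).IsPath := hp.dropUntil hxsup
          have hnc := hac' (SimpleGraph.Walk.cons hadj (p.dropUntil x hxsup))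
          rw [SimpleGraph.Walk.cons_isCycle_iff] at hnc
          have hedge : s(w, x) ∈ (p.dropUntil x hxsup).edges := by
            by_contra hne
            exact hnc ⟨hq, hne⟩
          have h4 : s(w, x) ∈ p.edges := p.edges_dropUntil_subset hxsup hedge
          have h5 : s(w, x) ∈ p.reverse.edges := by
            rwa [SimpleGraph.Walk.edges_reverse, List.mem_reverse]
          exact hxy (hy₀ x h5)
        have hxv : x ∉ p.reverse.support := by
          rwa [SimpleGraph.Walk.support_reverse, List.mem_reverse]
        have hp' : ((SimpleGraph.Walk.cons hadj.symm p.reverse).reverse).IsPath :=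
          (hp.reverse.cons hxv).reverse
        refine ih x ((SimpleGraph.Walk.cons hadj.symm p.reverse).reverse) hp' ?_
        rw [SimpleGraph.Walk.length_reverse, SimpleGraph.Walk.length_cons,
          SimpleGraph.Walk.length_reverse]
        omega
  exact aux (2 * n - 2) v SimpleGraph.Walk.nil SimpleGraph.Walk.IsPath.nil (by simp)

lemma mem_chgSet {n : ℕ} (T : PhyloTree n) (g : Fin (2 * n - 2) → Bool)
    (a b : Fin (2 * n - 2)) :
    s(a, b) ∈ {e : Sym2 (Fin (2 * n - 2)) |
      e ∈ T.adj.edgeSet ∧ ∃ u v, e = s(u, v) ∧ g u ≠ g v} ↔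
    T.adj.Adj a b ∧ g a ≠ g b := by
  rw [Set.mem_setOf_eq, SimpleGraph.mem_edgeSet, myExistsPairIff]

lemma const_of_chg0 {n : ℕ} (T : PhyloTree n) (g : Fin (2 * n - 2) → Bool)
    (h : changingNumber T g = 0) {x y : Fin (2 * n - 2)} (hr : T.adj.Reachable x y) :
    g x = g y := by
  have hS : {e : Sym2 (Fin (2 * n - 2)) |
      e ∈ T.adj.edgeSet ∧ ∃ u v, e = s(u, v) ∧ g u ≠ g v} = ∅ :=
    (Set.ncard_eq_zero (Set.toFinite _)).mp h
  have hadj : ∀ a b, T.adj.Adj a b → g a = g b := by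
    intro a b hab
    by_contra hne
    have hm : s(a, b) ∈ {e : Sym2 (Fin (2 * n - 2)) |
        e ∈ T.adj.edgeSet ∧ ∃ u v, e = s(u, v) ∧ g u ≠ g v} :=
      (mem_chgSet T g a b).mpr ⟨hab, hne⟩
    rw [hS] at hm
    exact hm
  obtain ⟨p⟩ := hr
  induction p with
  | nil => rfl
  | cons h q ih => exact (hadj _ _ h).trans ih

lemma chg_ne_zero {n : ℕ} (T : PhyloTree n) (f : Fin n → Bool)
    (hne : ∃ i j, f i ≠ f j) (g : Fin (2 * n - 2) → Bool)
    (hg : ∀ i, g (T.leaf i) = f i) : changingNumber T g ≠ 0 := by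
  intro h0
  obtain ⟨i, j, hij⟩ := hne
  exact hij ((hg i).symm.trans ((const_of_chg0 T g h0
    (T.connected.preconnected _ _)).trans (hg j)))

lemma exists_ext {n : ℕ} (T : PhyloTree n) (f : Fin n → Bool) :
    ∃ g : Fin (2 * n - 2) → Bool, ∀ i, g (T.leaf i) = f i := by
  refine ⟨fun x => if h : ∃ i, T.leaf i = x then f h.choose else false, fun i => ?_⟩
  have hi : ∃ j, T.leaf j = T.leaf i := ⟨i, rfl⟩
  show (if h : ∃ j, T.leaf j = T.leaf i then f h.choose else false) = f i
  rw [dif_pos hi]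
  exact congrArg f (T.leaf_inj hi.choose_spec)

lemma chg_ind {n : ℕ} (T : PhyloTree n) {u v : Fin (2 * n - 2)} (huv : T.adj.Adj u v) :
    changingNumber T
      (fun x => if (T.adj.deleteEdges {s(u, v)}).Reachable x v then true else false) = 1 := by
  set G' := T.adj.deleteEdges {s(u, v)} with hG'
  set g₀ : Fin (2 * n - 2) → Bool := fun x => if G'.Reachable x v then true else false with hg₀
  have hset : {e : Sym2 (Fin (2 * n - 2)) |
      e ∈ T.adj.edgeSet ∧ ∃ x y, e = s(x, y) ∧ g₀ x ≠ g₀ y} = {s(u, v)} := by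
    apply Set.eq_of_subset_of_subset
    · rintro e ⟨hedge, a, b, rfl, hne⟩
      rw [Set.mem_singleton_iff]
      by_contra hne'
      have hab : T.adj.Adj a b := (SimpleGraph.mem_edgeSet _).mp hedge
      have hadj : G'.Adj a b := by
        rw [hG', SimpleGraph.deleteEdges_adj]
        exact ⟨hab, by simpa using hne'⟩
      refine hne ?_
      by_cases hav : G'.Reachable a v
      · show (if G'.Reachable a v then true else false)
            = (if G'.Reachable b v then true else false)
        rw [if_pos hav, if_pos (hadj.symm.reachable.trans hav)]
      · show (if G'.Reachable a v then true else false)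
            = (if G'.Reachable b v then true else false)
        rw [if_neg hav, if_neg (fun hbv => hav (hadj.reachable.trans hbv))]
    · intro e he
      rw [Set.mem_singleton_iff] at he
      subst he
      refine ⟨(SimpleGraph.mem_edgeSet _).mpr huv, u, v, rfl, ?_⟩
      have h1 : g₀ u = false := by
        show (if G'.Reachable u v then true else false) = false
        rw [if_neg (myNotReach T.acyclic huv)]
      have h2 : g₀ v = true := by
        show (if G'.Reachable v v then true else false) = true
        rw [if_pos (SimpleGraph.Reachable.refl v)]
      rw [h1, h2]
      simp
  unfold changingNumber
  rw [hset, Set.ncard_singleton]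

lemma split_of_chg1 {n : ℕ} (T : PhyloTree n) (f : Fin n → Bool)
    (g : Fin (2 * n - 2) → Bool) (hg : ∀ i, g (T.leaf i) = f i)
    (h1 : changingNumber T g = 1) :
    ({ {i | f i = false}, {i | f i = true} } : Set (Set (Fin n))) ∈ splits T := by
  obtain ⟨e₀, he₀⟩ := Set.ncard_eq_one.mp h1
  have he₀m : e₀ ∈ {e : Sym2 (Fin (2 * n - 2)) |
      e ∈ T.adj.edgeSet ∧ ∃ u v, e = s(u, v) ∧ g u ≠ g v} := by
    rw [he₀]; rfl
  obtain ⟨hedge, a, b, heq, hne⟩ := he₀m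
  subst heq
  have hab : T.adj.Adj a b := (SimpleGraph.mem_edgeSet _).mp hedge
  -- helper, applied to (a,b) or (b,a)
  have helper : ∀ (c d : Fin (2 * n - 2)), T.adj.Adj c d →
      ({e : Sym2 (Fin (2 * n - 2)) |
        e ∈ T.adj.edgeSet ∧ ∃ u v, e = s(u, v) ∧ g u ≠ g v} = {s(c, d)}) →
      g c = false → g d = true →
      ({ {i | f i = false}, {i | f i = true} } : Set (Set (Fin n))) ∈ splits T := by
    intro c d hcd hS hgc hgd
    set G' := T.adj.deleteEdges {s(c, d)} with hG'
    have hconst : ∀ x y, G'.Reachable x y → g x = g y := by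
      intro x y hr
      obtain ⟨p⟩ := hr
      induction p with
      | nil => rfl
      | @cons s t _ hst q ih =>
        have h2 : g s = g t := by
          by_contra hne2
          have hadjT : T.adj.Adj s t := (SimpleGraph.deleteEdges_adj.mp hst).1
          have hmem : s(s, t) ∈ {e : Sym2 (Fin (2 * n - 2)) |
              e ∈ T.adj.edgeSet ∧ ∃ u v, e = s(u, v) ∧ g u ≠ g v} :=
            (mem_chgSet T g s t).mpr ⟨hadjT, hne2⟩
          rw [hS, Set.mem_singleton_iff] at hmem
          exact (SimpleGraph.deleteEdges_adj.mp hst).2 (by rw [hmem]; rfl)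
        exact h2.trans ih
    have hor : ∀ x, G'.Reachable x c ∨ G'.Reachable x d := fun x => by
      obtain ⟨p⟩ := T.connected.preconnected x c
      exact myReachOr p
    have hnr : ¬ G'.Reachable c d := myNotReach T.acyclic hcd
    have hfalse : {i | f i = false} = {i | G'.Reachable (T.leaf i) c} := by
      ext i
      simp only [Set.mem_setOf_eq]
      constructor
      · intro hf
        rcases hor (T.leaf i) with h | h
        · exact h
        · exfalso
          have : f i = true := (hg i).symm.trans ((hconst _ _ h).trans hgd)
          rw [hf] at this
          exact Bool.false_ne_true this
      · intro h
        exact (hg i).symm.trans ((hconst _ _ h).trans hgc)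
    have htrue : {i | f i = true} = {i | G'.Reachable (T.leaf i) d} := by
      ext i
      simp only [Set.mem_setOf_eq]
      constructor
      · intro hf
        rcases hor (T.leaf i) with h | h
        · exfalso
          have : f i = false := (hg i).symm.trans ((hconst _ _ h).trans hgc)
          rw [hf] at this
          exact Bool.false_ne_true this.symm
        · exact h
      · intro h
        exact (hg i).symm.trans ((hconst _ _ h).trans hgd)
    exact ⟨c, d, (SimpleGraph.mem_edgeSet _).mpr hcd, by rw [hfalse, htrue]⟩
  cases hga : g a with
  | false =>
    have hgb : g b = true := by
      cases hgb : g b with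
      | false => exact absurd (hga.trans hgb.symm) hne
      | true => rfl
    exact helper a b hab he₀ hga hgb
  | true =>
    have hgb : g b = false := by
      cases hgb : g b with
      | false => rfl
      | true => exact absurd (hga.trans hgb.symm) hne
    refine helper b a hab.symm ?_ hgb hga
    rw [he₀, Sym2.eq_swap]

lemma key_lemma {n : ℕ} (T T' : PhyloTree n) (σ : Set (Set (Fin n)))
    (hσT : σ ∈ splits T) (hσT' : σ ∉ splits T') :
    ∃ f : Fin n → Bool, ps f T = 1 ∧ 1 < ps f T' := by
  obtain ⟨u, v, heuv, hσ⟩ := hσT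
  have huv : T.adj.Adj u v := (SimpleGraph.mem_edgeSet _).mp heuv
  set G' := T.adj.deleteEdges {s(u, v)} with hG'
  set f : Fin n → Bool := fun i => if G'.Reachable (T.leaf i) v then true else false with hf
  have hnrv : ¬ G'.Reachable u v := myNotReach T.acyclic huv
  have htrue : {i | f i = true} = {i | G'.Reachable (T.leaf i) v} := by
    ext i
    simp only [Set.mem_setOf_eq, hf]
    by_cases h : G'.Reachable (T.leaf i) v
    · simp [h]
    · simp [h]
  have hfalse : {i | f i = false} = {i | G'.Reachable (T.leaf i) u} := by
    ext i
    simp only [Set.mem_setOf_eq, hf]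
    constructor
    · intro hfi
      have hnr : ¬ G'.Reachable (T.leaf i) v := by
        intro h
        rw [if_pos h] at hfi
        exact Bool.false_ne_true hfi.symm
      rcases hor : (myReachOr (G := T.adj) (v := v)
        (Classical.choice (T.connected.preconnected (T.leaf i) u))) with h | h
      · exact h
      · exact absurd h hnr
    · intro h
      rw [if_neg]
      intro hv
      exact hnrv (h.symm.trans hv)
  have hσeq : σ = ({ {i | f i = false}, {i | f i = true} } : Set (Set (Fin n))) := by
    rw [hfalse, htrue]; exact hσ
  -- f non-constant
  obtain ⟨i₀, hi₀⟩ := leaf_in_comp T huv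
  have hfi₀ : f i₀ = true := by rw [hf]; simp only; rw [if_pos hi₀]
  obtain ⟨j₀, hj₀⟩ := leaf_in_comp T huv.symm
  have hj₀' : G'.Reachable (T.leaf j₀) u := by
    rw [hG']
    rw [Sym2.eq_swap (a := u) (b := v)]
    exact hj₀
  have hfj₀ : f j₀ = false := by
    have : j₀ ∈ {i | f i = false} := by rw [hfalse]; exact hj₀'
    exact this
  have hfnc : ∃ i j, f i ≠ f j := ⟨j₀, i₀, by rw [hfi₀, hfj₀]; simp⟩
  refine ⟨f, ?_, ?_⟩
  · -- ps f T = 1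
    have h1mem : 1 ∈ {m | ∃ g : Fin (2 * n - 2) → Bool,
        (∀ i, g (T.leaf i) = f i) ∧ changingNumber T g = m} := by
      refine ⟨fun x => if G'.Reachable x v then true else false, fun i => rfl, ?_⟩
      exact chg_ind T huv
    have hle : ps f T ≤ 1 := Nat.sInf_le h1mem
    have hmem : ps f T ∈ {m | ∃ g : Fin (2 * n - 2) → Bool,
        (∀ i, g (T.leaf i) = f i) ∧ changingNumber T g = m} :=
      Nat.sInf_mem ⟨1, h1mem⟩
    obtain ⟨g, hgext, hgc⟩ := hmem
    have hne0 : ps f T ≠ 0 := by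
      rw [← hgc]
      exact chg_ne_zero T f hfnc g hgext
    omega
  · -- 1 < ps f T'
    obtain ⟨g1, hg1⟩ := exists_ext T' f
    have hmem : ps f T' ∈ {m | ∃ g : Fin (2 * n - 2) → Bool,
        (∀ i, g (T'.leaf i) = f i) ∧ changingNumber T' g = m} :=
      Nat.sInf_mem ⟨changingNumber T' g1, g1, hg1, rfl⟩
    obtain ⟨g, hgext, hgc⟩ := hmem
    have hne0 : ps f T' ≠ 0 := by
      rw [← hgc]
      exact chg_ne_zero T' f hfnc g hgext
    have hne1 : ps f T' ≠ 1 := by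
      intro h1
      rw [h1] at hgc
      have := split_of_chg1 T' f g hgext hgc
      rw [← hσeq] at this
      exact hσT' this
    omega


/-- If two binary phylogenetic trees on {1,…,n} induce different sets of splits,
then some character has parsimony score 1 on one of them and score greater than 1
on the other. -/
theorem stmt9 (n : ℕ) (hn : 2 ≤ n) (T T' : PhyloTree n)
    (hdiff : splits T ≠ splits T') :
    ∃ f : Fin n → Bool,
      (ps f T = 1 ∧ 1 < ps f T') ∨ (ps f T' = 1 ∧ 1 < ps f T) := by
  have hcases : ¬(splits T ⊆ splits T') ∨ ¬(splits T' ⊆ splits T) := by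
    by_contra hc
    push_neg at hc
    exact hdiff (Set.Subset.antisymm hc.1 hc.2)
  rcases hcases with h | h
  · obtain ⟨σ, hσ1, hσ2⟩ := Set.not_subset.mp h
    obtain ⟨f, hf1, hf2⟩ := key_lemma T T' σ hσ1 hσ2
    exact ⟨f, Or.inl ⟨hf1, hf2⟩⟩
  · obtain ⟨σ, hσ1, hσ2⟩ := Set.not_subset.mp h
    obtain ⟨f, hf1, hf2⟩ := key_lemma T' T σ hσ1 hσ2
    exact ⟨f, Or.inr ⟨hf1, hf2⟩⟩
end

section
/- Let f_1 and f_2 be non-constant characters on {1,…,n}. Then f_1 and f_2 are compatible with each other (i.e., at least one of the four sets f_1^{-1}(0) ∩ f_2^{-1}(0), f_1^{-1}(0) ∩ f_2^{-1}(1), f_1^{-1}(1) ∩ f_2^{-1}(0), f_1^{-1}(1) ∩ f_2^{-1}(1) is empty) if and only if there exists a binary phylogenetic tree T on leaf set {1,…,n} with ps(f_1,T) = 1 and ps(f_2,T) = 1. -/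
open Classical

section Aux

variable {V : Type*}

/-- If a function is constant across every edge, it is constant on reachable pairs. -/
lemma reach_eq_aux {α : Type*} (G : SimpleGraph V) (F : V → α)
    (h : ∀ x y : V, G.Adj x y → F x = F y) {x y : V} (hr : G.Reachable x y) :
    F x = F y := by
  obtain ⟨w⟩ := hr
  induction w with
  | nil => rfl
  | cons h' p ih => exact (h _ _ h').trans ih

/-- A walk in `G` either avoids the deleted edge or crosses it. -/
lemma walk_cross (G : SimpleGraph V) (u₂ v₂ : V) {x y : V} (w : G.Walk x y) :
    (G.deleteEdges {s(u₂,v₂)}).Reachable x y ∨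
    ((G.deleteEdges {s(u₂,v₂)}).Reachable x u₂ ∧ (G.deleteEdges {s(u₂,v₂)}).Reachable v₂ y) ∨
    ((G.deleteEdges {s(u₂,v₂)}).Reachable x v₂ ∧ (G.deleteEdges {s(u₂,v₂)}).Reachable u₂ y) := by
  induction w with
  | nil => exact Or.inl (SimpleGraph.Reachable.refl _)
  | @cons a b c h p ih =>
    by_cases he : s(a, b) = s(u₂, v₂)
    · rw [Sym2.eq_iff] at he
      rcases he with ⟨rfl, rfl⟩ | ⟨rfl, rfl⟩
      · rcases ih with h' | ⟨h1, h2⟩ | ⟨h1, h2⟩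
        · exact Or.inr (Or.inl ⟨SimpleGraph.Reachable.refl _, h'⟩)
        · exact Or.inr (Or.inl ⟨SimpleGraph.Reachable.refl _, h2⟩)
        · exact Or.inl h2
      · rcases ih with h' | ⟨h1, h2⟩ | ⟨h1, h2⟩
        · exact Or.inr (Or.inr ⟨SimpleGraph.Reachable.refl _, h'⟩)
        · exact Or.inl h2
        · exact Or.inr (Or.inr ⟨SimpleGraph.Reachable.refl _, h2⟩)
    · have hab : (G.deleteEdges {s(u₂,v₂)}).Adj a b := by
        rw [SimpleGraph.deleteEdges_adj]
        exact ⟨h, by simpa using he⟩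
      rcases ih with h' | ⟨h1, h2⟩ | ⟨h1, h2⟩
      · exact Or.inl (hab.reachable.trans h')
      · exact Or.inr (Or.inl ⟨hab.reachable.trans h1, h2⟩)
      · exact Or.inr (Or.inr ⟨hab.reachable.trans h1, h2⟩)

/-- In a connected graph, after deleting one edge every vertex reaches one endpoint. -/
lemma reach_endpoint (G : SimpleGraph V) (hc : G.Preconnected) (u₂ v₂ : V) (x : V) :
    (G.deleteEdges {s(u₂,v₂)}).Reachable x u₂ ∨ (G.deleteEdges {s(u₂,v₂)}).Reachable x v₂ := by
  obtain ⟨w⟩ := hc x u₂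
  rcases walk_cross G u₂ v₂ w with h | ⟨h1, _⟩ | ⟨h1, _⟩
  · exact Or.inl h
  · exact Or.inl h1
  · exact Or.inr h1

/-- If `g` changes only across the edge `s(u₁,v₁)`, and neither `u₁` nor `v₁`
reaches `t` in `G'`, then `g` is constant on the class of `t`. -/
lemma reach_const_side (G' : SimpleGraph V) (Gbig : SimpleGraph V) (hle : ∀ a b, G'.Adj a b → Gbig.Adj a b)
    (g : V → Bool) (u₁ v₁ t : V)
    (hchg : ∀ x y : V, Gbig.Adj x y → s(x,y) ≠ s(u₁,v₁) → g x = g y)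
    (hu : ¬ G'.Reachable u₁ t) (hv : ¬ G'.Reachable v₁ t) :
    ∀ x : V, G'.Reachable x t → g x = g t := by
  have key : ∀ {x y : V} (w : G'.Walk x y), G'.Reachable y t → g x = g y := by
    intro x y w
    induction w with
    | nil => intro _; rfl
    | @cons a b c h p ih =>
      intro hyt
      have hb : G'.Reachable b t := SimpleGraph.Reachable.trans ⟨p⟩ hyt
      have hx : s(a,b) ≠ s(u₁,v₁) := by
        intro he
        rw [Sym2.eq_iff] at he
        rcases he with ⟨rfl, rfl⟩ | ⟨rfl, rfl⟩
        · exact hu (h.reachable.trans hb)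
        · exact hv (h.reachable.trans hb)
      exact (hchg _ _ (hle _ _ h) hx).trans (ih hyt)
  intro x hr
  obtain ⟨w⟩ := hr
  exact key w (SimpleGraph.Reachable.refl _)

end Aux

section PsLemmas

variable {n : ℕ}

lemma ps_set_nonempty (T : PhyloTree n) (f : Fin n → Bool) :
    {m | ∃ g : Fin (2 * n - 2) → Bool,
      (∀ i, g (T.leaf i) = f i) ∧ changingNumber T g = m}.Nonempty := by
  classical
  refine ⟨_, fun v => if h : ∃ i, T.leaf i = v then f h.choose else false, fun i => ?_, rfl⟩
  have h : ∃ j, T.leaf j = T.leaf i := ⟨i, rfl⟩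
  simp only [dif_pos h]
  congr 1
  exact T.leaf_inj h.choose_spec

lemma changing_ne_zero (T : PhyloTree n) (f : Fin n → Bool) (hf : ∃ i j, f i ≠ f j)
    (g : Fin (2 * n - 2) → Bool) (hg : ∀ i, g (T.leaf i) = f i) :
    changingNumber T g ≠ 0 := by
  intro h0
  have hfin : {e : Sym2 (Fin (2 * n - 2)) |
      e ∈ T.adj.edgeSet ∧ ∃ u v, e = s(u, v) ∧ g u ≠ g v}.Finite := Set.toFinite _
  have hempty := (Set.ncard_eq_zero hfin).mp h0
  have hconst : ∀ x y : Fin (2 * n - 2), T.adj.Adj x y → g x = g y := by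
    intro x y hxy
    by_contra hne
    have : s(x, y) ∈ ({} : Set (Sym2 (Fin (2 * n - 2)))) := by
      rw [← hempty]
      exact ⟨hxy, x, y, rfl, hne⟩
    simp at this
  obtain ⟨i, j, hij⟩ := hf
  apply hij
  rw [← hg i, ← hg j]
  exact reach_eq_aux T.adj g hconst (T.connected.preconnected _ _)

lemma ps_eq_one (T : PhyloTree n) (f : Fin n → Bool) (hf : ∃ i j, f i ≠ f j)
    (g : Fin (2 * n - 2) → Bool) (hg : ∀ i, g (T.leaf i) = f i)
    (h1 : changingNumber T g = 1) : ps f T = 1 := by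
  have hmem : (1 : ℕ) ∈ {m | ∃ g : Fin (2 * n - 2) → Bool,
      (∀ i, g (T.leaf i) = f i) ∧ changingNumber T g = m} := ⟨g, hg, h1⟩
  have hinf := Nat.sInf_mem (ps_set_nonempty T f)
  obtain ⟨g', hg', hcn⟩ := hinf
  refine le_antisymm (Nat.sInf_le hmem) ?_
  rw [Nat.one_le_iff_ne_zero]
  intro h0
  have hz : changingNumber T g' = 0 := by rw [hcn]; exact h0
  exact changing_ne_zero T f hf g' hg' hz

lemma exists_unique_edge (T : PhyloTree n) (f : Fin n → Bool) (hps : ps f T = 1) :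
    ∃ (g : Fin (2 * n - 2) → Bool) (u v : Fin (2 * n - 2)),
      (∀ i, g (T.leaf i) = f i) ∧ T.adj.Adj u v ∧ g u ≠ g v ∧
      ∀ x y : Fin (2 * n - 2), T.adj.Adj x y → g x ≠ g y → s(x, y) = s(u, v) := by
  have hinf := Nat.sInf_mem (ps_set_nonempty T f)
  rw [show sInf _ = ps f T from rfl, hps] at hinf
  obtain ⟨g, hg, hcn⟩ := hinf
  obtain ⟨e₀, he₀⟩ := Set.ncard_eq_one.mp hcn
  have he₀mem : e₀ ∈ {e : Sym2 (Fin (2 * n - 2)) |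
      e ∈ T.adj.edgeSet ∧ ∃ u v, e = s(u, v) ∧ g u ≠ g v} := by
    rw [he₀]; rfl
  obtain ⟨hedge, u, v, rfl, huv⟩ := he₀mem
  refine ⟨g, u, v, hg, hedge, huv, fun x y hxy hgxy => ?_⟩
  have : s(x, y) ∈ {e : Sym2 (Fin (2 * n - 2)) |
      e ∈ T.adj.edgeSet ∧ ∃ u v, e = s(u, v) ∧ g u ≠ g v} := ⟨hxy, x, y, rfl, hgxy⟩
  rw [he₀] at this
  exact this

lemma compat_of (f₁ f₂ : Fin n → Bool) (b c : Bool) (h : ∀ i, f₂ i = b → f₁ i = c) :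
    CharCompatible f₁ f₂ := by
  have key : {i | f₁ i = !c} ∩ {i | f₂ i = b} = ∅ := by
    ext i
    simp only [Set.mem_inter_iff, Set.mem_setOf_eq, Set.mem_empty_iff_false, iff_false, not_and]
    intro h1 h2
    rw [h i h2] at h1
    cases c <;> simp at h1
  unfold CharCompatible
  cases b <;> cases c <;> simp only [Bool.not_true, Bool.not_false] at key <;> tauto

lemma backward_dir (f₁ f₂ : Fin n → Bool)
    (T : PhyloTree n) (hp1 : ps f₁ T = 1) (hp2 : ps f₂ T = 1) :
    CharCompatible f₁ f₂ := by
  obtain ⟨g₁, u₁, v₁, hg₁, hadj₁, hne₁, huniq₁⟩ := exists_unique_edge T f₁ hp1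
  obtain ⟨g₂, u₂, v₂, hg₂, hadj₂, hne₂, huniq₂⟩ := exists_unique_edge T f₂ hp2
  set G' := T.adj.deleteEdges {s(u₂, v₂)} with hG'
  have hle : ∀ a b, G'.Adj a b → T.adj.Adj a b := fun a b h => (SimpleGraph.deleteEdges_adj.mp h).1
  have hchg₁ : ∀ x y : Fin (2 * n - 2), T.adj.Adj x y → s(x,y) ≠ s(u₁,v₁) → g₁ x = g₁ y := by
    intro x y hxy hne
    by_contra hc
    exact hne (huniq₁ x y hxy hc)
  have hchg₂ : ∀ x y : Fin (2 * n - 2), T.adj.Adj x y → s(x,y) ≠ s(u₂,v₂) → g₂ x = g₂ y := by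
    intro x y hxy hne
    by_contra hc
    exact hne (huniq₂ x y hxy hc)
  -- g₂ is constant on G'-components
  have hconst₂ : ∀ x y : Fin (2 * n - 2), G'.Reachable x y → g₂ x = g₂ y := by
    intro x y hr
    refine reach_eq_aux G' g₂ ?_ hr
    intro a b hab
    rw [hG', SimpleGraph.deleteEdges_adj] at hab
    exact hchg₂ a b hab.1 (by simpa using hab.2)
  -- the bridge property
  have hbridge : ¬ G'.Reachable u₂ v₂ := by
    have := (SimpleGraph.isAcyclic_iff_forall_adj_isBridge.mp T.acyclic) hadj₂
    exact SimpleGraph.isBridge_iff.mp this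
  have hreach : ∀ x, G'.Reachable x u₂ ∨ G'.Reachable x v₂ :=
    reach_endpoint T.adj T.connected.preconnected u₂ v₂
  -- find t ∈ {u₂, v₂} with g₁ constant on the class of t
  have main : ∀ t t' : Fin (2 * n - 2), (∀ x, G'.Reachable x t ∨ G'.Reachable x t') →
      g₂ t ≠ g₂ t' → (∀ x, G'.Reachable x t → g₁ x = g₁ t) → CharCompatible f₁ f₂ := by
    intro t t' hall hgt hconst
    refine compat_of f₁ f₂ (g₂ t) (g₁ t) (fun i hi => ?_)
    have hrt : G'.Reachable (T.leaf i) t := by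
      rcases hall (T.leaf i) with h | h
      · exact h
      · exfalso
        apply hgt
        rw [← hconst₂ _ _ h, hg₂ i, hi]
    rw [← hg₁ i]
    exact hconst _ hrt
  by_cases hee : s(u₁, v₁) = s(u₂, v₂)
  · -- same edge: g₁ constant on all G'-components
    have hconst₁ : ∀ x y : Fin (2 * n - 2), G'.Reachable x y → g₁ x = g₁ y := by
      intro x y hr
      refine reach_eq_aux G' g₁ ?_ hr
      intro a b hab
      rw [hG', SimpleGraph.deleteEdges_adj] at hab
      refine hchg₁ a b hab.1 ?_
      rw [hee]
      simpa using hab.2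
    exact main v₂ u₂ (fun x => (hreach x).symm) (Ne.symm hne₂) (fun x hx => hconst₁ x v₂ hx)
  · have hadj' : G'.Adj u₁ v₁ := by
      rw [hG', SimpleGraph.deleteEdges_adj]
      exact ⟨hadj₁, by simpa using hee⟩
    rcases hreach u₁ with hu | hu
    · -- u₁, v₁ on the u₂ side; t := v₂
      have hv : G'.Reachable v₁ u₂ := hadj'.symm.reachable.trans hu
      have hu' : ¬ G'.Reachable u₁ v₂ := fun h => hbridge ((hu.symm.trans h))
      have hv' : ¬ G'.Reachable v₁ v₂ := fun h => hbridge ((hv.symm.trans h))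
      exact main v₂ u₂ (fun x => (hreach x).symm) (Ne.symm hne₂)
        (reach_const_side G' T.adj hle g₁ u₁ v₁ v₂ hchg₁ hu' hv')
    · -- u₁, v₁ on the v₂ side; t := u₂
      have hv : G'.Reachable v₁ v₂ := hadj'.symm.reachable.trans hu
      have hu' : ¬ G'.Reachable u₁ u₂ := fun h => hbridge (h.symm.trans hu)
      have hv' : ¬ G'.Reachable v₁ u₂ := fun h => hbridge (h.symm.trans hv)
      exact main u₂ v₂ hreach hne₂
        (reach_const_side G' T.adj hle g₁ u₁ v₁ u₂ hchg₁ hu' hv')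

end PsLemmas


section Caterpillar

/-- Parent function for the caterpillar tree on `2*n-2` vertices. -/
def np (n a : ℕ) : ℕ := min (a + 2 - a % 2) (2 * n - 3)

/-- The caterpillar graph. -/
def catG (n : ℕ) : SimpleGraph (Fin (2 * n - 2)) where
  Adj x y := (x : ℕ) ≠ (y : ℕ) ∧ (np n x = y ∨ np n y = x)
  symm := by
    constructor
    intro x y ⟨h1, h2⟩
    exact ⟨h1.symm, h2.symm⟩
  loopless := ⟨fun x ⟨h, _⟩ => h rfl⟩

lemma catG_adj {n : ℕ} {x y : Fin (2 * n - 2)} :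
    (catG n).Adj x y ↔ ((x : ℕ) ≠ (y : ℕ) ∧ (np n x = y ∨ np n y = x)) := Iff.rfl

lemma catG_connected {n : ℕ} (hn : 2 ≤ n) : (catG n).Connected := by
  have hpos : 0 < 2 * n - 2 := by omega
  rw [SimpleGraph.connected_iff]
  have key : ∀ (k : ℕ) (v : Fin (2 * n - 2)), 2 * n - 3 - (v : ℕ) ≤ k →
      (catG n).Reachable v ⟨2 * n - 3, by omega⟩ := by
    intro k
    induction k with
    | zero =>
      intro v hv
      have hlt := v.isLt
      have : (v : ℕ) = 2 * n - 3 := by omega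
      exact SimpleGraph.Reachable.refl _ |>.mono le_rfl |>.mono le_rfl |>.symm.symm |>.mono le_rfl
        |>.trans (by rw [show v = (⟨2 * n - 3, by omega⟩ : Fin (2 * n - 2)) from Fin.ext this])
    | succ k ih =>
      intro v hv
      by_cases hv3 : (v : ℕ) = 2 * n - 3
      · rw [show v = (⟨2 * n - 3, by omega⟩ : Fin (2 * n - 2)) from Fin.ext hv3]
      · have hlt := v.isLt
        have h1 : (v : ℕ) < 2 * n - 3 := by omega
        have hb : np n (v : ℕ) < 2 * n - 2 := by unfold np; omega
        have hgt : (v : ℕ) < np n (v : ℕ) := by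
          unfold np
          have := Nat.mod_lt (v : ℕ) (show 0 < 2 by omega)
          have h2 : (v : ℕ) % 2 ≤ 1 := by omega
          omega
        have hadj : (catG n).Adj v ⟨np n (v : ℕ), hb⟩ := by
          rw [catG_adj]
          exact ⟨by simp; omega, Or.inl rfl⟩
        refine hadj.reachable.trans (ih _ ?_)
        simp only
        omega
  refine ⟨fun x y => ?_, ⟨⟨0, hpos⟩⟩⟩
  exact (key _ x le_rfl).trans (key _ y le_rfl).symm

lemma catG_acyclic {n : ℕ} (hn : 2 ≤ n) : (catG n).IsAcyclic := by
  rw [SimpleGraph.isAcyclic_iff_forall_adj_isBridge]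
  intro x y hxy
  rw [SimpleGraph.isBridge_iff]
  rw [catG_adj] at hxy
  obtain ⟨hne, hp⟩ := hxy
  -- `c` : child endpoint.  In either case we build a separating invariant.
  -- invariant depends on the child c of the edge: P v := v ≤ c ∧ (c even ∨ v = c)
  have main : ∀ c d : Fin (2 * n - 2), (c : ℕ) ≠ (d : ℕ) → np n (c : ℕ) = (d : ℕ) →
      ¬ ((catG n).deleteEdges {s(c, d)}).Reachable c d := by
    intro c d hcd hnp hreach
    set F : Fin (2 * n - 2) → Bool :=
      fun v => decide ((v : ℕ) ≤ (c : ℕ) ∧ ((c : ℕ) % 2 = 0 ∨ (v : ℕ) = (c : ℕ))) with hF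
    have heq : F c = F d := by
      refine reach_eq_aux _ F ?_ hreach
      intro a b hab
      rw [SimpleGraph.deleteEdges_adj] at hab
      obtain ⟨hab1, hab2⟩ := hab
      rw [catG_adj] at hab1
      obtain ⟨hab3, hab4⟩ := hab1
      have hsab : ¬ (((a : ℕ) = (c : ℕ) ∧ (b : ℕ) = (d : ℕ)) ∨
          ((a : ℕ) = (d : ℕ) ∧ (b : ℕ) = (c : ℕ))) := by
        intro hcase
        apply hab2
        simp only [Set.mem_singleton_iff, Sym2.eq_iff]
        rcases hcase with ⟨h1, h2⟩ | ⟨h1, h2⟩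
        · exact Or.inl ⟨Fin.ext h1, Fin.ext h2⟩
        · exact Or.inr ⟨Fin.ext h1, Fin.ext h2⟩
      rw [hF]
      simp only [decide_eq_decide]
      have ha := a.isLt
      have hb := b.isLt
      have hc := c.isLt
      have hd := d.isLt
      unfold np at hab4 hnp
      omega
    rw [hF] at heq
    simp only [decide_eq_decide, le_refl, true_and, or_true, eq_self_iff_true, true_iff] at heq
    have hc := c.isLt
    have hd := d.isLt
    unfold np at hnp
    omega
  rcases hp with h | h
  · exact main x y hne h
  · intro hr
    have := main y x (Ne.symm hne) h
    rw [Sym2.eq_swap] at this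
    exact this hr.symm

/-- Neighbors of an internal vertex. -/
lemma catG_nbhd_internal {n : ℕ} (hn : 2 ≤ n) (v : Fin (2 * n - 2))
    (hv : (v : ℕ) % 2 = 0) (h0 : 0 < (v : ℕ)) :
    (catG n).neighborSet v =
      {⟨(v : ℕ) - 2, by have := v.isLt; omega⟩, ⟨(v : ℕ) - 1, by have := v.isLt; omega⟩,
       ⟨np n (v : ℕ), by have := v.isLt; unfold np; omega⟩} := by
  ext x
  simp only [SimpleGraph.mem_neighborSet, catG_adj, Set.mem_insert_iff, Set.mem_singleton_iff,
    Fin.ext_iff]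
  have hx := x.isLt
  have hvl := v.isLt
  unfold np
  omega

/-- Neighbors of a leaf vertex. -/
lemma catG_nbhd_leaf {n : ℕ} (hn : 2 ≤ n) (v : Fin (2 * n - 2))
    (hv : (v : ℕ) % 2 = 1 ∨ (v : ℕ) = 0) :
    (catG n).neighborSet v =
      {⟨if (v : ℕ) = 2 * n - 3 then 2 * n - 4 else np n (v : ℕ),
        by have := v.isLt; unfold np; split <;> omega⟩} := by
  ext x
  simp only [SimpleGraph.mem_neighborSet, catG_adj, Set.mem_singleton_iff, Fin.ext_iff]
  have hx := x.isLt
  have hvl := v.isLt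
  split
  · unfold np
    omega
  · unfold np
    omega

lemma catG_deg {n : ℕ} (hn : 2 ≤ n) (v : Fin (2 * n - 2)) :
    ((catG n).neighborSet v).ncard = if (v : ℕ) % 2 = 0 ∧ 0 < (v : ℕ) then 3 else 1 := by
  have hvl := v.isLt
  by_cases h : (v : ℕ) % 2 = 0 ∧ 0 < (v : ℕ)
  · rw [catG_nbhd_internal hn v h.1 h.2, if_pos h]
    rw [Set.ncard_insert_of_notMem, Set.ncard_insert_of_notMem, Set.ncard_singleton]
    · simp only [Set.mem_singleton_iff, Fin.ext_iff]
      unfold np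
      omega
    · simp only [Set.mem_insert_iff, Set.mem_singleton_iff, Fin.ext_iff]
      unfold np
      push_neg
      constructor <;> omega
  · rw [catG_nbhd_leaf hn v (by omega), if_neg h, Set.ncard_singleton]

/-- The leaf labeling of the caterpillar. -/
def catLeaf (n : ℕ) (hn : 2 ≤ n) (i : Fin n) : Fin (2 * n - 2) :=
  ⟨if (i : ℕ) = 0 then 0 else 2 * (i : ℕ) - 1, by have := i.isLt; split <;> omega⟩

lemma catLeaf_inj {n : ℕ} (hn : 2 ≤ n) : Function.Injective (catLeaf n hn) := by
  intro i j h
  rw [Fin.ext_iff] at h ⊢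
  simp only [catLeaf] at h
  split at h <;> split at h <;> omega

lemma catLeaf_range {n : ℕ} (hn : 2 ≤ n) (v : Fin (2 * n - 2)) :
    ((catG n).neighborSet v).ncard = 1 ↔ ∃ i, catLeaf n hn i = v := by
  rw [catG_deg hn v]
  have hvl := v.isLt
  constructor
  · intro h
    have hv : ¬ ((v : ℕ) % 2 = 0 ∧ 0 < (v : ℕ)) := by
      intro hc
      rw [if_pos hc] at h
      omega
    by_cases h0 : (v : ℕ) = 0
    · exact ⟨⟨0, by omega⟩, by rw [Fin.ext_iff]; simp [catLeaf]; omega⟩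
    · refine ⟨⟨((v : ℕ) + 1) / 2, by omega⟩, ?_⟩
      rw [Fin.ext_iff]
      simp only [catLeaf]
      split <;> omega
  · rintro ⟨i, rfl⟩
    have hi := i.isLt
    rw [if_neg]
    simp only [catLeaf]
    split <;> omega

/-- The caterpillar phylogenetic tree with leaves permuted by `σ`. -/
def catTree (n : ℕ) (hn : 2 ≤ n) (σ : Equiv.Perm (Fin n)) : PhyloTree n where
  adj := catG n
  connected := catG_connected hn
  acyclic := catG_acyclic hn
  degOneOrThree := by
    intro v
    rw [catG_deg hn v]
    split
    · exact Or.inr rfl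
    · exact Or.inl rfl
  leaf := fun i => catLeaf n hn (σ.symm i)
  leaf_inj := fun i j h => by
    have := catLeaf_inj hn h
    exact σ.symm.injective this
  leaf_range := by
    intro v
    rw [catLeaf_range hn v]
    constructor
    · rintro ⟨i, hi⟩
      exact ⟨σ i, by simpa using hi⟩
    · rintro ⟨i, hi⟩
      exact ⟨σ.symm i, hi⟩

/-- The parsimony score of a "threshold" character on the caterpillar is 1. -/
lemma cat_ps_one {n : ℕ} (hn : 2 ≤ n) (σ : Equiv.Perm (Fin n)) (f : Fin n → Bool)
    (a : ℕ) (b : Bool) (ha : 1 ≤ a) (ha' : a ≤ n - 1)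
    (hf : ∀ k : Fin n, f (σ k) = if (k : ℕ) < a then b else !b) :
    ps f (catTree n hn σ) = 1 := by
  set T := catTree n hn σ with hT
  set g : Fin (2 * n - 2) → Bool := fun v => if (v : ℕ) < 2 * a - 1 then b else !b with hg
  have hnc : ∃ i j, f i ≠ f j := by
    refine ⟨σ ⟨0, by omega⟩, σ ⟨a, by omega⟩, ?_⟩
    rw [hf, hf]
    simp only [if_pos (show (0 : ℕ) < a by omega), if_neg (show ¬ (a : ℕ) < a by omega)]
    cases b <;> simp
  have hext : ∀ i, g (T.leaf i) = f i := by
    intro i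
    have : T.leaf i = catLeaf n hn (σ.symm i) := rfl
    rw [this, hg]
    have hfi : f i = if ((σ.symm i : Fin n) : ℕ) < a then b else !b := by
      have := hf (σ.symm i)
      rwa [Equiv.apply_symm_apply] at this
    rw [hfi]
    have hk := (σ.symm i).isLt
    simp only [catLeaf]
    by_cases h0 : ((σ.symm i : Fin n) : ℕ) = 0
    · have h1 : (0:ℕ) < 2 * a - 1 := by omega
      have h2 : (0:ℕ) < a := by omega
      simp only [h0, h1, h2, ↓reduceIte]
    · simp only [if_neg h0]
      have hiff : (2 * (((σ.symm i : Fin n)) : ℕ) - 1 < 2 * a - 1) ↔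
          ((((σ.symm i : Fin n)) : ℕ) < a) := by omega
      simp only [hiff]
  -- the unique changing edge
  have hedge : {e : Sym2 (Fin (2 * n - 2)) |
      e ∈ T.adj.edgeSet ∧ ∃ u v, e = s(u, v) ∧ g u ≠ g v} =
      {s((⟨2 * a - 2, by omega⟩ : Fin (2 * n - 2)), ⟨np n (2 * a - 2), by unfold np; omega⟩)} := by
    ext e
    induction e with
    | _ u v =>
      simp only [Set.mem_setOf_eq, Set.mem_singleton_iff, SimpleGraph.mem_edgeSet]
      constructor
      · rintro ⟨huv, x, y, hxy, hgxy⟩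
        have hxy' : (g x ≠ g y) → (g u ≠ g v) := by
          rw [Sym2.eq_iff] at hxy
          rcases hxy with ⟨rfl, rfl⟩ | ⟨rfl, rfl⟩
          · exact fun h => h
          · exact fun h => Ne.symm h
        have hguv : g u ≠ g v := hxy' hgxy
        have hadj : (catG n).Adj u v := huv
        rw [catG_adj] at hadj
        obtain ⟨hne, hp⟩ := hadj
        have hcut : ¬ (((u : ℕ) < 2 * a - 1) ↔ ((v : ℕ) < 2 * a - 1)) := by
          intro hiff
          apply hguv
          rw [hg]
          simp only
          by_cases h : (u : ℕ) < 2 * a - 1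
          · rw [if_pos h, if_pos (hiff.mp h)]
          · rw [if_neg h, if_neg (fun hc => h (hiff.mpr hc))]
        rw [Sym2.eq_iff]
        have hu := u.isLt
        have hv := v.isLt
        unfold np at hp ⊢
        simp only [Fin.ext_iff]
        omega
      · intro he
        have h1 : T.adj.Adj ⟨2 * a - 2, by omega⟩ ⟨np n (2 * a - 2), by unfold np; omega⟩ := by
          show (catG n).Adj _ _
          rw [catG_adj]
          refine ⟨?_, Or.inl ?_⟩
          · simp only [Fin.val_mk]
            unfold np
            omega
          · simp only [Fin.val_mk]
        have hgg : g (⟨2 * a - 2, by omega⟩ : Fin (2 * n - 2)) ≠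
            (g ⟨np n (2 * a - 2), by unfold np; omega⟩) := by
          rw [hg]
          simp only [Fin.val_mk]
          rw [if_pos (by omega), if_neg (by unfold np; omega)]
          cases b <;> simp
        rw [Sym2.eq_iff] at he
        rcases he with ⟨rfl, rfl⟩ | ⟨rfl, rfl⟩
        · exact ⟨h1, _, _, rfl, hgg⟩
        · exact ⟨h1.symm, _, _, rfl, Ne.symm hgg⟩
  apply ps_eq_one T f hnc g hext
  unfold changingNumber
  rw [hedge]
  exact Set.ncard_singleton _

end Caterpillar


section Threshold

lemma lower_set_card {m : ℕ} (g : Fin m → ℕ) (hm : Monotone g) (t : ℕ) (i : Fin m) :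
    g i < t ↔ (i : ℕ) < (Finset.univ.filter (fun j => g j < t)).card := by
  constructor
  · intro h
    have hsub : Finset.Iic i ⊆ Finset.univ.filter (fun j => g j < t) := by
      intro j hj
      simp only [Finset.mem_Iic] at hj
      simp only [Finset.mem_filter, Finset.mem_univ, true_and]
      exact lt_of_le_of_lt (hm hj) h
    have := Finset.card_le_card hsub
    rw [Fin.card_Iic] at this
    omega
  · intro h
    by_contra hc
    have hsub : Finset.univ.filter (fun j => g j < t) ⊆ Finset.Iio i := by
      intro j hj
      simp only [Finset.mem_filter, Finset.mem_univ, true_and] at hj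
      simp only [Finset.mem_Iio]
      by_contra hj2
      push_neg at hj2
      exact hc (lt_of_le_of_lt (hm hj2) hj)
    have := Finset.card_le_card hsub
    rw [Fin.card_Iio] at this
    omega

lemma bool_eq_not {w x : Bool} (h : ¬ (w = x)) : w = !x := by
  cases w <;> cases x <;> simp_all

lemma threshold_of_key {n : ℕ} (hn : 2 ≤ n) (f₁ f₂ : Fin n → Bool)
    (h₁ : ∃ i j, f₁ i ≠ f₁ j) (h₂ : ∃ i j, f₂ i ≠ f₂ j)
    (x y : Bool) (key : ∀ i, f₁ i = x → f₂ i ≠ y) :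
    ∃ (σ : Equiv.Perm (Fin n)) (a₁ a₂ : ℕ) (b₁ b₂ : Bool),
      1 ≤ a₁ ∧ a₁ ≤ n - 1 ∧ 1 ≤ a₂ ∧ a₂ ≤ n - 1 ∧
      (∀ k : Fin n, f₁ (σ k) = if (k : ℕ) < a₁ then b₁ else !b₁) ∧
      (∀ k : Fin n, f₂ (σ k) = if (k : ℕ) < a₂ then b₂ else !b₂) := by
  classical
  set K : Fin n → ℕ := fun i => if f₂ i = y then 0 else if f₁ i = x then 2 else 1 with hK
  set σ := Tuple.sort K with hσ
  have hmono : Monotone (fun j => K (σ j)) := Tuple.monotone_sort K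
  set a₂ := (Finset.univ.filter (fun j => K (σ j) < 1)).card with ha₂def
  set a₁ := (Finset.univ.filter (fun j => K (σ j) < 2)).card with ha₁def
  have ht2 : ∀ j : Fin n, K (σ j) < 1 ↔ (j : ℕ) < a₂ :=
    fun j => lower_set_card (fun j => K (σ j)) hmono 1 j
  have ht1 : ∀ j : Fin n, K (σ j) < 2 ↔ (j : ℕ) < a₁ :=
    fun j => lower_set_card (fun j => K (σ j)) hmono 2 j
  have hK2 : ∀ i, (K i < 1 ↔ f₂ i = y) := by
    intro i
    rw [hK]
    by_cases h : f₂ i = y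
    · simp [h]
    · simp only [if_neg h]
      constructor
      · intro hlt
        split at hlt <;> omega
      · intro hc
        exact absurd hc h
  have hK1 : ∀ i, (K i < 2 ↔ f₁ i ≠ x) := by
    intro i
    rw [hK]
    by_cases h : f₂ i = y
    · simp only [if_pos h]
      have : f₁ i ≠ x := fun hc => key i hc h
      simp [this]
    · simp only [if_neg h]
      by_cases h' : f₁ i = x
      · simp [h']
      · simp [h']
  -- nonconstancy gives witnesses for both values
  have hw2 : (∃ i, f₂ i = y) ∧ (∃ i, f₂ i ≠ y) := by
    obtain ⟨i, j, hij⟩ := h₂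
    by_cases h : f₂ i = y
    · exact ⟨⟨i, h⟩, ⟨j, fun hc => hij (h.trans hc.symm)⟩⟩
    · refine ⟨⟨j, ?_⟩, ⟨i, h⟩⟩
      by_contra hc
      apply hij
      cases hfi : f₂ i <;> cases hfj : f₂ j <;> cases y <;> simp_all
  have hw1 : (∃ i, f₁ i = x) ∧ (∃ i, f₁ i ≠ x) := by
    obtain ⟨i, j, hij⟩ := h₁
    by_cases h : f₁ i = x
    · exact ⟨⟨i, h⟩, ⟨j, fun hc => hij (h.trans hc.symm)⟩⟩
    · refine ⟨⟨j, ?_⟩, ⟨i, h⟩⟩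
      by_contra hc
      apply hij
      cases hfi : f₁ i <;> cases hfj : f₁ j <;> cases x <;> simp_all
  have hb2 : 1 ≤ a₂ := by
    obtain ⟨i, hi⟩ := hw2.1
    rw [ha₂def]
    refine Finset.card_pos.mpr ⟨σ.symm i, ?_⟩
    simp only [Finset.mem_filter, Finset.mem_univ, true_and]
    rw [Equiv.apply_symm_apply, hK2]
    exact hi
  have hb2' : a₂ ≤ n - 1 := by
    obtain ⟨i, hi⟩ := hw2.2
    rw [ha₂def]
    have hsub : Finset.univ.filter (fun j => K (σ j) < 1) ⊆ Finset.univ.erase (σ.symm i) := by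
      intro j hj
      simp only [Finset.mem_filter, Finset.mem_univ, true_and] at hj
      refine Finset.mem_erase.mpr ⟨?_, Finset.mem_univ _⟩
      rintro rfl
      rw [Equiv.apply_symm_apply, hK2] at hj
      exact hi hj
    have := Finset.card_le_card hsub
    rwa [Finset.card_erase_of_mem (Finset.mem_univ _), Finset.card_univ, Fintype.card_fin] at this
  have hb1 : 1 ≤ a₁ := by
    obtain ⟨i, hi⟩ := hw1.2
    rw [ha₁def]
    refine Finset.card_pos.mpr ⟨σ.symm i, ?_⟩
    simp only [Finset.mem_filter, Finset.mem_univ, true_and]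
    rw [Equiv.apply_symm_apply, hK1]
    exact hi
  have hb1' : a₁ ≤ n - 1 := by
    obtain ⟨i, hi⟩ := hw1.1
    rw [ha₁def]
    have hsub : Finset.univ.filter (fun j => K (σ j) < 2) ⊆ Finset.univ.erase (σ.symm i) := by
      intro j hj
      simp only [Finset.mem_filter, Finset.mem_univ, true_and] at hj
      refine Finset.mem_erase.mpr ⟨?_, Finset.mem_univ _⟩
      rintro rfl
      rw [Equiv.apply_symm_apply, hK1] at hj
      exact hj hi
    have := Finset.card_le_card hsub
    rwa [Finset.card_erase_of_mem (Finset.mem_univ _), Finset.card_univ, Fintype.card_fin] at this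
  refine ⟨σ, a₁, a₂, !x, y, hb1, hb1', hb2, hb2', ?_, ?_⟩
  · intro k
    by_cases hk : (k : ℕ) < a₁
    · rw [if_pos hk]
      have := (ht1 k).mpr hk
      rw [hK1] at this
      exact bool_eq_not this
    · rw [if_neg hk, Bool.not_not]
      have : ¬ K (σ k) < 2 := fun hc => hk ((ht1 k).mp hc)
      rw [hK1] at this
      push_neg at this
      exact this
  · intro k
    by_cases hk : (k : ℕ) < a₂
    · rw [if_pos hk]
      have := (ht2 k).mpr hk
      rwa [hK2] at this
    · rw [if_neg hk]
      have : ¬ K (σ k) < 1 := fun hc => hk ((ht2 k).mp hc)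
      rw [hK2] at this
      exact bool_eq_not this

end Threshold

/-- Two non-constant characters are compatible with each other if and only if some
binary phylogenetic tree gives both of them parsimony score 1. -/
theorem stmt11 (n : ℕ) (hn : 2 ≤ n) (f₁ f₂ : Fin n → Bool)
    (h₁ : ∃ i j, f₁ i ≠ f₁ j) (h₂ : ∃ i j, f₂ i ≠ f₂ j) :
    CharCompatible f₁ f₂ ↔ ∃ T : PhyloTree n, ps f₁ T = 1 ∧ ps f₂ T = 1 := by
  constructor
  · intro hc
    have hkey : ∃ x y : Bool, ∀ i, f₁ i = x → f₂ i ≠ y := by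
      rcases hc with h | h | h | h
      · exact ⟨false, false, fun i h1 h2 => Set.eq_empty_iff_forall_notMem.mp h i ⟨h1, h2⟩⟩
      · exact ⟨false, true, fun i h1 h2 => Set.eq_empty_iff_forall_notMem.mp h i ⟨h1, h2⟩⟩
      · exact ⟨true, false, fun i h1 h2 => Set.eq_empty_iff_forall_notMem.mp h i ⟨h1, h2⟩⟩
      · exact ⟨true, true, fun i h1 h2 => Set.eq_empty_iff_forall_notMem.mp h i ⟨h1, h2⟩⟩
    obtain ⟨x, y, key⟩ := hkey
    obtain ⟨σ, a₁, a₂, b₁, b₂, ha1, ha1', ha2, ha2', hp1, hp2⟩ :=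
      threshold_of_key hn f₁ f₂ h₁ h₂ x y key
    exact ⟨catTree n hn σ, cat_ps_one hn σ f₁ a₁ b₁ ha1 ha1' hp1,
      cat_ps_one hn σ f₂ a₂ b₂ ha2 ha2' hp2⟩
  · rintro ⟨T, hp1, hp2⟩
    exact backward_dir f₁ f₂ T hp1 hp2
end

section
/- Let (f_1, f_2) be a pair of characters on {1,…,n} and consider the minimum M of ps(f_1,T) + ps(f_2,T) over all binary phylogenetic trees T on leaf set {1,…,n}. Then: (i) M = 0 if f_1 and f_2 are both constant; (ii) M = 1 if exactly one of f_1, f_2 is constant; (iii) M = 2 if neither f_1 nor f_2 is constant and f_1, f_2 are compatible with each other; (iv) M = 3 if neither f_1 nor f_2 is constant and f_1, f_2 are not compatible with each other. -/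
open Classical

namespace S13

def par (n v : ℕ) : ℕ :=
  if v ≤ 1 then 0 else if v ≤ n-3 then v - 1
  else if v ≤ n - 1 then 0 else if v ≤ 2*n - 4 then v - n + 1 else n - 3

lemma par_lt {n v : ℕ} (hn : 2 ≤ n) (hv : 1 ≤ v) : par n v < v := by
  unfold par; split_ifs <;> omega

lemma par_le3 {n v : ℕ} (hn : 3 ≤ n) : par n v ≤ n - 3 := by
  unfold par; split_ifs <;> omega

def catG (n : ℕ) : SimpleGraph (Fin (2*n-2)) where
  Adj u v := u ≠ v ∧ (par n ↑u = ↑v ∨ par n ↑v = ↑u)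
  symm := by constructor; intro u v ⟨h1, h2⟩; exact ⟨h1.symm, h2.symm⟩
  loopless := by constructor; intro u ⟨h1, _⟩; exact h1 rfl

lemma catG_adj {n : ℕ} {u v : Fin (2*n-2)} :
    (catG n).Adj u v ↔ u ≠ v ∧ (par n ↑u = ↑v ∨ par n ↑v = ↑u) := Iff.rfl

def vtx {n : ℕ} (hn : 2 ≤ n) (m : ℕ) : Fin (2*n-2) := ⟨m % (2*n-2), Nat.mod_lt _ (by omega)⟩

lemma vtx_val {n : ℕ} (hn : 2 ≤ n) {m : ℕ} (hm : m < 2*n-2) : ((vtx hn m : Fin (2*n-2)) : ℕ) = m := by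
  simp [vtx, Nat.mod_eq_of_lt hm]

lemma catG_adj_par {n : ℕ} (hn : 2 ≤ n) {v : Fin (2*n-2)} (hv : 1 ≤ (v:ℕ)) :
    (catG n).Adj v (vtx hn (par n ↑v)) := by
  have h1 : par n ↑v < ↑v := par_lt hn hv
  have h2 : par n ↑v < 2*n-2 := lt_of_lt_of_le h1 (le_of_lt v.2)
  refine ⟨?_, Or.inl ?_⟩
  · intro h
    have := congrArg (Fin.val) h
    rw [vtx_val hn h2] at this; omega
  · rw [vtx_val hn h2]

lemma catG_reach_zero {n : ℕ} (hn : 2 ≤ n) (v : Fin (2*n-2)) :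
    (catG n).Reachable v (vtx hn 0) := by
  obtain ⟨m, hm⟩ := v
  induction m using Nat.strong_induction_on with
  | _ m ih =>
    rcases Nat.eq_zero_or_pos m with h0 | h1
    · subst h0
      have : (⟨0, hm⟩ : Fin (2*n-2)) = vtx hn 0 := by
        apply Fin.ext; rw [vtx_val hn (by omega)]
      rw [this]
    · have hadj := catG_adj_par hn (v := ⟨m, hm⟩) h1
      have hlt : par n m < m := par_lt hn h1
      have h2 : par n m < 2*n-2 := by omega
      have hr := ih (par n m) hlt h2
      have : vtx hn (par n (⟨m, hm⟩ : Fin (2*n-2))) = ⟨par n m, h2⟩ := by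
        apply Fin.ext; rw [vtx_val hn]; exact h2
      rw [this] at hadj
      exact (hadj.reachable).trans hr

lemma catG_connected {n : ℕ} (hn : 2 ≤ n) : (catG n).Connected := by
  rw [SimpleGraph.connected_iff]
  refine ⟨fun u v => (catG_reach_zero hn u).trans (catG_reach_zero hn v).symm, ⟨vtx hn 0⟩⟩

/-- descendants: iterated parent reaches v -/
def IsDesc (n : ℕ) (v w : ℕ) : Prop := ∃ k, (par n)^[k] w = v

lemma par_iter_le {n k w : ℕ} : (par n)^[k] w ≤ w := by
  induction k generalizing w with
  | zero => simp
  | succ k ih =>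
    rw [Function.iterate_succ_apply]
    exact le_trans ih (by unfold par; split_ifs <;> omega)

lemma reach_closed {V : Type*} {G : SimpleGraph V} {S : Set V}
    (hS : ∀ a b, G.Adj a b → a ∈ S → b ∈ S) {x y : V}
    (h : G.Reachable x y) (hx : x ∈ S) : y ∈ S := by
  obtain ⟨p⟩ := h
  induction p with
  | nil => exact hx
  | cons h p ih => exact ih (hS _ _ h hx)

lemma bridge_half {n : ℕ} (hn : 2 ≤ n) {u v : Fin (2*n-2)}
    (huv : (catG n).Adj u v) (hpar : par n ↑v = ↑u) :
    ¬((catG n) \ SimpleGraph.fromEdgeSet {s(u, v)}).Reachable v u := by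
  intro hr
  have hvne : (v:ℕ) ≠ ↑u := fun h => huv.ne (Fin.ext h).symm
  have hv1 : 1 ≤ (v:ℕ) := by
    rcases Nat.eq_zero_or_pos (v:ℕ) with h0 | h1
    · exfalso; apply hvne; rw [h0] at hpar ⊢; simpa [par] using hpar
    · exact h1
  have hulv : (u:ℕ) < ↑v := by have := par_lt hn hv1; omega
  set S : Set (Fin (2*n-2)) := {w | ∃ k, (par n)^[k] ↑w = (v:ℕ)} with hSdef
  have hcl : ∀ a b, ((catG n) \ SimpleGraph.fromEdgeSet {s(u, v)}).Adj a b → a ∈ S → b ∈ S := by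
    intro a b hab ha
    obtain ⟨hGab, hnot⟩ := hab
    rw [SimpleGraph.fromEdgeSet_adj] at hnot
    push_neg at hnot
    have hne : s(a, b) ≠ s(u, v) := fun h => (hGab.ne (hnot h))
    obtain ⟨k, hk⟩ := ha
    rcases hGab.2 with hba | hab'
    · -- par a = b
      rcases Nat.eq_zero_or_pos k with h0 | h1
      · -- a = v, so b = par v = u, edge is s(v,u) = s(u,v): excluded
        exfalso
        apply hne
        subst h0
        simp only [Function.iterate_zero, id] at hk
        have hav : a = v := Fin.ext hk
        have hbu : b = u := Fin.ext (by rw [← hba, hk, hpar])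
        rw [hav, hbu, Sym2.eq_swap]
      · obtain ⟨k', rfl⟩ := Nat.exists_eq_succ_of_ne_zero (by omega : k ≠ 0)
        refine ⟨k', ?_⟩
        rw [Function.iterate_succ_apply, hba] at hk
        exact hk
    · -- par b = a
      exact ⟨k + 1, by rw [Function.iterate_succ_apply, hab', hk]⟩
  have hu : u ∈ S := reach_closed hcl hr ⟨0, rfl⟩
  obtain ⟨k, hk⟩ := hu
  have : (par n)^[k] ↑u ≤ (u:ℕ) := par_iter_le
  omega

lemma catG_acyclic {n : ℕ} (hn : 2 ≤ n) : (catG n).IsAcyclic := by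
  rw [SimpleGraph.isAcyclic_iff_forall_adj_isBridge]
  intro u v huv
  rw [SimpleGraph.isBridge_iff]
  rcases huv.2 with hpu | hpv
  · have h2 := bridge_half hn huv.symm hpu
    rw [Sym2.eq_swap]
    exact h2
  · exact fun hr => bridge_half hn huv hpv hr.symm

lemma fin_ne_iff {n : ℕ} {u v : Fin n} : u ≠ v ↔ (u:ℕ) ≠ ↑v := by
  constructor
  · exact fun h h' => h (Fin.ext h')
  · exact fun h h' => h (congrArg Fin.val h')

lemma mem_nb {n : ℕ} {v u : Fin (2*n-2)} :
    u ∈ (catG n).neighborSet v ↔ ((v:ℕ) ≠ ↑u ∧ (par n ↑v = ↑u ∨ par n ↑u = ↑v)) := by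
  rw [SimpleGraph.mem_neighborSet, catG_adj, fin_ne_iff]

lemma nb_leaf {n : ℕ} (hn : 3 ≤ n) {v : Fin (2*n-2)} (hv : n-2 ≤ (v:ℕ)) :
    (catG n).neighborSet v = {vtx (by omega) (par n ↑v)} := by
  have hn2 : 2 ≤ n := by omega
  have hple : par n ↑v ≤ n - 3 := par_le3 hn
  have hplt : par n ↑v < 2*n-2 := by omega
  ext u
  rw [mem_nb, Set.mem_singleton_iff, Fin.ext_iff, vtx_val hn2 hplt]
  constructor
  · rintro ⟨hne, h | h⟩
    · omega
    · have := par_le3 hn (v := (u:ℕ)); omega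
  · intro h
    exact ⟨by omega, Or.inl h.symm⟩

lemma nb_n2 {n : ℕ} (hn : n = 2) (v : Fin (2*n-2)) :
    (catG n).neighborSet v = {vtx (by omega) (1 - ↑v)} := by
  subst hn
  ext u
  have hu := u.2; have hv := v.2
  rw [mem_nb, Set.mem_singleton_iff, Fin.ext_iff, vtx_val (by norm_num) (by omega)]
  unfold par
  split_ifs <;> omega

lemma nb_0_n3 {n : ℕ} (hn : n = 3) {v : Fin (2*n-2)} (hv : (v:ℕ) = 0) :
    (catG n).neighborSet v = {vtx (by omega) 1, vtx (by omega) 2, vtx (by omega) 3} := by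
  subst hn
  ext u
  have hu := u.2
  rw [mem_nb, Set.mem_insert_iff, Set.mem_insert_iff, Set.mem_singleton_iff,
    Fin.ext_iff, Fin.ext_iff, Fin.ext_iff, vtx_val (by norm_num) (by omega),
    vtx_val (by norm_num) (by omega), vtx_val (by norm_num) (by omega)]
  unfold par
  split_ifs <;> omega

lemma nb_0_ge4 {n : ℕ} (hn : 4 ≤ n) {v : Fin (2*n-2)} (hv : (v:ℕ) = 0) :
    (catG n).neighborSet v
      = {vtx (by omega) 1, vtx (by omega) (n-2), vtx (by omega) (n-1)} := by
  have hn2 : 2 ≤ n := by omega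
  ext u
  have hu := u.2
  rw [mem_nb, Set.mem_insert_iff, Set.mem_insert_iff, Set.mem_singleton_iff,
    Fin.ext_iff, Fin.ext_iff, Fin.ext_iff, vtx_val hn2 (by omega),
    vtx_val hn2 (by omega), vtx_val hn2 (by omega)]
  unfold par
  split_ifs <;> omega

lemma nb_mid {n : ℕ} (hn : 4 ≤ n) {v : Fin (2*n-2)} (hv1 : 1 ≤ (v:ℕ)) (hv2 : (v:ℕ) ≤ n-4) :
    (catG n).neighborSet v
      = {vtx (by omega) (↑v-1), vtx (by omega) (↑v+1), vtx (by omega) (↑v+n-1)} := by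
  have hn2 : 2 ≤ n := by omega
  ext u
  have hu := u.2
  rw [mem_nb, Set.mem_insert_iff, Set.mem_insert_iff, Set.mem_singleton_iff,
    Fin.ext_iff, Fin.ext_iff, Fin.ext_iff, vtx_val hn2 (by omega),
    vtx_val hn2 (by omega), vtx_val hn2 (by omega)]
  unfold par
  split_ifs <;> omega

lemma nb_last {n : ℕ} (hn : 4 ≤ n) {v : Fin (2*n-2)} (hv : (v:ℕ) = n-3) :
    (catG n).neighborSet v
      = {vtx (by omega) (n-4), vtx (by omega) (2*n-4), vtx (by omega) (2*n-3)} := by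
  have hn2 : 2 ≤ n := by omega
  ext u
  have hu := u.2
  rw [mem_nb, Set.mem_insert_iff, Set.mem_insert_iff, Set.mem_singleton_iff,
    Fin.ext_iff, Fin.ext_iff, Fin.ext_iff, vtx_val hn2 (by omega),
    vtx_val hn2 (by omega), vtx_val hn2 (by omega)]
  unfold par
  split_ifs <;> omega

lemma ncard_triple {n : ℕ} (hn : 2 ≤ n) {a b c : ℕ}
    (ha : a < 2*n-2) (hb : b < 2*n-2) (hc : c < 2*n-2)
    (hab : a ≠ b) (hac : a ≠ c) (hbc : b ≠ c) :
    ({vtx hn a, vtx hn b, vtx hn c} : Set (Fin (2*n-2))).ncard = 3 := by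
  rw [Set.ncard_insert_of_notMem, Set.ncard_insert_of_notMem, Set.ncard_singleton]
  · simp only [Set.mem_singleton_iff, Fin.ext_iff, vtx_val hn hb, vtx_val hn hc]
    exact hbc
  · simp only [Set.mem_insert_iff, Set.mem_singleton_iff, Fin.ext_iff,
      vtx_val hn ha, vtx_val hn hb, vtx_val hn hc]
    push_neg
    exact ⟨hab, hac⟩

lemma deg_one {n : ℕ} (hn : 2 ≤ n) {v : Fin (2*n-2)} (hv : n = 2 ∨ n-2 ≤ (v:ℕ)) :
    ((catG n).neighborSet v).ncard = 1 := by
  rcases eq_or_lt_of_le hn with h2 | h3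
  · rw [nb_n2 h2.symm v]; exact Set.ncard_singleton _
  · rcases hv with h | h
    · omega
    · rw [nb_leaf (by omega) h]; exact Set.ncard_singleton _

lemma deg_three {n : ℕ} (hn : 3 ≤ n) {v : Fin (2*n-2)} (hv : (v:ℕ) ≤ n-3) :
    ((catG n).neighborSet v).ncard = 3 := by
  rcases eq_or_lt_of_le hn with h3 | h4
  · have hv0 : (v:ℕ) = 0 := by omega
    rw [nb_0_n3 h3.symm hv0]
    exact ncard_triple (by omega) (by omega) (by omega) (by omega)
      (by omega) (by omega) (by omega)
  · have h4 : 4 ≤ n := h4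
    rcases Nat.eq_zero_or_pos (v:ℕ) with h0 | h1
    · rw [nb_0_ge4 h4 h0]
      exact ncard_triple (by omega) (by omega) (by omega) (by omega)
        (by omega) (by omega) (by omega)
    · rcases eq_or_lt_of_le (show (v:ℕ) ≤ n-3 from hv) with hlast | hmid
      · rw [nb_last h4 hlast]
        exact ncard_triple (by omega) (by omega) (by omega) (by omega)
          (by omega) (by omega) (by omega)
      · rw [nb_mid h4 h1 (by omega)]
        exact ncard_triple (by omega) (by omega) (by omega) (by omega)
          (by omega) (by omega) (by omega)

def lmap {n : ℕ} (hn : 2 ≤ n) (i : Fin n) : Fin (2*n-2) := ⟨n-2+↑i, by omega⟩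

lemma lmap_val {n : ℕ} (hn : 2 ≤ n) (i : Fin n) : ((lmap hn i : Fin (2*n-2)) : ℕ) = n-2+↑i := rfl

lemma lmap_inj {n : ℕ} (hn : 2 ≤ n) : Function.Injective (lmap hn) := by
  intro i j h
  have := congrArg Fin.val h
  simp only [lmap_val] at this
  exact Fin.ext (by omega)

lemma catG_deg13 {n : ℕ} (hn : 2 ≤ n) (v : Fin (2*n-2)) :
    ((catG n).neighborSet v).ncard = 1 ∨ ((catG n).neighborSet v).ncard = 3 := by
  rcases eq_or_lt_of_le hn with h2 | h3
  · exact Or.inl (deg_one hn (Or.inl h2.symm))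
  · rcases le_or_gt (n-2) (v:ℕ) with h | h
    · exact Or.inl (deg_one hn (Or.inr h))
    · exact Or.inr (deg_three h3 (by omega))

lemma catG_leafrange {n : ℕ} (hn : 2 ≤ n) (v : Fin (2*n-2)) :
    ((catG n).neighborSet v).ncard = 1 ↔ ∃ i, lmap hn i = v := by
  constructor
  · intro h1
    have hv : n-2 ≤ (v:ℕ) := by
      by_contra hc
      have h3 : 3 ≤ n := by
        rcases eq_or_lt_of_le hn with h2 | h3
        · exfalso; apply hc; omega
        · exact h3
      have := deg_three h3 (v := v) (by omega)
      omega
    refine ⟨⟨↑v - (n-2), by have := v.2; omega⟩, ?_⟩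
    apply Fin.ext
    rw [lmap_val]
    simp only []
    omega
  · rintro ⟨i, rfl⟩
    exact deg_one hn (Or.inr (by rw [lmap_val]; omega))

section PS
variable {n : ℕ} (T : PhyloTree n)

lemma exists_ext (f : Fin n → Bool) : ∃ g : Fin (2*n-2) → Bool, ∀ i, g (T.leaf i) = f i := by
  classical
  refine ⟨fun v => if h : ∃ i, T.leaf i = v then f h.choose else false, fun i => ?_⟩
  have h : ∃ j, T.leaf j = T.leaf i := ⟨i, rfl⟩
  simp only [dif_pos h]
  congr 1
  exact T.leaf_inj h.choose_spec

lemma ps_spec (f : Fin n → Bool) :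
    ∃ g : Fin (2*n-2) → Bool, (∀ i, g (T.leaf i) = f i) ∧ changingNumber T g = ps f T := by
  have hne : {m | ∃ g : Fin (2 * n - 2) → Bool,
      (∀ i, g (T.leaf i) = f i) ∧ changingNumber T g = m}.Nonempty := by
    obtain ⟨g, hg⟩ := exists_ext T f
    exact ⟨changingNumber T g, g, hg, rfl⟩
  exact Nat.sInf_mem hne

lemma ps_le {f : Fin n → Bool} {g : Fin (2*n-2) → Bool} (hg : ∀ i, g (T.leaf i) = f i) :
    ps f T ≤ changingNumber T g :=
  Nat.sInf_le ⟨g, hg, rfl⟩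

lemma changing_zero {g : Fin (2*n-2) → Bool} (h : changingNumber T g = 0) :
    ∀ a b, T.adj.Adj a b → g a = g b := by
  rw [changingNumber, Set.ncard_eq_zero (Set.toFinite _)] at h
  intro a b hab
  by_contra hne
  have : s(a, b) ∈ (∅ : Set (Sym2 (Fin (2*n-2)))) := by
    rw [← h]; exact ⟨(T.adj.mem_edgeSet).2 hab, a, b, rfl, hne⟩
  exact this

lemma reach_const {V : Type*} {G : SimpleGraph V} {g : V → Bool}
    (h : ∀ a b, G.Adj a b → g a = g b) {x y : V} (hr : G.Reachable x y) : g x = g y := by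
  have := reach_closed (S := {w | g x = g w}) (fun a b hab ha => ha.trans (h a b hab)) hr rfl
  exact this

lemma one_le_ps (hn : 2 ≤ n) {f : Fin n → Bool} (hnc : ¬ ∃ b, ∀ i, f i = b) : 1 ≤ ps f T := by
  by_contra h
  push_neg at h
  obtain ⟨g, hg, hcn⟩ := ps_spec T f
  have h0 : changingNumber T g = 0 := by omega
  have hconst := changing_zero T h0
  apply hnc
  refine ⟨f ⟨0, by omega⟩, fun i => ?_⟩
  have := reach_const hconst (T.connected ((T.leaf i)) (T.leaf ⟨0, by omega⟩))
  rw [hg, hg] at this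
  exact this

lemma ps_one {f : Fin n → Bool} (h : ps f T = 1) :
    ∃ (u v : Fin (2*n-2)) (g : Fin (2*n-2) → Bool),
      T.adj.Adj u v ∧ (∀ i, g (T.leaf i) = f i) ∧ g u ≠ g v ∧
      (∀ a b, T.adj.Adj a b → g a ≠ g b → s(a, b) = s(u, v)) := by
  obtain ⟨g, hg, hcn⟩ := ps_spec T f
  rw [h, changingNumber, Set.ncard_eq_one] at hcn
  obtain ⟨e0, he0⟩ := hcn
  have he0mem : e0 ∈ {e : Sym2 (Fin (2 * n - 2)) |
      e ∈ T.adj.edgeSet ∧ ∃ u v, e = s(u, v) ∧ g u ≠ g v} := by rw [he0]; rfl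
  obtain ⟨hee, u, v, rfl, hne⟩ := he0mem
  refine ⟨u, v, g, (T.adj.mem_edgeSet).1 hee, hg, hne, fun a b hab hgab => ?_⟩
  have : s(a, b) ∈ ({s(u,v)} : Set (Sym2 (Fin (2*n-2)))) := by
    rw [← he0]; exact ⟨(T.adj.mem_edgeSet).2 hab, a, b, rfl, hgab⟩
  exact this

lemma del_cover {V : Type*} {G : SimpleGraph V} (hc : G.Connected) (u v w : V) :
    (G.deleteEdges {s(u,v)}).Reachable w u ∨ (G.deleteEdges {s(u,v)}).Reachable w v := by
  obtain ⟨p⟩ := hc u w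
  have key : ∀ {x y : V}, G.Walk x y →
      ((G.deleteEdges {s(u,v)}).Reachable x u ∨ (G.deleteEdges {s(u,v)}).Reachable x v) →
      ((G.deleteEdges {s(u,v)}).Reachable y u ∨ (G.deleteEdges {s(u,v)}).Reachable y v) := by
    intro x y p
    induction p with
    | nil => exact id
    | @cons a b c h q ih =>
      intro hx
      apply ih
      by_cases he : s(a, b) = s(u, v)
      · rw [Sym2.eq_iff] at he
        rcases he with ⟨rfl, rfl⟩ | ⟨rfl, rfl⟩
        · exact Or.inr (SimpleGraph.Reachable.refl _)
        · exact Or.inl (SimpleGraph.Reachable.refl _)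
      · have hadj : (G.deleteEdges {s(u,v)}).Adj a b := by
          rw [SimpleGraph.deleteEdges_adj]
          exact ⟨h, by simpa using he⟩
        rcases hx with h1 | h1
        · exact Or.inl (hadj.symm.reachable.trans h1)
        · exact Or.inr (hadj.symm.reachable.trans h1)
  exact key p (Or.inl (SimpleGraph.Reachable.refl _))

lemma del_disj {V : Type*} {G : SimpleGraph V} (hac : G.IsAcyclic) {u v : V} (hadj : G.Adj u v) :
    ¬(G.deleteEdges {s(u,v)}).Reachable u v := by
  have hb := (SimpleGraph.isAcyclic_iff_forall_adj_isBridge.mp hac) hadj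
  rw [SimpleGraph.isBridge_iff] at hb
  exact hb

lemma del_const {V : Type*} {G : SimpleGraph V} {g : V → Bool} {u v : V}
    (huniq : ∀ a b, G.Adj a b → g a ≠ g b → s(a, b) = s(u, v))
    {x y : V} (hr : (G.deleteEdges {s(u,v)}).Reachable x y) : g x = g y := by
  refine reach_const (fun a b hab => ?_) hr
  rw [SimpleGraph.deleteEdges_adj] at hab
  by_contra hne
  exact hab.2 (by simpa using huniq a b hab.1 hne)

lemma ps_one_classes {f : Fin n → Bool} {u v : Fin (2*n-2)} {g : Fin (2*n-2) → Bool}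
    (hadj : T.adj.Adj u v) (hg : ∀ i, g (T.leaf i) = f i) (hne : g u ≠ g v)
    (huniq : ∀ a b, T.adj.Adj a b → g a ≠ g b → s(a, b) = s(u, v)) :
    ∀ i, (f i = g u ↔ (T.adj.deleteEdges {s(u,v)}).Reachable (T.leaf i) u) ∧
         (f i = g v ↔ (T.adj.deleteEdges {s(u,v)}).Reachable (T.leaf i) v) := by
  intro i
  have hdisj := del_disj T.acyclic hadj
  rcases del_cover T.connected u v (T.leaf i) with hru | hrv
  · have hfi : f i = g u := by rw [← hg i]; exact del_const huniq hru
    constructor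
    · exact iff_of_true hfi hru
    · refine iff_of_false (by rw [hfi]; exact hne) (fun hr => hdisj (hru.symm.trans hr))
  · have hfi : f i = g v := by rw [← hg i]; exact del_const huniq hrv
    constructor
    · refine iff_of_false ?_ (fun hr => hdisj (hr.symm.trans hrv))
      rw [hfi]; intro h; exact hne h.symm
    · exact iff_of_true hfi hrv

lemma sideSub {V : Type*} {G H : SimpleGraph V} (hHG : H ≤ G) {x1 y1 x2 y2 : V}
    (hd1 : ¬H.Reachable x1 y1) (hx2 : H.Reachable x2 x1) (hy2 : H.Reachable y2 x1)
    {w : V} (hw : H.Reachable y1 w) : (G.deleteEdges {s(x2,y2)}).Reachable y1 w := by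
  have key : ∀ a w : V, H.Walk a w →
      H.Reachable y1 a → (G.deleteEdges {s(x2,y2)}).Reachable y1 a →
      H.Reachable y1 w ∧ (G.deleteEdges {s(x2,y2)}).Reachable y1 w := by
    intro a w p
    induction p with
    | nil => exact fun h1 h2 => ⟨h1, h2⟩
    | @cons a b c h q ih =>
      intro h1 h2
      have hb1 : H.Reachable y1 b := h1.trans h.reachable
      have hax2 : a ≠ x2 := by
        rintro rfl
        exact hd1 ((h1.trans hx2).symm)
      have hay2 : a ≠ y2 := by
        rintro rfl
        exact hd1 ((h1.trans hy2).symm)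
      have hadj2 : (G.deleteEdges {s(x2,y2)}).Adj a b := by
        rw [SimpleGraph.deleteEdges_adj]
        refine ⟨hHG h, ?_⟩
        simp only [Set.mem_singleton_iff, Sym2.eq_iff]
        push_neg
        exact ⟨fun h' => absurd h' hax2, fun h' => absurd h' hay2⟩
      exact ih hb1 (h2.trans hadj2.reachable)
  obtain ⟨p⟩ := hw
  exact (key y1 w p (SimpleGraph.Reachable.refl _) (SimpleGraph.Reachable.refl _)).2

lemma empty_to_compat {f₁ f₂ : Fin n → Bool}
    (h : ∃ b₁ b₂, {i | f₁ i = b₁} ∩ {i | f₂ i = b₂} = ∅) : CharCompatible f₁ f₂ := by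
  obtain ⟨b₁, b₂, h⟩ := h
  cases b₁ <;> cases b₂
  · exact Or.inl h
  · exact Or.inr (Or.inl h)
  · exact Or.inr (Or.inr (Or.inl h))
  · exact Or.inr (Or.inr (Or.inr h))

end PS

section Compat
variable {n : ℕ}

lemma branch_empty (T : PhyloTree n) {f₁ f₂ : Fin n → Bool}
    {u1 v1 u2 v2 x1 y1 x2 y2 : Fin (2*n-2)} {g1 g2 : Fin (2*n-2) → Bool}
    (hE2 : s(x2,y2) = s(u2,v2))
    (hcls1 : ∀ i, f₁ i = g1 y1 ↔ (T.adj.deleteEdges {s(u1,v1)}).Reachable (T.leaf i) y1)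
    (hcls2 : ∀ i, f₂ i = g2 y2 ↔ (T.adj.deleteEdges {s(u2,v2)}).Reachable (T.leaf i) y2)
    (hd1 : ¬(T.adj.deleteEdges {s(u1,v1)}).Reachable x1 y1)
    (hd2 : ¬(T.adj.deleteEdges {s(u2,v2)}).Reachable x2 y2)
    (hx2s : (T.adj.deleteEdges {s(u1,v1)}).Reachable x2 x1)
    (hy2s : (T.adj.deleteEdges {s(u1,v1)}).Reachable y2 x1)
    (hy1s : (T.adj.deleteEdges {s(u2,v2)}).Reachable y1 x2) :
    {i | f₁ i = g1 y1} ∩ {i | f₂ i = g2 y2} = ∅ := by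
  rw [Set.eq_empty_iff_forall_notMem]
  rintro i ⟨hi1, hi2⟩
  have R1 := (hcls1 i).mp hi1
  have R2 := (hcls2 i).mp hi2
  have S := sideSub (G := T.adj) (H := T.adj.deleteEdges {s(u1,v1)})
      (SimpleGraph.deleteEdges_le _) hd1 hx2s hy2s R1.symm
  rw [hE2] at S
  exact hd2 (hy1s.symm.trans (S.trans R2))

lemma compat_of_ps_one (T : PhyloTree n) {f₁ f₂ : Fin n → Bool}
    (h1 : ps f₁ T = 1) (h2 : ps f₂ T = 1) : CharCompatible f₁ f₂ := by
  obtain ⟨u1, v1, g1, hadj1, hg1, hne1, huniq1⟩ := ps_one T h1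
  obtain ⟨u2, v2, g2, hadj2, hg2, hne2, huniq2⟩ := ps_one T h2
  have hcls1 := ps_one_classes T hadj1 hg1 hne1 huniq1
  have hcls2 := ps_one_classes T hadj2 hg2 hne2 huniq2
  have hd1 := del_disj T.acyclic hadj1
  have hd2 := del_disj T.acyclic hadj2
  by_cases he : s(u1,v1) = s(u2,v2)
  · apply empty_to_compat
    rw [Sym2.eq_iff] at he
    rcases he with ⟨h3, h4⟩ | ⟨h3, h4⟩
    · subst h3; subst h4
      refine ⟨g1 v1, g2 u1, Set.eq_empty_iff_forall_notMem.2 ?_⟩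
      rintro i ⟨hi1, hi2⟩
      have R1 := ((hcls1 i).2).mp hi1
      have R2 := ((hcls2 i).1).mp hi2
      exact hd1 (R2.symm.trans R1)
    · subst h3; subst h4
      refine ⟨g1 v1, g2 u1, Set.eq_empty_iff_forall_notMem.2 ?_⟩
      rintro i ⟨hi1, hi2⟩
      have R1 := ((hcls1 i).2).mp hi1
      have R2 := ((hcls2 i).2).mp hi2
      rw [show (s(v1,u1) : Sym2 (Fin (2*n-2))) = s(u1,v1) from Sym2.eq_swap] at R2
      exact hd1 (R2.symm.trans R1)
  · have hadj2' : (T.adj.deleteEdges {s(u1,v1)}).Adj u2 v2 := by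
      rw [SimpleGraph.deleteEdges_adj]
      exact ⟨hadj2, by simpa using (Ne.symm he)⟩
    have hadj1' : (T.adj.deleteEdges {s(u2,v2)}).Adj u1 v1 := by
      rw [SimpleGraph.deleteEdges_adj]
      exact ⟨hadj1, by simpa using he⟩
    rcases del_cover T.connected u1 v1 u2 with hc1 | hc1 <;>
      [(have hv2 : (T.adj.deleteEdges {s(u1,v1)}).Reachable v2 u1 :=
          hadj2'.symm.reachable.trans hc1);
       (have hv2 : (T.adj.deleteEdges {s(u1,v1)}).Reachable v2 v1 :=
          hadj2'.symm.reachable.trans hc1)] <;>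
    rcases del_cover T.connected u2 v2 u1 with hc2 | hc2 <;>
      [(have hv1 : (T.adj.deleteEdges {s(u2,v2)}).Reachable v1 u2 :=
          hadj1'.symm.reachable.trans hc2);
       (have hv1 : (T.adj.deleteEdges {s(u2,v2)}).Reachable v1 v2 :=
          hadj1'.symm.reachable.trans hc2);
       (have hv1 : (T.adj.deleteEdges {s(u2,v2)}).Reachable v1 u2 :=
          hadj1'.symm.reachable.trans hc2);
       (have hv1 : (T.adj.deleteEdges {s(u2,v2)}).Reachable v1 v2 :=
          hadj1'.symm.reachable.trans hc2)]
    -- branch 1: x1=u1,y1=v1, x2=u2,y2=v2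
    · exact empty_to_compat ⟨g1 v1, g2 v2,
        branch_empty T rfl (fun i => (hcls1 i).2) (fun i => (hcls2 i).2)
          hd1 hd2 hc1 hv2 hv1⟩
    -- branch 2: x1=u1,y1=v1, x2=v2,y2=u2
    · exact empty_to_compat ⟨g1 v1, g2 u2,
        branch_empty T Sym2.eq_swap (fun i => (hcls1 i).2) (fun i => (hcls2 i).1)
          hd1 (fun h => hd2 h.symm) hv2 hc1 hv1⟩
    -- branch 3: x1=v1,y1=u1, x2=u2,y2=v2
    · exact empty_to_compat ⟨g1 u1, g2 v2,
        branch_empty T rfl (fun i => (hcls1 i).1) (fun i => (hcls2 i).2)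
          (fun h => hd1 h.symm) hd2 hc1 hv2 hc2⟩
    -- branch 4: x1=v1,y1=u1, x2=v2,y2=u2
    · exact empty_to_compat ⟨g1 u1, g2 u2,
        branch_empty T Sym2.eq_swap (fun i => (hcls1 i).1) (fun i => (hcls2 i).1)
          (fun h => hd1 h.symm) (fun h => hd2 h.symm) hv2 hc1 hc2⟩

end Compat

section Upper
variable {n : ℕ}

def catT (hn : 2 ≤ n) (σ : Equiv.Perm (Fin n)) : PhyloTree n where
  adj := catG n
  connected := catG_connected hn
  acyclic := catG_acyclic hn
  degOneOrThree := catG_deg13 hn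
  leaf := fun i => lmap hn (σ i)
  leaf_inj := fun i j h => σ.injective (lmap_inj hn h)
  leaf_range := fun v => by
    rw [catG_leafrange hn v]
    constructor
    · rintro ⟨i, hi⟩
      exact ⟨σ.symm i, by simpa using hi⟩
    · rintro ⟨i, hi⟩
      exact ⟨σ i, hi⟩

def gext (hn : 2 ≤ n) (h : ℕ → Bool) : Fin (2*n-2) → Bool :=
  fun v => if (v:ℕ) < n - 2 then h (↑v + 1) else h (↑v - (n-2))

lemma gext_leaf (hn : 2 ≤ n) (h : ℕ → Bool) (j : Fin n) :
    gext hn h (lmap hn j) = h ↑j := by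
  have : ((lmap hn j : Fin (2*n-2)) : ℕ) = n-2+↑j := rfl
  rw [gext]
  simp only [this]
  rw [if_neg (by omega)]
  congr 1
  omega

def bedge (hn : 2 ≤ n) (k : ℕ) : Sym2 (Fin (2*n-2)) :=
  if k = 0 then s(vtx hn (n-2), vtx hn (if n = 2 then 1 else 0))
  else if k ≤ n-3 then s(vtx hn (k-1), vtx hn k)
  else s(vtx hn (n-3), vtx hn (2*n-3))

lemma changing_half (hn : 2 ≤ n) (h : ℕ → Bool) {u v : Fin (2*n-2)}
    (hpar : par n ↑v = ↑u) (hne : gext hn h u ≠ gext hn h v) :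
    s(u, v) ∈ bedge hn '' {k | k < n - 1 ∧ h k ≠ h (k+1)} := by
  have hv2 := v.2
  have hu2 := u.2
  have hb1 : 1 ≤ (v:ℕ) := by
    by_contra hb
    apply hne
    have hv0 : (v:ℕ) = 0 := by omega
    have : (u:ℕ) = 0 := by rw [← hpar, hv0]; simp [par]
    have huv : u = v := Fin.ext (by omega)
    rw [huv]
  rcases eq_or_lt_of_le hn with h2 | h3
  · -- n = 2
    have hb : (v:ℕ) = 1 := by omega
    have hu0 : (u:ℕ) = 0 := by rw [← hpar, hb]; simp [par]
    refine ⟨0, ⟨by omega, ?_⟩, ?_⟩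
    · have e1 : gext hn h u = h 0 := by
        rw [gext, if_neg (by omega), hu0]; congr 1; omega
      have e2 : gext hn h v = h 1 := by
        rw [gext, if_neg (by omega), hb]; congr 1; omega
      rw [e1, e2] at hne
      exact hne
    · rw [bedge, if_pos rfl, if_pos (by omega)]
      rw [Sym2.eq_iff]
      left
      constructor <;> apply Fin.ext <;> rw [vtx_val hn (by omega)] <;> omega
  · -- n ≥ 3
    by_cases hb3 : (v:ℕ) ≤ n-3
    · -- internal edge, boundary k = ↑v
      have hu : (u:ℕ) = ↑v - 1 := by rw [← hpar]; unfold par; split_ifs <;> omega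
      have e1 : gext hn h u = h ↑v := by
        rw [gext, if_pos (by omega), hu]; congr 1; omega
      have e2 : gext hn h v = h (↑v + 1) := by rw [gext, if_pos (by omega)]
      refine ⟨↑v, ⟨by omega, by rw [e1, e2] at hne; exact hne⟩, ?_⟩
      rw [bedge, if_neg (by omega), if_pos hb3, Sym2.eq_iff]
      left
      constructor <;> apply Fin.ext <;> rw [vtx_val hn (by omega)] <;> omega
    · by_cases hbn2 : (v:ℕ) = n-2
      · have hu : (u:ℕ) = 0 := by rw [← hpar]; unfold par; split_ifs <;> omega
        have e1 : gext hn h u = h 1 := by rw [gext, if_pos (by omega), hu]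
        have e2 : gext hn h v = h 0 := by rw [gext, if_neg (by omega), hbn2]; congr 1; omega
        refine ⟨0, ⟨by omega, by rw [e1, e2] at hne; exact Ne.symm hne⟩, ?_⟩
        rw [bedge, if_pos rfl, if_neg (by omega), Sym2.eq_iff]
        right
        constructor <;> apply Fin.ext <;> rw [vtx_val hn (by omega)] <;> omega
      · by_cases hbn1 : (v:ℕ) = n-1
        · exfalso
          have hu : (u:ℕ) = 0 := by rw [← hpar]; unfold par; split_ifs <;> omega
          apply hne
          rw [gext, gext, if_pos (by omega : (u:ℕ) < n-2), if_neg (by omega), hu, hbn1]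
          congr 1
          omega
        · by_cases hmid : (v:ℕ) ≤ 2*n-4
          · exfalso
            have hu : (u:ℕ) = ↑v - n + 1 := by rw [← hpar]; unfold par; split_ifs <;> omega
            apply hne
            rw [gext, gext, if_pos (by omega : (u:ℕ) < n-2), if_neg (by omega), hu]
            congr 1
            omega
          · -- v = 2n-3, boundary k = n-2
            have hbv : (v:ℕ) = 2*n-3 := by omega
            have hu : (u:ℕ) = n-3 := by rw [← hpar]; unfold par; split_ifs <;> omega
            have e1 : gext hn h u = h (n-2) := by
              rw [gext, if_pos (by omega), hu]; congr 1; omega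
            have e2 : gext hn h v = h (n-1) := by
              rw [gext, if_neg (by omega), hbv]; congr 1; omega
            refine ⟨n-2, ⟨by omega, ?_⟩, ?_⟩
            · rw [e1, e2] at hne
              have : n - 2 + 1 = n - 1 := by omega
              rw [this]
              exact hne
            · rw [bedge, if_neg (by omega), if_neg (by omega), Sym2.eq_iff]
              left
              constructor <;> apply Fin.ext <;> rw [vtx_val hn (by omega)] <;> omega

lemma changing_le (hn : 2 ≤ n) (h : ℕ → Bool) (σ : Equiv.Perm (Fin n)) :
    changingNumber (catT hn σ) (gext hn h) ≤ ({k | k < n - 1 ∧ h k ≠ h (k+1)} : Set ℕ).ncard := by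
  have hBfin : ({k | k < n - 1 ∧ h k ≠ h (k+1)} : Set ℕ).Finite :=
    (Set.finite_Iio (n-1)).subset (fun k hk => hk.1)
  refine le_trans (Set.ncard_le_ncard (t := bedge hn '' {k | k < n - 1 ∧ h k ≠ h (k+1)}) ?_
    (hBfin.image _)) (Set.ncard_image_le hBfin)
  rintro e ⟨hee, u, v, rfl, hne⟩
  have hadj : (catG n).Adj u v := (catG n).mem_edgeSet.1 hee
  rcases hadj.2 with hp | hp
  · rw [Sym2.eq_swap]
    exact changing_half hn h hp (Ne.symm hne)
  · exact changing_half hn h hp hne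

lemma ps_le_boundary (hn : 2 ≤ n) (f : Fin n → Bool) (σ : Equiv.Perm (Fin n))
    (h : ℕ → Bool) (hh : ∀ i : Fin n, h ↑(σ i) = f i) :
    ps f (catT hn σ) ≤ ({k | k < n - 1 ∧ h k ≠ h (k+1)} : Set ℕ).ncard := by
  refine le_trans (ps_le (catT hn σ) (g := gext hn h) ?_) (changing_le hn h σ)
  intro i
  show gext hn h (lmap hn (σ i)) = f i
  rw [gext_leaf]
  exact hh i

end Upper

section Count
variable {n : ℕ}

noncomputable def wseq (key : Fin n → ℕ) : ℕ → ℕ :=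
  fun k => if hk : k < n then key (Tuple.sort key ⟨k, hk⟩) else 0

noncomputable def hof (f : Fin n → Bool) (σp : Equiv.Perm (Fin n)) : ℕ → Bool :=
  fun k => if hk : k < n then f (σp ⟨k, hk⟩) else false

lemma hof_perm (f : Fin n → Bool) (σp : Equiv.Perm (Fin n)) (i : Fin n) :
    hof f σp ↑(σp.symm i) = f i := by
  rw [hof, dif_pos (σp.symm i).2]
  congr 1
  rw [Fin.eta]
  exact σp.apply_symm_apply i

lemma wseq_mono (key : Fin n → ℕ) {k k' : ℕ} (hk : k ≤ k') (hk' : k' < n) :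
    wseq key k ≤ wseq key k' := by
  have h1 : k < n := lt_of_le_of_lt hk hk'
  rw [wseq, wseq, dif_pos h1, dif_pos hk']
  exact Tuple.monotone_sort key (show (⟨k, h1⟩ : Fin n) ≤ ⟨k', hk'⟩ from hk)

lemma hof_wseq (f : Fin n → Bool) (key : Fin n → ℕ) (P : ℕ → Bool)
    (hrel : ∀ i, f i = P (key i)) {k : ℕ} (hk : k < n) :
    hof f (Tuple.sort key) k = P (wseq key k) := by
  rw [hof, wseq, dif_pos hk, dif_pos hk]
  exact hrel _

lemma bnd_subsingleton (w : ℕ → ℕ) (hw : ∀ k k', k ≤ k' → k' < n → w k ≤ w k')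
    (S : Set ℕ) (a : ℕ) (hS : ∀ k ∈ S, k + 1 < n ∧ w k ≤ a ∧ a < w (k+1)) :
    ∀ x ∈ S, ∀ y ∈ S, x = y := by
  intro x hx y hy
  by_contra hxy
  rcases Ne.lt_or_gt hxy with hlt | hlt
  · obtain ⟨h1, h2, h3⟩ := hS x hx
    obtain ⟨h1', h2', h3'⟩ := hS y hy
    have := hw (x+1) y (by omega) (by omega)
    omega
  · obtain ⟨h1, h2, h3⟩ := hS x hx
    obtain ⟨h1', h2', h3'⟩ := hS y hy
    have := hw (y+1) x (by omega) (by omega)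
    omega

lemma Bfin (h : ℕ → Bool) : ({k | k < n - 1 ∧ h k ≠ h (k+1)} : Set ℕ).Finite :=
  (Set.finite_Iio (n-1)).subset (fun k hk => hk.1)

lemma B_le_one (key : Fin n → ℕ) (f : Fin n → Bool) (P : ℕ → Bool) (t : ℕ) (ht : 1 ≤ t)
    (hrel : ∀ i, f i = P (key i))
    (hP1 : ∀ m m', m < t → m' < t → P m = P m')
    (hP2 : ∀ m m', t ≤ m → t ≤ m' → P m = P m') :
    ({k | k < n - 1 ∧ hof f (Tuple.sort key) k ≠ hof f (Tuple.sort key) (k+1)} : Set ℕ).ncard ≤ 1 := by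
  rw [Set.ncard_le_one (Bfin _)]
  refine bnd_subsingleton (wseq key) (fun k k' h1 h2 => wseq_mono key h1 h2) _ (t-1) ?_
  rintro k ⟨hk, hne⟩
  have hkn : k < n := by omega
  have hkn1 : k + 1 < n := by omega
  rw [hof_wseq f key P hrel hkn, hof_wseq f key P hrel hkn1] at hne
  have hmono := wseq_mono key (show k ≤ k+1 by omega) hkn1
  refine ⟨hkn1, ?_, ?_⟩
  · by_contra hc
    exact hne (hP2 _ _ (by omega) (by omega))
  · by_contra hc
    exact hne (hP1 _ _ (by omega) (by omega))

lemma B_le_two (key : Fin n → ℕ) (f : Fin n → Bool)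
    (hrel : ∀ i, f i = decide (1 ≤ key i ∧ key i ≤ 2)) (hkey : ∀ i, key i ≤ 3) :
    ({k | k < n - 1 ∧ hof f (Tuple.sort key) k ≠ hof f (Tuple.sort key) (k+1)} : Set ℕ).ncard ≤ 2 := by
  set P : ℕ → Bool := fun m => decide (1 ≤ m ∧ m ≤ 2) with hP
  set w := wseq key with hw
  have hwle : ∀ k, w k ≤ 3 := by
    intro k
    rw [hw, wseq]
    split
    · exact hkey _
    · omega
  set B := ({k | k < n - 1 ∧ hof f (Tuple.sort key) k ≠ hof f (Tuple.sort key) (k+1)} : Set ℕ)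
    with hB
  have hmem : ∀ k ∈ B, k + 1 < n ∧ P (w k) ≠ P (w (k+1)) ∧ w k ≤ w (k+1) := by
    rintro k ⟨hk, hne⟩
    have hkn : k < n := by omega
    have hkn1 : k + 1 < n := by omega
    rw [hof_wseq f key P hrel hkn, hof_wseq f key P hrel hkn1] at hne
    exact ⟨hkn1, hne, wseq_mono key (by omega) hkn1⟩
  have hsub : B ⊆ {k ∈ B | w k = 0} ∪ {k ∈ B | w (k+1) = 3} := by
    intro k hk
    obtain ⟨hkn1, hne, hmono⟩ := hmem k hk
    rcases Nat.eq_zero_or_pos (w k) with h0 | h1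
    · exact Or.inl ⟨hk, h0⟩
    · right
      refine ⟨hk, ?_⟩
      have h3 := hwle k
      have h3' := hwle (k+1)
      rcases Nat.lt_or_ge (w k) 3 with hlt | hge
      · -- 1 ≤ w k ≤ 2, P (w k) = true, so P (w (k+1)) = false, w(k+1) ≥ w k ≥ 1 so = 3
        have hPk : P (w k) = true := by rw [hP]; simp; omega
        have hPk1 : P (w (k+1)) = false := by
          cases hq : P (w (k+1))
          · rfl
          · exfalso; exact hne (by rw [hPk, hq])
        rw [hP] at hPk1
        simp at hPk1
        omega
      · exfalso
        have hwk : w k = 3 := by omega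
        have hwk1 : w (k+1) = 3 := by omega
        exact hne (by rw [hwk, hwk1])
  have hB0 : {k ∈ B | w k = 0}.ncard ≤ 1 := by
    rw [Set.ncard_le_one ((Bfin (n:=n) (hof f (Tuple.sort key))).subset (fun k hk => hk.1))]
    refine bnd_subsingleton w (fun k k' h1 h2 => wseq_mono key h1 h2) _ 0 ?_
    rintro k ⟨hkB, hk0⟩
    obtain ⟨hkn1, hne, hmono⟩ := hmem k hkB
    refine ⟨hkn1, by omega, ?_⟩
    by_contra hc
    exact hne (by rw [hk0, show w (k+1) = 0 by omega])
  have hB3 : {k ∈ B | w (k+1) = 3}.ncard ≤ 1 := by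
    rw [Set.ncard_le_one ((Bfin (n:=n) (hof f (Tuple.sort key))).subset (fun k hk => hk.1))]
    refine bnd_subsingleton w (fun k k' h1 h2 => wseq_mono key h1 h2) _ 2 ?_
    rintro k ⟨hkB, hk3⟩
    obtain ⟨hkn1, hne, hmono⟩ := hmem k hkB
    refine ⟨hkn1, ?_, by omega⟩
    have := hwle k
    by_contra hc
    exact hne (by rw [show w k = 3 by omega, hk3])
  calc B.ncard ≤ ({k ∈ B | w k = 0} ∪ {k ∈ B | w (k+1) = 3}).ncard :=
        Set.ncard_le_ncard hsub
          (((Bfin (n:=n) (hof f (Tuple.sort key))).subset (fun k hk => hk.1)).union ((Bfin (n:=n) (hof f (Tuple.sort key))).subset (fun k hk => hk.1)))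
    _ ≤ {k ∈ B | w k = 0}.ncard + {k ∈ B | w (k+1) = 3}.ncard := Set.ncard_union_le _ _
    _ ≤ 2 := by omega

end Count

section Final
variable {n : ℕ}

lemma ps_const (T : PhyloTree n) {f : Fin n → Bool} {b : Bool} (hf : ∀ i, f i = b) :
    ps f T = 0 := by
  refine Nat.eq_zero_of_le_zero (le_trans (ps_le T (g := fun _ => b) (fun i => (hf i).symm)) ?_)
  rw [changingNumber]
  have : {e : Sym2 (Fin (2 * n - 2)) | e ∈ T.adj.edgeSet ∧
      ∃ u v, e = s(u, v) ∧ (fun _ => b) u ≠ (fun _ => b) v} = ∅ := by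
    rw [Set.eq_empty_iff_forall_notMem]
    rintro e ⟨he, u, v, rfl, hne⟩
    exact hne rfl
  rw [this, Set.ncard_empty]

lemma case_ii_aux (hn : 2 ≤ n) (f₁ f₂ : Fin n → Bool)
    (h1 : ∃ b, ∀ i, f₁ i = b) (h2 : ¬∃ b, ∀ i, f₂ i = b) :
    sInf {m | ∃ T : PhyloTree n, ps f₁ T + ps f₂ T = m} = 1 := by
  obtain ⟨b₀, hb₀⟩ := h1
  set key : Fin n → ℕ := fun i => if f₂ i then 1 else 0 with hkey
  set σp := Tuple.sort key with hσp
  set T := catT hn σp.symm with hT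
  have hps2 : ps f₂ T ≤ 1 := by
    refine le_trans (ps_le_boundary hn f₂ σp.symm (hof f₂ σp) (fun i => hof_perm f₂ σp i)) ?_
    refine B_le_one key f₂ (fun m => decide (1 ≤ m)) 1 le_rfl ?_ ?_ ?_
    · intro i
      by_cases hc : f₂ i <;> simp [hkey, hc]
    · intro m m' hm hm'
      simp only [decide_eq_decide]
      omega
    · intro m m' hm hm'
      simp only [decide_eq_decide]
      omega
  have hps1 : ps f₁ T = 0 := ps_const T hb₀
  have hmem : ps f₁ T + ps f₂ T ∈ {m | ∃ T : PhyloTree n, ps f₁ T + ps f₂ T = m} := ⟨T, rfl⟩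
  refine le_antisymm (le_trans (Nat.sInf_le hmem) (by omega)) ?_
  refine le_csInf ⟨_, hmem⟩ ?_
  rintro m ⟨T', rfl⟩
  have := one_le_ps T' hn h2
  omega

lemma sum_comm_set (f₁ f₂ : Fin n → Bool) :
    {m | ∃ T : PhyloTree n, ps f₁ T + ps f₂ T = m}
      = {m | ∃ T : PhyloTree n, ps f₂ T + ps f₁ T = m} := by
  ext m
  constructor <;> rintro ⟨T, rfl⟩ <;> exact ⟨T, by omega⟩

lemma case_iii_aux (hn : 2 ≤ n) (f₁ f₂ : Fin n → Bool)
    (h1 : ¬∃ b, ∀ i, f₁ i = b) (h2 : ¬∃ b, ∀ i, f₂ i = b)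
    (hcomp : CharCompatible f₁ f₂) :
    sInf {m | ∃ T : PhyloTree n, ps f₁ T + ps f₂ T = m} = 2 := by
  obtain ⟨a, b, hab⟩ : ∃ a b, {i | f₁ i = a} ∩ {i | f₂ i = b} = ∅ := by
    rcases hcomp with h | h | h | h
    exacts [⟨false, false, h⟩, ⟨false, true, h⟩, ⟨true, false, h⟩, ⟨true, true, h⟩]
  have hab' : ∀ i, ¬(f₁ i = a ∧ f₂ i = b) := by
    intro i hi
    exact Set.eq_empty_iff_forall_notMem.1 hab i ⟨hi.1, hi.2⟩
  set key : Fin n → ℕ := fun i => if f₁ i = a then 2 else if f₂ i = b then 0 else 1 with hkey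
  set σp := Tuple.sort key with hσp
  set T := catT hn σp.symm with hT
  have hps1 : ps f₁ T ≤ 1 := by
    refine le_trans (ps_le_boundary hn f₁ σp.symm (hof f₁ σp) (fun i => hof_perm f₁ σp i)) ?_
    refine B_le_one key f₁ (fun m => if 2 ≤ m then a else !a) 2 (by omega) ?_ ?_ ?_
    · intro i
      by_cases hc : f₁ i = a
      · simp [hkey, hc]
      · have : f₁ i = !a := by
          cases ha : a <;> cases hf : f₁ i <;> simp_all
        rw [this, hkey]
        simp only [if_neg hc]
        by_cases hc2 : f₂ i = b <;> simp [hc2]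
    · intro m m' hm hm'
      show (if _ then _ else _) = (if _ then _ else _)
      rw [if_neg (by omega), if_neg (by omega)]
    · intro m m' hm hm'
      show (if _ then _ else _) = (if _ then _ else _)
      rw [if_pos hm, if_pos hm']
  have hps2 : ps f₂ T ≤ 1 := by
    refine le_trans (ps_le_boundary hn f₂ σp.symm (hof f₂ σp) (fun i => hof_perm f₂ σp i)) ?_
    refine B_le_one key f₂ (fun m => if 1 ≤ m then !b else b) 1 le_rfl ?_ ?_ ?_
    · intro i
      by_cases hc : f₁ i = a
      · have : f₂ i = !b := by
          have := hab' i
          cases hb : b <;> cases hf : f₂ i <;> simp_all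
        rw [this, hkey]
        simp [hc]
      · by_cases hc2 : f₂ i = b
        · rw [hc2, hkey]
          simp [hc, hc2]
        · have : f₂ i = !b := by
            cases hb : b <;> cases hf : f₂ i <;> simp_all
          rw [this, hkey]
          simp [hc, hc2]
    · intro m m' hm hm'
      show (if _ then _ else _) = (if _ then _ else _)
      rw [if_neg (by omega), if_neg (by omega)]
    · intro m m' hm hm'
      show (if _ then _ else _) = (if _ then _ else _)
      rw [if_pos hm, if_pos hm']
  have hmem : ps f₁ T + ps f₂ T ∈ {m | ∃ T : PhyloTree n, ps f₁ T + ps f₂ T = m} := ⟨T, rfl⟩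
  refine le_antisymm (le_trans (Nat.sInf_le hmem) (by omega)) ?_
  refine le_csInf ⟨_, hmem⟩ ?_
  rintro m ⟨T', rfl⟩
  have g1 := one_le_ps T' hn h1
  have g2 := one_le_ps T' hn h2
  omega

lemma case_iv_aux (hn : 2 ≤ n) (f₁ f₂ : Fin n → Bool)
    (h1 : ¬∃ b, ∀ i, f₁ i = b) (h2 : ¬∃ b, ∀ i, f₂ i = b)
    (hcomp : ¬CharCompatible f₁ f₂) :
    sInf {m | ∃ T : PhyloTree n, ps f₁ T + ps f₂ T = m} = 3 := by
  set key : Fin n → ℕ := fun i =>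
    if f₁ i then (if f₂ i then 2 else 3) else (if f₂ i then 1 else 0) with hkey
  set σp := Tuple.sort key with hσp
  set T := catT hn σp.symm with hT
  have hps1 : ps f₁ T ≤ 1 := by
    refine le_trans (ps_le_boundary hn f₁ σp.symm (hof f₁ σp) (fun i => hof_perm f₁ σp i)) ?_
    refine B_le_one key f₁ (fun m => decide (2 ≤ m)) 2 (by omega) ?_ ?_ ?_
    · intro i
      cases hc1 : f₁ i <;> cases hc2 : f₂ i <;> simp [hkey, hc1, hc2]
    · intro m m' hm hm'
      simp only [decide_eq_decide]
      omega
    · intro m m' hm hm'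
      simp only [decide_eq_decide]
      omega
  have hps2 : ps f₂ T ≤ 2 := by
    refine le_trans (ps_le_boundary hn f₂ σp.symm (hof f₂ σp) (fun i => hof_perm f₂ σp i)) ?_
    refine B_le_two key f₂ ?_ ?_
    · intro i
      cases hc1 : f₁ i <;> cases hc2 : f₂ i <;> simp [hkey, hc1, hc2]
    · intro i
      cases hc1 : f₁ i <;> cases hc2 : f₂ i <;> simp [hkey, hc1, hc2]
  have hmem : ps f₁ T + ps f₂ T ∈ {m | ∃ T : PhyloTree n, ps f₁ T + ps f₂ T = m} := ⟨T, rfl⟩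
  refine le_antisymm (le_trans (Nat.sInf_le hmem) (by omega)) ?_
  refine le_csInf ⟨_, hmem⟩ ?_
  rintro m ⟨T', rfl⟩
  have g1 := one_le_ps T' hn h1
  have g2 := one_le_ps T' hn h2
  by_contra hlt
  push_neg at hlt
  have e1 : ps f₁ T' = 1 := by omega
  have e2 : ps f₂ T' = 1 := by omega
  exact hcomp (compat_of_ps_one T' e1 e2)

end Final
end S13

/-- The minimum, over all binary phylogenetic trees T on {1,…,n}, of the total
parsimony score of a pair of characters is: 0 if both are constant; 1 if exactly
one is constant; 2 if both are non-constant and compatible with each other;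
3 if both are non-constant and incompatible with each other. -/
theorem stmt13 (n : ℕ) (hn : 2 ≤ n) (f₁ f₂ : Fin n → Bool) :
    (((∃ b, ∀ i, f₁ i = b) ∧ (∃ b, ∀ i, f₂ i = b)) →
      sInf {m | ∃ T : PhyloTree n, ps f₁ T + ps f₂ T = m} = 0) ∧
    (((∃ b, ∀ i, f₁ i = b) ∧ ¬ (∃ b, ∀ i, f₂ i = b) ∨
        ¬ (∃ b, ∀ i, f₁ i = b) ∧ (∃ b, ∀ i, f₂ i = b)) →
      sInf {m | ∃ T : PhyloTree n, ps f₁ T + ps f₂ T = m} = 1) ∧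
    ((¬ (∃ b, ∀ i, f₁ i = b) ∧ ¬ (∃ b, ∀ i, f₂ i = b) ∧ CharCompatible f₁ f₂) →
      sInf {m | ∃ T : PhyloTree n, ps f₁ T + ps f₂ T = m} = 2) ∧
    ((¬ (∃ b, ∀ i, f₁ i = b) ∧ ¬ (∃ b, ∀ i, f₂ i = b) ∧ ¬ CharCompatible f₁ f₂) →
      sInf {m | ∃ T : PhyloTree n, ps f₁ T + ps f₂ T = m} = 3) := by
  refine ⟨?_, ?_, ?_, ?_⟩
  · rintro ⟨⟨b₁, hb₁⟩, ⟨b₂, hb₂⟩⟩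
    have hmem : (0 : ℕ) ∈ {m | ∃ T : PhyloTree n, ps f₁ T + ps f₂ T = m} := by
      refine ⟨S13.catT hn 1, ?_⟩
      rw [S13.ps_const _ hb₁, S13.ps_const _ hb₂]
    exact Nat.sInf_eq_zero.2 (Or.inl hmem)
  · rintro (⟨h1, h2⟩ | ⟨h1, h2⟩)
    · exact S13.case_ii_aux hn f₁ f₂ h1 h2
    · rw [S13.sum_comm_set f₁ f₂]
      exact S13.case_ii_aux hn f₂ f₁ h2 h1
  · rintro ⟨h1, h2, hcomp⟩
    exact S13.case_iii_aux hn f₁ f₂ h1 h2 hcomp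
  · rintro ⟨h1, h2, hcomp⟩
    exact S13.case_iv_aux hn f₁ f₂ h1 h2 hcomp
end

section
/- Let T be a binary phylogenetic tree on leaf set {1,…,6} of symmetric shape (some vertex of T has all three of its neighbors of degree 3). Then the number of ordered pairs (f_1, f_2) of characters with f_1(1) = 0, f_2(1) = 0, ps(f_1,T) = 1, ps(f_2,T) = 2, and f_1 not compatible with f_2 equals 30. -/
open Classical

open SimpleGraph

variable {V : Type*} {G : SimpleGraph V}

lemma no_tri (hcyc : G.IsAcyclic) {a b c : V} (hab : G.Adj a b) (hbc : G.Adj b c)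
    (hac' : G.Adj a c) : False := by
  rw [isAcyclic_iff_path_unique] at hcyc
  have := hcyc (Path.singleton hac')
    ⟨Walk.cons hab (Walk.cons hbc Walk.nil), by
      simp [Walk.isPath_def, hab.ne, hbc.ne, hac'.ne]⟩
  have h1 := congrArg (fun q : G.Path a c => q.1.support) this
  simp [Path.singleton] at h1

lemma no_common (hcyc : G.IsAcyclic) {a b u w : V} (hab : a ≠ b) (huw : u ≠ w)
    (hau : G.Adj a u) (haw : G.Adj a w) (hbu : G.Adj b u) (hbw : G.Adj b w) : False := by
  rw [isAcyclic_iff_path_unique] at hcyc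
  have := hcyc
    (⟨Walk.cons hau.symm (Walk.cons haw Walk.nil), by
      simp [Walk.isPath_def, hau.ne', haw.ne, huw]⟩ : G.Path u w)
    ⟨Walk.cons hbu.symm (Walk.cons hbw Walk.nil), by
      simp [Walk.isPath_def, hbu.ne', hbw.ne, huw]⟩
  have h1 := congrArg (fun q : G.Path u w => q.1.support) this
  simp [hab] at h1

def SRel {α : Type*} (c x y z l1 l2 l3 l4 l5 l6 a b : α) : Prop :=
  (a = c ∧ b = x) ∨ (a = x ∧ b = c) ∨
  (a = c ∧ b = y) ∨ (a = y ∧ b = c) ∨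
  (a = c ∧ b = z) ∨ (a = z ∧ b = c) ∨
  (a = x ∧ b = l1) ∨ (a = l1 ∧ b = x) ∨
  (a = x ∧ b = l2) ∨ (a = l2 ∧ b = x) ∨
  (a = y ∧ b = l3) ∨ (a = l3 ∧ b = y) ∨
  (a = y ∧ b = l4) ∨ (a = l4 ∧ b = y) ∨
  (a = z ∧ b = l5) ∨ (a = l5 ∧ b = z) ∨
  (a = z ∧ b = l6) ∨ (a = l6 ∧ b = z)

def TenDistinct {α : Type*} (a0 a1 a2 a3 a4 a5 a6 a7 a8 a9 : α) : Prop :=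
  a0 ≠ a1 ∧ a0 ≠ a2 ∧ a0 ≠ a3 ∧ a0 ≠ a4 ∧ a0 ≠ a5 ∧ a0 ≠ a6 ∧ a0 ≠ a7 ∧ a0 ≠ a8 ∧ a0 ≠ a9 ∧ a1 ≠ a2 ∧ a1 ≠ a3 ∧ a1 ≠ a4 ∧ a1 ≠ a5 ∧ a1 ≠ a6 ∧ a1 ≠ a7 ∧ a1 ≠ a8 ∧ a1 ≠ a9 ∧ a2 ≠ a3 ∧ a2 ≠ a4 ∧ a2 ≠ a5 ∧ a2 ≠ a6 ∧ a2 ≠ a7 ∧ a2 ≠ a8 ∧ a2 ≠ a9 ∧ a3 ≠ a4 ∧ a3 ≠ a5 ∧ a3 ≠ a6 ∧ a3 ≠ a7 ∧ a3 ≠ a8 ∧ a3 ≠ a9 ∧ a4 ≠ a5 ∧ a4 ≠ a6 ∧ a4 ≠ a7 ∧ a4 ≠ a8 ∧ a4 ≠ a9 ∧ a5 ≠ a6 ∧ a5 ≠ a7 ∧ a5 ≠ a8 ∧ a5 ≠ a9 ∧ a6 ≠ a7 ∧ a6 ≠ a8 ∧ a6 ≠ a9 ∧ a7 ≠ a8 ∧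 a7 ≠ a9 ∧ a8 ≠ a9

set_option maxHeartbeats 1000000 in
lemma tree_structure (T : PhyloTree 6) (h : IsSymmetricShape T) :
    ∃ (c x y z : Fin (2*6-2)) (L : Fin 6 → Fin (2*6-2)) (p : Fin 6 → Fin 6),
      Function.Bijective p ∧ (∀ k, T.leaf (p k) = L k) ∧
      TenDistinct c x y z (L 0) (L 1) (L 2) (L 3) (L 4) (L 5) ∧
      ∀ a b, T.adj.Adj a b ↔ SRel c x y z (L 0) (L 1) (L 2) (L 3) (L 4) (L 5) a b := by
  obtain ⟨c, hc3, hcnb⟩ := h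
  have hdeg : ∀ v, (T.adj.neighborSet v).ncard = T.adj.degree v := fun v => by
    rw [Set.ncard_eq_toFinset_card']; rfl
  -- counting: exactly 4 vertices of degree 3
  have htree : T.adj.IsTree := ⟨T.connected, T.acyclic⟩
  have hedges : T.adj.edgeFinset.card = 9 := by
    have := htree.card_edgeFinset
    simp only [Fintype.card_fin] at this
    omega
  have hsum : ∑ v, T.adj.degree v = 18 := by
    rw [SimpleGraph.sum_degrees_eq_twice_card_edges, hedges]
  have hdor : ∀ v, T.adj.degree v = 1 ∨ T.adj.degree v = 3 := fun v => by
    rw [← hdeg]; exact T.degOneOrThree v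
  set S : Finset (Fin (2*6-2)) := Finset.univ.filter (fun v => T.adj.degree v = 3) with hSdef
  have hScard : S.card = 4 := by
    have h1 : ∑ v, T.adj.degree v = 2 * S.card + 10 := by
      have : ∀ v : Fin (2*6-2), T.adj.degree v = 2 * (if T.adj.degree v = 3 then 1 else 0) + 1 := by
        intro v; rcases hdor v with h | h <;> simp [h]
      rw [Finset.sum_congr rfl (fun v _ => this v)]
      rw [Finset.sum_add_distrib, ← Finset.mul_sum, Finset.sum_boole, hSdef]
      simp
    omega
  -- the three neighbors of c
  obtain ⟨x, y, z, hxy, hxz, hyz, hset⟩ := Set.ncard_eq_three.mp hc3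
  have hxm : x ∈ T.adj.neighborSet c := by rw [hset]; simp
  have hym : y ∈ T.adj.neighborSet c := by rw [hset]; simp
  have hzm : z ∈ T.adj.neighborSet c := by rw [hset]; simp
  have hcx : T.adj.Adj c x := hxm
  have hcy : T.adj.Adj c y := hym
  have hcz : T.adj.Adj c z := hzm
  have hx3 : (T.adj.neighborSet x).ncard = 3 := hcnb x hxm
  have hy3 : (T.adj.neighborSet y).ncard = 3 := hcnb y hym
  have hz3 : (T.adj.neighborSet z).ncard = 3 := hcnb z hzm
  -- degree-1 vertices are those ≠ c,x,y,z
  have hsub : ({c, x, y, z} : Finset (Fin (2*6-2))) ⊆ S := by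
    intro v hv
    simp only [Finset.mem_insert, Finset.mem_singleton] at hv
    simp only [hSdef, Finset.mem_filter, Finset.mem_univ, true_and]
    rcases hv with rfl | rfl | rfl | rfl
    · rw [← hdeg]; exact hc3
    · rw [← hdeg]; exact hx3
    · rw [← hdeg]; exact hy3
    · rw [← hdeg]; exact hz3
  have hc4 : ({c, x, y, z} : Finset (Fin (2*6-2))).card = 4 := by
    rw [Finset.card_insert_of_notMem (by simp [hcx.ne, hcy.ne, hcz.ne]),
      Finset.card_insert_of_notMem (by simp [hxy, hxz]),
      Finset.card_insert_of_notMem (by simp [hyz]), Finset.card_singleton]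
  have hSeq : ({c, x, y, z} : Finset (Fin (2*6-2))) = S :=
    Finset.eq_of_subset_of_card_le hsub (by omega)
  have hdeg1 : ∀ v, v ≠ c → v ≠ x → v ≠ y → v ≠ z → (T.adj.neighborSet v).ncard = 1 := by
    intro v h1 h2 h3 h4
    rcases T.degOneOrThree v with h | h
    · exact h
    · exfalso
      have : v ∈ S := by
        simp only [hSdef, Finset.mem_filter, Finset.mem_univ, true_and, ← hdeg]; exact h
      rw [← hSeq] at this
      simp [h1, h2, h3, h4] at this
  -- cherry leaves
  have getpair : ∀ w, T.adj.Adj c w → (T.adj.neighborSet w).ncard = 3 →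
      ∃ w1 w2, w1 ≠ w2 ∧ T.adj.neighborSet w = {c, w1, w2} ∧ w1 ≠ c ∧ w2 ≠ c := by
    intro w hcw h3
    have hcm : c ∈ T.adj.neighborSet w := hcw.symm
    have h2 : (T.adj.neighborSet w \ {c}).ncard = 2 := by
      rw [Set.ncard_diff_singleton_of_mem hcm, h3]
    obtain ⟨w1, w2, h12, hws⟩ := Set.ncard_eq_two.mp h2
    have hw1 : w1 ∈ T.adj.neighborSet w \ {c} := by rw [hws]; simp
    have hw2 : w2 ∈ T.adj.neighborSet w \ {c} := by rw [hws]; simp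
    refine ⟨w1, w2, h12, ?_, hw1.2, hw2.2⟩
    have := congrArg (insert c) hws
    rwa [Set.insert_diff_singleton, Set.insert_eq_self.mpr hcm] at this
  obtain ⟨x1, x2, hx12, hnx, hx1c, hx2c⟩ := getpair x hcx hx3
  obtain ⟨y1, y2, hy12, hny, hy1c, hy2c⟩ := getpair y hcy hy3
  obtain ⟨z1, z2, hz12, hnz, hz1c, hz2c⟩ := getpair z hcz hz3
  have hnc : T.adj.neighborSet c = {x, y, z} := hset
  -- adjacency facts
  have hxx1 : T.adj.Adj x x1 := by
    have hmem : x1 ∈ T.adj.neighborSet x := by rw [hnx]; simp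
    exact hmem
  have hxx2 : T.adj.Adj x x2 := by
    have hmem : x2 ∈ T.adj.neighborSet x := by rw [hnx]; simp
    exact hmem
  have hyy1 : T.adj.Adj y y1 := by
    have hmem : y1 ∈ T.adj.neighborSet y := by rw [hny]; simp
    exact hmem
  have hyy2 : T.adj.Adj y y2 := by
    have hmem : y2 ∈ T.adj.neighborSet y := by rw [hny]; simp
    exact hmem
  have hzz1 : T.adj.Adj z z1 := by
    have hmem : z1 ∈ T.adj.neighborSet z := by rw [hnz]; simp
    exact hmem
  have hzz2 : T.adj.Adj z z2 := by
    have hmem : z2 ∈ T.adj.neighborSet z := by rw [hnz]; simp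
    exact hmem
  -- distinctness of leaves from internal vertices
  -- generic: leaves attached to different internal vertices are distinct
  have hleaf_ne : ∀ (u v : Fin (2*6-2)) w w', u ≠ v → T.adj.Adj c u → T.adj.Adj c v →
      T.adj.Adj u w → T.adj.Adj v w' → w ≠ c → w ≠ w' := by
    intro u v w w' huv hcu hcv hw hw' hwc heq
    subst heq
    exact no_common T.acyclic huv hwc hw hcu.symm hw' hcv.symm
  -- leaf vs other internal vertex
  have hleaf_ne_int : ∀ (u v : Fin (2*6-2)) w, u ≠ v → T.adj.Adj c u → T.adj.Adj c v →
      T.adj.Adj u w → w ≠ v := by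
    intro u v w huv hcu hcv hw heq
    subst heq
    exact no_tri T.acyclic hcu hw hcv
  have hx1y : x1 ≠ y := hleaf_ne_int x y x1 hxy hcx hcy hxx1
  have hx1z : x1 ≠ z := hleaf_ne_int x z x1 hxz hcx hcz hxx1
  have hx2y : x2 ≠ y := hleaf_ne_int x y x2 hxy hcx hcy hxx2
  have hx2z : x2 ≠ z := hleaf_ne_int x z x2 hxz hcx hcz hxx2
  have hy1x : y1 ≠ x := hleaf_ne_int y x y1 hxy.symm hcy hcx hyy1
  have hy1z : y1 ≠ z := hleaf_ne_int y z y1 hyz hcy hcz hyy1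
  have hy2x : y2 ≠ x := hleaf_ne_int y x y2 hxy.symm hcy hcx hyy2
  have hy2z : y2 ≠ z := hleaf_ne_int y z y2 hyz hcy hcz hyy2
  have hz1x : z1 ≠ x := hleaf_ne_int z x z1 hxz.symm hcz hcx hzz1
  have hz1y : z1 ≠ y := hleaf_ne_int z y z1 hyz.symm hcz hcy hzz1
  have hz2x : z2 ≠ x := hleaf_ne_int z x z2 hxz.symm hcz hcx hzz2
  have hz2y : z2 ≠ y := hleaf_ne_int z y z2 hyz.symm hcz hcy hzz2
  have hx1y1 : x1 ≠ y1 := hleaf_ne x y x1 y1 hxy hcx hcy hxx1 hyy1 hx1c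
  have hx1y2 : x1 ≠ y2 := hleaf_ne x y x1 y2 hxy hcx hcy hxx1 hyy2 hx1c
  have hx2y1 : x2 ≠ y1 := hleaf_ne x y x2 y1 hxy hcx hcy hxx2 hyy1 hx2c
  have hx2y2 : x2 ≠ y2 := hleaf_ne x y x2 y2 hxy hcx hcy hxx2 hyy2 hx2c
  have hx1z1 : x1 ≠ z1 := hleaf_ne x z x1 z1 hxz hcx hcz hxx1 hzz1 hx1c
  have hx1z2 : x1 ≠ z2 := hleaf_ne x z x1 z2 hxz hcx hcz hxx1 hzz2 hx1c
  have hx2z1 : x2 ≠ z1 := hleaf_ne x z x2 z1 hxz hcx hcz hxx2 hzz1 hx2c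
  have hx2z2 : x2 ≠ z2 := hleaf_ne x z x2 z2 hxz hcx hcz hxx2 hzz2 hx2c
  have hy1z1 : y1 ≠ z1 := hleaf_ne y z y1 z1 hyz hcy hcz hyy1 hzz1 hy1c
  have hy1z2 : y1 ≠ z2 := hleaf_ne y z y1 z2 hyz hcy hcz hyy1 hzz2 hy1c
  have hy2z1 : y2 ≠ z1 := hleaf_ne y z y2 z1 hyz hcy hcz hyy2 hzz1 hy2c
  have hy2z2 : y2 ≠ z2 := hleaf_ne y z y2 z2 hyz hcy hcz hyy2 hzz2 hy2c
  have hcxne : c ≠ x := hcx.ne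
  have hcyne : c ≠ y := hcy.ne
  have hczne : c ≠ z := hcz.ne
  have hxx1ne : x ≠ x1 := hxx1.ne
  have hxx2ne : x ≠ x2 := hxx2.ne
  have hyy1ne : y ≠ y1 := hyy1.ne
  have hyy2ne : y ≠ y2 := hyy2.ne
  have hzz1ne : z ≠ z1 := hzz1.ne
  have hzz2ne : z ≠ z2 := hzz2.ne
  have hcx1 : c ≠ x1 := hx1c.symm
  have hcx2 : c ≠ x2 := hx2c.symm
  have hcy1 : c ≠ y1 := hy1c.symm
  have hcy2 : c ≠ y2 := hy2c.symm
  have hcz1 : c ≠ z1 := hz1c.symm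
  have hcz2 : c ≠ z2 := hz2c.symm
  -- exhaustion of the ten vertices
  have hF : ({c, x, y, z, x1, x2, y1, y2, z1, z2} : Finset (Fin (2*6-2))) = Finset.univ := by
    apply Finset.eq_univ_of_card
    rw [Finset.card_insert_of_notMem (by simp [hcxne, hcyne, hczne, hcx1, hcx2, hcy1, hcy2, hcz1, hcz2]),
        Finset.card_insert_of_notMem (by simp [hxy, hxz, hxx1ne, hxx2ne, (hy1x).symm, (hy2x).symm, (hz1x).symm, (hz2x).symm]),
        Finset.card_insert_of_notMem (by simp [hyz, (hx1y).symm, (hx2y).symm, hyy1ne, hyy2ne, (hz1y).symm, (hz2y).symm]),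
        Finset.card_insert_of_notMem (by simp [(hx1z).symm, (hx2z).symm, (hy1z).symm, (hy2z).symm, hzz1ne, hzz2ne]),
        Finset.card_insert_of_notMem (by simp [hx12, hx1y1, hx1y2, hx1z1, hx1z2]),
        Finset.card_insert_of_notMem (by simp [hx2y1, hx2y2, hx2z1, hx2z2]),
        Finset.card_insert_of_notMem (by simp [hy12, hy1z1, hy1z2]),
        Finset.card_insert_of_notMem (by simp [hy2z1, hy2z2]),
        Finset.card_insert_of_notMem (by simp [hz12]),
        Finset.card_singleton]
    rfl
  have hexh : ∀ v : Fin (2*6-2), v = c ∨ v = x ∨ v = y ∨ v = z ∨ v = x1 ∨ v = x2 ∨ v = y1 ∨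
      v = y2 ∨ v = z1 ∨ v = z2 := by
    intro v
    have hv : v ∈ ({c, x, y, z, x1, x2, y1, y2, z1, z2} : Finset (Fin (2*6-2))) := by
      rw [hF]; exact Finset.mem_univ v
    simpa using hv
  -- unique neighbor of a leaf
  have hleafnb : ∀ w b₀, w ≠ c → w ≠ x → w ≠ y → w ≠ z → T.adj.Adj w b₀ →
      ∀ u, T.adj.Adj w u → u = b₀ := by
    intro w b₀ h1 h2 h3 h4 hwb u hwu
    obtain ⟨a, ha⟩ := Set.ncard_eq_one.mp (hdeg1 w h1 h2 h3 h4)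
    have hb : b₀ ∈ T.adj.neighborSet w := hwb
    have hu : u ∈ T.adj.neighborSet w := hwu
    rw [ha] at hb hu
    simp at hb hu
    rw [hb, hu]
  -- leaf labels
  have getleaf : ∀ w, w ≠ c → w ≠ x → w ≠ y → w ≠ z → ∃ i, T.leaf i = w := by
    intro w h1 h2 h3 h4; exact (T.leaf_range w).mp (hdeg1 w h1 h2 h3 h4)
  obtain ⟨i1, hi1⟩ := getleaf x1 hx1c hxx1ne.symm hx1y hx1z
  obtain ⟨i2, hi2⟩ := getleaf x2 hx2c hxx2ne.symm hx2y hx2z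
  obtain ⟨i3, hi3⟩ := getleaf y1 hy1c hy1x hyy1ne.symm hy1z
  obtain ⟨i4, hi4⟩ := getleaf y2 hy2c hy2x hyy2ne.symm hy2z
  obtain ⟨i5, hi5⟩ := getleaf z1 hz1c hz1x hz1y hzz1ne.symm
  obtain ⟨i6, hi6⟩ := getleaf z2 hz2c hz2x hz2y hzz2ne.symm
  have hleafeq : ∀ k : Fin 6, T.leaf (![i1,i2,i3,i4,i5,i6] k) = ![x1,x2,y1,y2,z1,z2] k := by
    intro k; fin_cases k
    exacts [hi1, hi2, hi3, hi4, hi5, hi6]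
  -- extra symmetric inequalities among leaves
  have hy1x1 : y1 ≠ x1 := hx1y1.symm
  have hy1x2 : y1 ≠ x2 := hx2y1.symm
  have hy2x1 : y2 ≠ x1 := hx1y2.symm
  have hy2x2 : y2 ≠ x2 := hx2y2.symm
  have hz1x1 : z1 ≠ x1 := hx1z1.symm
  have hz1x2 : z1 ≠ x2 := hx2z1.symm
  have hz2x1 : z2 ≠ x1 := hx1z2.symm
  have hz2x2 : z2 ≠ x2 := hx2z2.symm
  have hz1y1 : z1 ≠ y1 := hy1z1.symm
  have hz1y2 : z1 ≠ y2 := hy2z1.symm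
  have hz2y1 : z2 ≠ y1 := hy1z2.symm
  have hz2y2 : z2 ≠ y2 := hy2z2.symm
  have hx21 : x2 ≠ x1 := hx12.symm
  have hy21 : y2 ≠ y1 := hy12.symm
  have hz21 : z2 ≠ z1 := hz12.symm
  have hLne : ∀ a b : Fin 6, a ≠ b →
      (![x1,x2,y1,y2,z1,z2] : Fin 6 → Fin (2*6-2)) a ≠ ![x1,x2,y1,y2,z1,z2] b := by
    intro a b hab
    fin_cases a <;> fin_cases b <;> first | (exact absurd rfl hab) | assumption
  have hpinj : Function.Injective (![i1,i2,i3,i4,i5,i6] : Fin 6 → Fin 6) := by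
    intro a b hab
    by_contra hne
    exact hLne a b hne (by rw [← hleafeq a, ← hleafeq b, hab])
  refine ⟨c, x, y, z, ![x1,x2,y1,y2,z1,z2], ![i1,i2,i3,i4,i5,i6],
    Finite.injective_iff_bijective.mp hpinj, hleafeq, ⟨hcxne, hcyne, hczne, hcx1, hcx2, hcy1, hcy2, hcz1, hcz2, hxy, hxz, hxx1ne, hxx2ne, (hy1x).symm, (hy2x).symm, (hz1x).symm, (hz2x).symm, hyz, (hx1y).symm, (hx2y).symm, hyy1ne, hyy2ne, (hz1y).symm, (hz2y).symm, (hx1z).symm, (hx2z).symm, (hy1z).symm, (hy2z).symm, hzz1ne, hzz2ne, hx12, hx1y1, hx1y2, hx1z1, hx1z2, hx2y1, hx2y2, hx2z1, hx2z2, hy12, hy1z1, hy1z2, hy2z1, hy2z2, hz12⟩, ?_⟩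
  show ∀ a b, T.adj.Adj a b ↔ SRel c x y z x1 x2 y1 y2 z1 z2 a b
  intro a b
  constructor
  · intro hab
    rcases hexh a with h|h|h|h|h|h|h|h|h|h
    · rw [h] at hab
      have hb : b ∈ T.adj.neighborSet c := hab
      rw [hnc] at hb; simp at hb
      rcases hb with rfl|rfl|rfl <;> simp [SRel, h]
    · rw [h] at hab
      have hb : b ∈ T.adj.neighborSet x := hab
      rw [hnx] at hb; simp at hb
      rcases hb with rfl|rfl|rfl <;> simp [SRel, h]
    · rw [h] at hab
      have hb : b ∈ T.adj.neighborSet y := hab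
      rw [hny] at hb; simp at hb
      rcases hb with rfl|rfl|rfl <;> simp [SRel, h]
    · rw [h] at hab
      have hb : b ∈ T.adj.neighborSet z := hab
      rw [hnz] at hb; simp at hb
      rcases hb with rfl|rfl|rfl <;> simp [SRel, h]
    · rw [h] at hab
      have hbx := hleafnb x1 x hx1c hxx1ne.symm hx1y hx1z hxx1.symm b hab
      subst hbx; simp [SRel, h]
    · rw [h] at hab
      have hbx := hleafnb x2 x hx2c hxx2ne.symm hx2y hx2z hxx2.symm b hab
      subst hbx; simp [SRel, h]
    · rw [h] at hab
      have hbx := hleafnb y1 y hy1c hy1x hyy1ne.symm hy1z hyy1.symm b hab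
      subst hbx; simp [SRel, h]
    · rw [h] at hab
      have hbx := hleafnb y2 y hy2c hy2x hyy2ne.symm hy2z hyy2.symm b hab
      subst hbx; simp [SRel, h]
    · rw [h] at hab
      have hbx := hleafnb z1 z hz1c hz1x hz1y hzz1ne.symm hzz1.symm b hab
      subst hbx; simp [SRel, h]
    · rw [h] at hab
      have hbx := hleafnb z2 z hz2c hz2x hz2y hzz2ne.symm hzz2.symm b hab
      subst hbx; simp [SRel, h]
  · intro hsr
    rcases hsr with ⟨rfl,rfl⟩|⟨rfl,rfl⟩|⟨rfl,rfl⟩|⟨rfl,rfl⟩|⟨rfl,rfl⟩|⟨rfl,rfl⟩|⟨rfl,rfl⟩|⟨rfl,rfl⟩|⟨rfl,rfl⟩|⟨rfl,rfl⟩|⟨rfl,rfl⟩|⟨rfl,rfl⟩|⟨rfl,rfl⟩|⟨rfl,rfl⟩|⟨rfl,rfl⟩|⟨rfl,rfl⟩|⟨rfl,rfl⟩|⟨rfl,rfl⟩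
    exacts [hcx, hcx.symm, hcy, hcy.symm, hcz, hcz.symm, hxx1, hxx1.symm, hxx2, hxx2.symm,
      hyy1, hyy1.symm, hyy2, hyy2.symm, hzz1, hzz1.symm, hzz2, hzz2.symm]

def edgeDiff {m : ℕ} (g : Fin m → Bool) : Sym2 (Fin m) → Bool :=
  Sym2.lift ⟨fun u v => g u != g v, fun u v => by cases h1 : g u <;> cases h2 : g v <;> simp [h1, h2]⟩

def tcost (a b c d e f bc bx bq bz : Bool) : ℕ :=
  (if bc != bx then 1 else 0) + ((if bc != bq then 1 else 0) + ((if bc != bz then 1 else 0) +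
  ((if bx != a then 1 else 0) + ((if bx != b then 1 else 0) + ((if bq != c then 1 else 0) +
  ((if bq != d then 1 else 0) + ((if bz != e then 1 else 0) + (if bz != f then 1 else 0))))))))

def tps (v : Bool × Bool × Bool × Bool × Bool × Bool) : ℕ :=
  match v with
  | (a,b,c,d,e,f) =>
    min (min (min (min (tcost a b c d e f false false false false) (tcost a b c d e f false false false true))
                  (min (tcost a b c d e f false false true false) (tcost a b c d e f false false true true)))
             (min (min (tcost a b c d e f false true false false) (tcost a b c d e f false true false true))
                  (min (tcost a b c d e f false true true false) (tcost a b c d e f false true true true))))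
        (min (min (min (tcost a b c d e f true false false false) (tcost a b c d e f true false false true))
                  (min (tcost a b c d e f true false true false) (tcost a b c d e f true false true true)))
             (min (min (tcost a b c d e f true true false false) (tcost a b c d e f true true false true))
                  (min (tcost a b c d e f true true true false) (tcost a b c d e f true true true true))))

lemma min16_le (t0 t1 t2 t3 t4 t5 t6 t7 t8 t9 t10 t11 t12 t13 t14 t15 : ℕ) :
    let M := min (min (min (min t0 t1) (min t2 t3)) (min (min t4 t5) (min t6 t7)))
      (min (min (min t8 t9) (min t10 t11)) (min (min t12 t13) (min t14 t15)))
    M ≤ t0 ∧ M ≤ t1 ∧ M ≤ t2 ∧ M ≤ t3 ∧ M ≤ t4 ∧ M ≤ t5 ∧ M ≤ t6 ∧ M ≤ t7 ∧ M ≤ t8 ∧ M ≤ t9 ∧ M ≤ t10 ∧ M ≤ t11 ∧ M ≤ t12 ∧ M ≤ t13 ∧ M ≤ t14 ∧ M ≤ t15 :=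
  ⟨Nat.le_trans (Nat.min_le_left _ _) (Nat.le_trans (Nat.min_le_left _ _) (Nat.le_trans (Nat.min_le_left _ _) (Nat.min_le_left _ _))), Nat.le_trans (Nat.min_le_left _ _) (Nat.le_trans (Nat.min_le_left _ _) (Nat.le_trans (Nat.min_le_left _ _) (Nat.min_le_right _ _))), Nat.le_trans (Nat.min_le_left _ _) (Nat.le_trans (Nat.min_le_left _ _) (Nat.le_trans (Nat.min_le_right _ _) (Nat.min_le_left _ _))), Nat.le_trans (Nat.min_le_left _ _) (Nat.le_trans (Nat.min_le_left _ _) (Nat.le_trans (Nat.min_le_right _ _) (Nat.min_le_right _ _))), Nat.le_trans (Nat.min_le_left _ _) (Nat.le_trans (Nat.min_le_right _ _) (Nat.le_trans (Nat.min_le_left _ _) (Nat.min_le_left _ _))), Nat.le_trans (Nat.min_le_left _ _) (Nat.le_trans (Nat.min_le_right _ _) (Nat.le_trans (Nat.min_le_left _ _) (Nat.min_le_right _ _))), Nat.le_trans (Nat.min_le_left _ _) (Nat.le_trans (Nat.min_le_right _ _) (Nat.le_trans (Nat.min_le_right _ _) (Nat.min_le_left _ _))), Nat.le_trans (Nat.min_le_left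 _ _) (Nat.le_trans (Nat.min_le_right _ _) (Nat.le_trans (Nat.min_le_right _ _) (Nat.min_le_right _ _))), Nat.le_trans (Nat.min_le_right _ _) (Nat.le_trans (Nat.min_le_left _ _) (Nat.le_trans (Nat.min_le_left _ _) (Nat.min_le_left _ _))), Nat.le_trans (Nat.min_le_right _ _) (Nat.le_trans (Nat.min_le_left _ _) (Nat.le_trans (Nat.min_le_left _ _) (Nat.min_le_right _ _))), Nat.le_trans (Nat.min_le_right _ _) (Nat.le_trans (Nat.min_le_left _ _) (Nat.le_trans (Nat.min_le_right _ _) (Nat.min_le_left _ _))), Nat.le_trans (Nat.min_le_right _ _) (Nat.le_trans (Nat.min_le_left _ _) (Nat.le_trans (Nat.min_le_right _ _) (Nat.min_le_right _ _))), Nat.le_trans (Nat.min_le_right _ _) (Nat.le_trans (Nat.min_le_right _ _) (Nat.le_trans (Nat.min_le_left _ _) (Nat.min_le_left _ _))), Nat.le_trans (Nat.min_le_right _ _) (Nat.le_trans (Nat.min_le_right _ _) (Nat.le_trans (Nat.min_le_left _ _) (Nat.min_le_right _ _))), Nat.le_trans (Nat.min_le_right _ _) (Nat.le_trans (Nat.min_le_right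 _ _) (Nat.le_trans (Nat.min_le_right _ _) (Nat.min_le_left _ _))), Nat.le_trans (Nat.min_le_right _ _) (Nat.le_trans (Nat.min_le_right _ _) (Nat.le_trans (Nat.min_le_right _ _) (Nat.min_le_right _ _)))⟩

set_option maxHeartbeats 1000000 in
lemma tps_le_tcost (a b c d e f bc bx bq bz : Bool) :
    tps (a,b,c,d,e,f) ≤ tcost a b c d e f bc bx bq bz := by
  simp only [tps]
  cases bc <;> cases bx <;> cases bq <;> cases bz
  · exact (min16_le _ _ _ _ _ _ _ _ _ _ _ _ _ _ _ _).1
  · exact (min16_le _ _ _ _ _ _ _ _ _ _ _ _ _ _ _ _).2.1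
  · exact (min16_le _ _ _ _ _ _ _ _ _ _ _ _ _ _ _ _).2.2.1
  · exact (min16_le _ _ _ _ _ _ _ _ _ _ _ _ _ _ _ _).2.2.2.1
  · exact (min16_le _ _ _ _ _ _ _ _ _ _ _ _ _ _ _ _).2.2.2.2.1
  · exact (min16_le _ _ _ _ _ _ _ _ _ _ _ _ _ _ _ _).2.2.2.2.2.1
  · exact (min16_le _ _ _ _ _ _ _ _ _ _ _ _ _ _ _ _).2.2.2.2.2.2.1
  · exact (min16_le _ _ _ _ _ _ _ _ _ _ _ _ _ _ _ _).2.2.2.2.2.2.2.1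
  · exact (min16_le _ _ _ _ _ _ _ _ _ _ _ _ _ _ _ _).2.2.2.2.2.2.2.2.1
  · exact (min16_le _ _ _ _ _ _ _ _ _ _ _ _ _ _ _ _).2.2.2.2.2.2.2.2.2.1
  · exact (min16_le _ _ _ _ _ _ _ _ _ _ _ _ _ _ _ _).2.2.2.2.2.2.2.2.2.2.1
  · exact (min16_le _ _ _ _ _ _ _ _ _ _ _ _ _ _ _ _).2.2.2.2.2.2.2.2.2.2.2.1
  · exact (min16_le _ _ _ _ _ _ _ _ _ _ _ _ _ _ _ _).2.2.2.2.2.2.2.2.2.2.2.2.1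
  · exact (min16_le _ _ _ _ _ _ _ _ _ _ _ _ _ _ _ _).2.2.2.2.2.2.2.2.2.2.2.2.2.1
  · exact (min16_le _ _ _ _ _ _ _ _ _ _ _ _ _ _ _ _).2.2.2.2.2.2.2.2.2.2.2.2.2.2.1
  · exact (min16_le _ _ _ _ _ _ _ _ _ _ _ _ _ _ _ _).2.2.2.2.2.2.2.2.2.2.2.2.2.2.2

set_option maxHeartbeats 1000000 in
lemma ps_eq (T : PhyloTree 6) (c x y z l1 l2 l3 l4 l5 l6 : Fin (2*6-2)) (p : Fin 6 → Fin 6)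
    (hp : Function.Bijective p)
    (hL1 : T.leaf (p 0) = l1) (hL2 : T.leaf (p 1) = l2) (hL3 : T.leaf (p 2) = l3)
    (hL4 : T.leaf (p 3) = l4) (hL5 : T.leaf (p 4) = l5) (hL6 : T.leaf (p 5) = l6)
    (hd : TenDistinct c x y z l1 l2 l3 l4 l5 l6)
    (hadj : ∀ a b, T.adj.Adj a b ↔ SRel c x y z l1 l2 l3 l4 l5 l6 a b)
    (f : Fin 6 → Bool) :
    ps f T = tps (f (p 0), f (p 1), f (p 2), f (p 3), f (p 4), f (p 5)) := by
  obtain ⟨d01, d02, d03, d04, d05, d06, d07, d08, d09, d12, d13, d14, d15, d16, d17, d18, d19, d23, d24, d25, d26, d27, d28, d29, d34, d35, d36, d37, d38, d39, d45, d46, d47, d48, d49, d56, d57, d58, d59, d67, d68, d69, d78, d79, d89⟩ := hd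
  have hES : T.adj.edgeSet = ↑({s(c, x), s(c, y), s(c, z), s(x, l1), s(x, l2), s(y, l3), s(y, l4), s(z, l5), s(z, l6)} : Finset (Sym2 (Fin (2*6-2)))) := by
    ext e
    induction e using Sym2.ind with
    | _ a b =>
      simp only [SimpleGraph.mem_edgeSet, hadj, SRel, Finset.coe_insert, Set.mem_insert_iff,
        Finset.coe_singleton, Set.mem_singleton_iff, Sym2.eq_iff]
      constructor
      · rintro (⟨rfl,rfl⟩|⟨rfl,rfl⟩|⟨rfl,rfl⟩|⟨rfl,rfl⟩|⟨rfl,rfl⟩|⟨rfl,rfl⟩|⟨rfl,rfl⟩|⟨rfl,rfl⟩|⟨rfl,rfl⟩|⟨rfl,rfl⟩|⟨rfl,rfl⟩|⟨rfl,rfl⟩|⟨rfl,rfl⟩|⟨rfl,rfl⟩|⟨rfl,rfl⟩|⟨rfl,rfl⟩|⟨rfl,rfl⟩|⟨rfl,rfl⟩) <;> simp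
      · rintro ((⟨rfl,rfl⟩|⟨rfl,rfl⟩)|((⟨rfl,rfl⟩|⟨rfl,rfl⟩)|((⟨rfl,rfl⟩|⟨rfl,rfl⟩)|((⟨rfl,rfl⟩|⟨rfl,rfl⟩)|((⟨rfl,rfl⟩|⟨rfl,rfl⟩)|((⟨rfl,rfl⟩|⟨rfl,rfl⟩)|((⟨rfl,rfl⟩|⟨rfl,rfl⟩)|((⟨rfl,rfl⟩|⟨rfl,rfl⟩)|(⟨rfl,rfl⟩|⟨rfl,rfl⟩))))))))) <;> simp
  have hchange : ∀ g : Fin (2*6-2) → Bool, changingNumber T g =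
      tcost (g l1) (g l2) (g l3) (g l4) (g l5) (g l6) (g c) (g x) (g y) (g z) := by
    intro g
    have hsetg : {e : Sym2 (Fin (2*6-2)) | e ∈ T.adj.edgeSet ∧ ∃ u v, e = s(u, v) ∧ g u ≠ g v} =
        ↑(({s(c, x), s(c, y), s(c, z), s(x, l1), s(x, l2), s(y, l3), s(y, l4), s(z, l5), s(z, l6)} : Finset (Sym2 (Fin (2*6-2)))).filter (fun e => edgeDiff g e = true)) := by
      ext e
      induction e using Sym2.ind with
      | _ a b =>
        simp only [Set.mem_setOf_eq, hES, Finset.coe_filter, Finset.mem_coe, Finset.mem_filter, Finset.mem_insert,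
          Finset.mem_singleton]
        simp only [edgeDiff, Sym2.lift_mk, bne_iff_ne]
        constructor
        · rintro ⟨hmem, u, v, he, hne⟩
          refine ⟨hmem, ?_⟩
          rw [Sym2.eq_iff] at he
          rcases he with ⟨rfl, rfl⟩ | ⟨rfl, rfl⟩
          · exact hne
          · exact hne.symm
        · rintro ⟨hmem, hne⟩
          exact ⟨hmem, a, b, rfl, hne⟩
    rw [changingNumber, hsetg, Set.ncard_coe_finset, Finset.card_filter]
    rw [Finset.sum_insert (by simp [Sym2.eq_iff, d01, d02, d03, d04, d05, d06, d07, d08, d09, d12, d13, d14, d15, d16, d17, d18, d19, d23, d24, d25, d26, d27, d28, d29, d34, d35, d36, d37, d38, d39, d45, d46, d47, d48, d49, d56, d57, d58, d59, d67, d68, d69, d78, d79, d89, Ne.symm d01, Ne.symm d02, Ne.symm d03, Ne.symm d04, Ne.symm d05, Ne.symm d06, Ne.symm d07, Ne.symm d08, Ne.symm d09, Ne.symm d12, Ne.symm d13, Ne.symm d14, Ne.symm d15, Ne.symm d16, Ne.symm d17, Ne.symm d18, Ne.symm d19, Ne.symm d23, Ne.symm d24, Ne.symm d25, Ne.symm d26,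 Ne.symm d27, Ne.symm d28, Ne.symm d29, Ne.symm d34, Ne.symm d35, Ne.symm d36, Ne.symm d37, Ne.symm d38, Ne.symm d39, Ne.symm d45, Ne.symm d46, Ne.symm d47, Ne.symm d48, Ne.symm d49, Ne.symm d56, Ne.symm d57, Ne.symm d58, Ne.symm d59, Ne.symm d67, Ne.symm d68, Ne.symm d69, Ne.symm d78, Ne.symm d79, Ne.symm d89]),
        Finset.sum_insert (by simp [Sym2.eq_iff, d01, d02, d03, d04, d05, d06, d07, d08, d09, d12, d13, d14, d15, d16, d17, d18, d19, d23, d24, d25, d26, d27, d28, d29, d34, d35, d36, d37, d38, d39, d45, d46, d47, d48, d49, d56, d57, d58, d59, d67, d68, d69, d78, d79, d89, Ne.symm d01, Ne.symm d02, Ne.symm d03, Ne.symm d04, Ne.symm d05, Ne.symm d06, Ne.symm d07, Ne.symm d08, Ne.symm d09, Ne.symm d12, Ne.symm d13, Ne.symm d14, Ne.symm d15, Ne.symm d16, Ne.symm d17, Ne.symm d18, Ne.symm d19, Ne.symm d23, Ne.symm d24, Ne.symm d25, Ne.symm d26, Ne.symm d27, Ne.symm d28, Ne.symm d29, Ne.symm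 d34, Ne.symm d35, Ne.symm d36, Ne.symm d37, Ne.symm d38, Ne.symm d39, Ne.symm d45, Ne.symm d46, Ne.symm d47, Ne.symm d48, Ne.symm d49, Ne.symm d56, Ne.symm d57, Ne.symm d58, Ne.symm d59, Ne.symm d67, Ne.symm d68, Ne.symm d69, Ne.symm d78, Ne.symm d79, Ne.symm d89]),
        Finset.sum_insert (by simp [Sym2.eq_iff, d01, d02, d03, d04, d05, d06, d07, d08, d09, d12, d13, d14, d15, d16, d17, d18, d19, d23, d24, d25, d26, d27, d28, d29, d34, d35, d36, d37, d38, d39, d45, d46, d47, d48, d49, d56, d57, d58, d59, d67, d68, d69, d78, d79, d89, Ne.symm d01, Ne.symm d02, Ne.symm d03, Ne.symm d04, Ne.symm d05, Ne.symm d06, Ne.symm d07, Ne.symm d08, Ne.symm d09, Ne.symm d12, Ne.symm d13, Ne.symm d14, Ne.symm d15, Ne.symm d16, Ne.symm d17, Ne.symm d18, Ne.symm d19, Ne.symm d23, Ne.symm d24, Ne.symm d25, Ne.symm d26, Ne.symm d27, Ne.symm d28, Ne.symm d29, Ne.symm d34, Ne.symm d35, Ne.symm d36, Ne.symm d37, Ne.symm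 d38, Ne.symm d39, Ne.symm d45, Ne.symm d46, Ne.symm d47, Ne.symm d48, Ne.symm d49, Ne.symm d56, Ne.symm d57, Ne.symm d58, Ne.symm d59, Ne.symm d67, Ne.symm d68, Ne.symm d69, Ne.symm d78, Ne.symm d79, Ne.symm d89]),
        Finset.sum_insert (by simp [Sym2.eq_iff, d01, d02, d03, d04, d05, d06, d07, d08, d09, d12, d13, d14, d15, d16, d17, d18, d19, d23, d24, d25, d26, d27, d28, d29, d34, d35, d36, d37, d38, d39, d45, d46, d47, d48, d49, d56, d57, d58, d59, d67, d68, d69, d78, d79, d89, Ne.symm d01, Ne.symm d02, Ne.symm d03, Ne.symm d04, Ne.symm d05, Ne.symm d06, Ne.symm d07, Ne.symm d08, Ne.symm d09, Ne.symm d12, Ne.symm d13, Ne.symm d14, Ne.symm d15, Ne.symm d16, Ne.symm d17, Ne.symm d18, Ne.symm d19, Ne.symm d23, Ne.symm d24, Ne.symm d25, Ne.symm d26, Ne.symm d27, Ne.symm d28, Ne.symm d29, Ne.symm d34, Ne.symm d35, Ne.symm d36, Ne.symm d37, Ne.symm d38, Ne.symm d39, Ne.symm d45, Ne.symm d46, Ne.symm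 d47, Ne.symm d48, Ne.symm d49, Ne.symm d56, Ne.symm d57, Ne.symm d58, Ne.symm d59, Ne.symm d67, Ne.symm d68, Ne.symm d69, Ne.symm d78, Ne.symm d79, Ne.symm d89]),
        Finset.sum_insert (by simp [Sym2.eq_iff, d01, d02, d03, d04, d05, d06, d07, d08, d09, d12, d13, d14, d15, d16, d17, d18, d19, d23, d24, d25, d26, d27, d28, d29, d34, d35, d36, d37, d38, d39, d45, d46, d47, d48, d49, d56, d57, d58, d59, d67, d68, d69, d78, d79, d89, Ne.symm d01, Ne.symm d02, Ne.symm d03, Ne.symm d04, Ne.symm d05, Ne.symm d06, Ne.symm d07, Ne.symm d08, Ne.symm d09, Ne.symm d12, Ne.symm d13, Ne.symm d14, Ne.symm d15, Ne.symm d16, Ne.symm d17, Ne.symm d18, Ne.symm d19, Ne.symm d23, Ne.symm d24, Ne.symm d25, Ne.symm d26, Ne.symm d27, Ne.symm d28, Ne.symm d29, Ne.symm d34, Ne.symm d35, Ne.symm d36, Ne.symm d37, Ne.symm d38, Ne.symm d39, Ne.symm d45, Ne.symm d46, Ne.symm d47, Ne.symm d48, Ne.symm d49, Ne.symm d56, Ne.symm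 d57, Ne.symm d58, Ne.symm d59, Ne.symm d67, Ne.symm d68, Ne.symm d69, Ne.symm d78, Ne.symm d79, Ne.symm d89]),
        Finset.sum_insert (by simp [Sym2.eq_iff, d01, d02, d03, d04, d05, d06, d07, d08, d09, d12, d13, d14, d15, d16, d17, d18, d19, d23, d24, d25, d26, d27, d28, d29, d34, d35, d36, d37, d38, d39, d45, d46, d47, d48, d49, d56, d57, d58, d59, d67, d68, d69, d78, d79, d89, Ne.symm d01, Ne.symm d02, Ne.symm d03, Ne.symm d04, Ne.symm d05, Ne.symm d06, Ne.symm d07, Ne.symm d08, Ne.symm d09, Ne.symm d12, Ne.symm d13, Ne.symm d14, Ne.symm d15, Ne.symm d16, Ne.symm d17, Ne.symm d18, Ne.symm d19, Ne.symm d23, Ne.symm d24, Ne.symm d25, Ne.symm d26, Ne.symm d27, Ne.symm d28, Ne.symm d29, Ne.symm d34, Ne.symm d35, Ne.symm d36, Ne.symm d37, Ne.symm d38, Ne.symm d39, Ne.symm d45, Ne.symm d46, Ne.symm d47, Ne.symm d48, Ne.symm d49, Ne.symm d56, Ne.symm d57, Ne.symm d58, Ne.symm d59, Ne.symm d67, Ne.symm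 d68, Ne.symm d69, Ne.symm d78, Ne.symm d79, Ne.symm d89]),
        Finset.sum_insert (by simp [Sym2.eq_iff, d01, d02, d03, d04, d05, d06, d07, d08, d09, d12, d13, d14, d15, d16, d17, d18, d19, d23, d24, d25, d26, d27, d28, d29, d34, d35, d36, d37, d38, d39, d45, d46, d47, d48, d49, d56, d57, d58, d59, d67, d68, d69, d78, d79, d89, Ne.symm d01, Ne.symm d02, Ne.symm d03, Ne.symm d04, Ne.symm d05, Ne.symm d06, Ne.symm d07, Ne.symm d08, Ne.symm d09, Ne.symm d12, Ne.symm d13, Ne.symm d14, Ne.symm d15, Ne.symm d16, Ne.symm d17, Ne.symm d18, Ne.symm d19, Ne.symm d23, Ne.symm d24, Ne.symm d25, Ne.symm d26, Ne.symm d27, Ne.symm d28, Ne.symm d29, Ne.symm d34, Ne.symm d35, Ne.symm d36, Ne.symm d37, Ne.symm d38, Ne.symm d39, Ne.symm d45, Ne.symm d46, Ne.symm d47, Ne.symm d48, Ne.symm d49, Ne.symm d56, Ne.symm d57, Ne.symm d58, Ne.symm d59, Ne.symm d67, Ne.symm d68, Ne.symm d69, Ne.symm d78, Ne.symm d79, Ne.symm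 d89]),
        Finset.sum_insert (by simp [Sym2.eq_iff, d01, d02, d03, d04, d05, d06, d07, d08, d09, d12, d13, d14, d15, d16, d17, d18, d19, d23, d24, d25, d26, d27, d28, d29, d34, d35, d36, d37, d38, d39, d45, d46, d47, d48, d49, d56, d57, d58, d59, d67, d68, d69, d78, d79, d89, Ne.symm d01, Ne.symm d02, Ne.symm d03, Ne.symm d04, Ne.symm d05, Ne.symm d06, Ne.symm d07, Ne.symm d08, Ne.symm d09, Ne.symm d12, Ne.symm d13, Ne.symm d14, Ne.symm d15, Ne.symm d16, Ne.symm d17, Ne.symm d18, Ne.symm d19, Ne.symm d23, Ne.symm d24, Ne.symm d25, Ne.symm d26, Ne.symm d27, Ne.symm d28, Ne.symm d29, Ne.symm d34, Ne.symm d35, Ne.symm d36, Ne.symm d37, Ne.symm d38, Ne.symm d39, Ne.symm d45, Ne.symm d46, Ne.symm d47, Ne.symm d48, Ne.symm d49, Ne.symm d56, Ne.symm d57, Ne.symm d58, Ne.symm d59, Ne.symm d67, Ne.symm d68, Ne.symm d69, Ne.symm d78, Ne.symm d79, Ne.symm d89]),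
        Finset.sum_singleton]
    rfl
  have hmem : ∀ bc bx bq bz : Bool,
      tcost (f (p 0)) (f (p 1)) (f (p 2)) (f (p 3)) (f (p 4)) (f (p 5)) bc bx bq bz ∈
        {m | ∃ g : Fin (2*6-2) → Bool, (∀ i, g (T.leaf i) = f i) ∧ changingNumber T g = m} := by
      intro bc bx bq bz
      set va := f (p 0); set vb := f (p 1); set vc := f (p 2)
      set vd := f (p 3); set ve := f (p 4); set vf := f (p 5)
      set g0 : Fin (2*6-2) → Bool := fun v =>
        if v = c then bc else if v = x then bx else if v = y then bq else if v = z then bz else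
        if v = l1 then va else if v = l2 then vb else if v = l3 then vc else if v = l4 then vd else
        if v = l5 then ve else vf with hg0
      have hg0_c : g0 c = bc := by simp [g0]
      have hg0_x : g0 x = bx := by simp only [g0]; simp [Ne.symm d01]
      have hg0_y : g0 y = bq := by simp only [g0]; simp [Ne.symm d02, Ne.symm d12]
      have hg0_z : g0 z = bz := by simp only [g0]; simp [Ne.symm d03, Ne.symm d13, Ne.symm d23]
      have hg0_l1 : g0 l1 = va := by simp only [g0]; simp [Ne.symm d04, Ne.symm d14, Ne.symm d24, Ne.symm d34]
      have hg0_l2 : g0 l2 = vb := by simp only [g0]; simp [Ne.symm d05, Ne.symm d15, Ne.symm d25, Ne.symm d35, Ne.symm d45]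
      have hg0_l3 : g0 l3 = vc := by simp only [g0]; simp [Ne.symm d06, Ne.symm d16, Ne.symm d26, Ne.symm d36, Ne.symm d46, Ne.symm d56]
      have hg0_l4 : g0 l4 = vd := by simp only [g0]; simp [Ne.symm d07, Ne.symm d17, Ne.symm d27, Ne.symm d37, Ne.symm d47, Ne.symm d57, Ne.symm d67]
      have hg0_l5 : g0 l5 = ve := by simp only [g0]; simp [Ne.symm d08, Ne.symm d18, Ne.symm d28, Ne.symm d38, Ne.symm d48, Ne.symm d58, Ne.symm d68, Ne.symm d78]
      have hg0_l6 : g0 l6 = vf := by simp only [g0]; simp [Ne.symm d09, Ne.symm d19, Ne.symm d29, Ne.symm d39, Ne.symm d49, Ne.symm d59, Ne.symm d69, Ne.symm d79, Ne.symm d89]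
      refine ⟨g0, ?_, ?_⟩
      · intro i
        obtain ⟨k, rfl⟩ := hp.2 i
        fin_cases k
        · show g0 (T.leaf (p 0)) = f (p 0)
          rw [hL1]; exact hg0_l1
        · show g0 (T.leaf (p 1)) = f (p 1)
          rw [hL2]; exact hg0_l2
        · show g0 (T.leaf (p 2)) = f (p 2)
          rw [hL3]; exact hg0_l3
        · show g0 (T.leaf (p 3)) = f (p 3)
          rw [hL4]; exact hg0_l4
        · show g0 (T.leaf (p 4)) = f (p 4)
          rw [hL5]; exact hg0_l5
        · show g0 (T.leaf (p 5)) = f (p 5)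
          rw [hL6]; exact hg0_l6
      · rw [hchange g0, hg0_c, hg0_x, hg0_y, hg0_z, hg0_l1, hg0_l2, hg0_l3, hg0_l4, hg0_l5, hg0_l6]
  apply le_antisymm
  · have key : ∀ bc bx bq bz : Bool, ps f T ≤
        tcost (f (p 0)) (f (p 1)) (f (p 2)) (f (p 3)) (f (p 4)) (f (p 5)) bc bx bq bz :=
      fun bc bx bq bz => Nat.sInf_le (hmem bc bx bq bz)
    have h00 := key false false false false
    have h01 := key false false false true
    have h02 := key false false true false
    have h03 := key false false true true
    have h04 := key false true false false
    have h05 := key false true false true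
    have h06 := key false true true false
    have h07 := key false true true true
    have h08 := key true false false false
    have h09 := key true false false true
    have h10 := key true false true false
    have h11 := key true false true true
    have h12 := key true true false false
    have h13 := key true true false true
    have h14 := key true true true false
    have h15 := key true true true true
    exact le_min (le_min (le_min (le_min h00 h01) (le_min h02 h03))
        (le_min (le_min h04 h05) (le_min h06 h07)))
      (le_min (le_min (le_min h08 h09) (le_min h10 h11))
        (le_min (le_min h12 h13) (le_min h14 h15)))
  · apply le_csInf
    · exact ⟨_, hmem false false false false⟩
    · rintro m ⟨g, hg, rfl⟩
      rw [hchange g]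
      have e1 : g l1 = f (p 0) := by rw [← hL1]; exact hg (p 0)
      have e2 : g l2 = f (p 1) := by rw [← hL2]; exact hg (p 1)
      have e3 : g l3 = f (p 2) := by rw [← hL3]; exact hg (p 2)
      have e4 : g l4 = f (p 3) := by rw [← hL4]; exact hg (p 3)
      have e5 : g l5 = f (p 4) := by rw [← hL5]; exact hg (p 4)
      have e6 : g l6 = f (p 5) := by rw [← hL6]; exact hg (p 5)
      rw [e1, e2, e3, e4, e5, e6]
      exact tps_le_tcost _ _ _ _ _ _ _ _ _ _

def proj (v : Bool × Bool × Bool × Bool × Bool × Bool) : Fin 6 → Bool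
  | 0 => v.1
  | 1 => v.2.1
  | 2 => v.2.2.1
  | 3 => v.2.2.2.1
  | 4 => v.2.2.2.2.1
  | 5 => v.2.2.2.2.2

def tupP (pm : Fin 6 → Fin 6) (f : Fin 6 → Bool) : Bool × Bool × Bool × Bool × Bool × Bool :=
  (f (pm 0), f (pm 1), f (pm 2), f (pm 3), f (pm 4), f (pm 5))

def tcompat (v w : Bool × Bool × Bool × Bool × Bool × Bool) : Bool :=
  (decide (∀ i : Fin 6, ¬(proj v i = false ∧ proj w i = false))) ||
  (decide (∀ i : Fin 6, ¬(proj v i = false ∧ proj w i = true))) ||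
  (decide (∀ i : Fin 6, ¬(proj v i = true ∧ proj w i = false))) ||
  (decide (∀ i : Fin 6, ¬(proj v i = true ∧ proj w i = true)))

set_option maxRecDepth 100000 in
set_option maxHeartbeats 4000000 in
theorem countN : ∀ j : Fin 6,
    (Finset.univ.filter (fun q : (Bool × Bool × Bool × Bool × Bool × Bool) × (Bool × Bool × Bool × Bool × Bool × Bool) =>
      proj q.1 j = false ∧ proj q.2 j = false ∧ tps q.1 = 1 ∧ tps q.2 = 2 ∧
      tcompat q.1 q.2 = false)).card = 30 := by decide

/-- For a symmetric-shape tree T on six leaves, there are exactly 30 ordered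
pairs (f₁, f₂) of characters with f₁(1) = f₂(1) = 0, ps(f₁,T) = 1, ps(f₂,T) = 2,
and f₁, f₂ incompatible with each other. -/
theorem stmt16 (T : PhyloTree 6) (h : IsSymmetricShape T) :
    Set.ncard {p : (Fin 6 → Bool) × (Fin 6 → Bool) |
      p.1 0 = false ∧ p.2 0 = false ∧ ps p.1 T = 1 ∧ ps p.2 T = 2 ∧
        ¬ CharCompatible p.1 p.2} = 30 := by
  obtain ⟨c, x, y, z, L, pm, hpm, hleafeq, hd, hadj⟩ := tree_structure T h
  have hps : ∀ f : Fin 6 → Bool, ps f T = tps (tupP pm f) := fun f =>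
    ps_eq T c x y z (L 0) (L 1) (L 2) (L 3) (L 4) (L 5) pm hpm (hleafeq 0) (hleafeq 1)
      (hleafeq 2) (hleafeq 3) (hleafeq 4) (hleafeq 5) hd hadj f
  have hprojt : ∀ (f : Fin 6 → Bool) (k : Fin 6), proj (tupP pm f) k = f (pm k) := by
    intro f k; fin_cases k <;> rfl
  obtain ⟨j, hj⟩ := hpm.2 0
  have hall : ∀ (a b : Bool) (f g : Fin 6 → Bool),
      (∀ i, ¬(f i = a ∧ g i = b)) ↔ (∀ k, ¬(proj (tupP pm f) k = a ∧ proj (tupP pm g) k = b)) := by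
    intro a b f g
    constructor
    · intro hh k; rw [hprojt, hprojt]; exact hh (pm k)
    · intro hh i
      obtain ⟨k, rfl⟩ := hpm.2 i
      have := hh k; rwa [hprojt, hprojt] at this
  have hcompat : ∀ f g : Fin 6 → Bool,
      CharCompatible f g ↔ tcompat (tupP pm f) (tupP pm g) = true := by
    intro f g
    simp only [CharCompatible, Set.eq_empty_iff_forall_notMem, Set.mem_inter_iff,
      Set.mem_setOf_eq, tcompat, Bool.or_eq_true, decide_eq_true_eq]
    rw [hall false false, hall false true, hall true false, hall true true]
    tauto
  have htupinj : Function.Injective (tupP pm) := by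
    intro f g hfg
    funext i
    obtain ⟨k, rfl⟩ := hpm.2 i
    have h2 := congrArg (fun v => proj v k) hfg
    simp only [hprojt] at h2
    exact h2
  have hPhiinj : Function.Injective
      (fun q : (Fin 6 → Bool) × (Fin 6 → Bool) => (tupP pm q.1, tupP pm q.2)) := by
    intro q1 q2 hq
    have h1 := congrArg Prod.fst hq
    have h2 := congrArg Prod.snd hq
    exact Prod.ext (htupinj h1) (htupinj h2)
  let pe : (Fin 6) ≃ (Fin 6) := Equiv.ofBijective pm hpm
  have htupinv : ∀ v : Bool × Bool × Bool × Bool × Bool × Bool, tupP pm (fun i => proj v (pe.symm i)) = v := by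
    intro v
    have hc : ∀ k : Fin 6, proj v (pe.symm (pm k)) = proj v k := fun k =>
      congrArg (proj v) (pe.symm_apply_apply k)
    obtain ⟨a, b, c', d, e, f⟩ := v
    show (proj (a,b,c',d,e,f) (pe.symm (pm 0)), proj (a,b,c',d,e,f) (pe.symm (pm 1)),
      proj (a,b,c',d,e,f) (pe.symm (pm 2)), proj (a,b,c',d,e,f) (pe.symm (pm 3)),
      proj (a,b,c',d,e,f) (pe.symm (pm 4)), proj (a,b,c',d,e,f) (pe.symm (pm 5))) = (a,b,c',d,e,f)
    rw [hc 0, hc 1, hc 2, hc 3, hc 4, hc 5]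
    rfl
  have hsymm0 : pe.symm 0 = j := by
    apply pe.symm_apply_eq.mpr
    exact hj.symm
  have himg : (fun q : (Fin 6 → Bool) × (Fin 6 → Bool) => (tupP pm q.1, tupP pm q.2)) ''
      {p : (Fin 6 → Bool) × (Fin 6 → Bool) |
        p.1 0 = false ∧ p.2 0 = false ∧ ps p.1 T = 1 ∧ ps p.2 T = 2 ∧
          ¬ CharCompatible p.1 p.2} =
      ↑(Finset.univ.filter (fun q : (Bool × Bool × Bool × Bool × Bool × Bool) × (Bool × Bool × Bool × Bool × Bool × Bool) =>
        proj q.1 j = false ∧ proj q.2 j = false ∧ tps q.1 = 1 ∧ tps q.2 = 2 ∧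
        tcompat q.1 q.2 = false)) := by
    ext q
    simp only [Set.mem_image, Set.mem_setOf_eq, Finset.coe_filter, Finset.mem_univ, true_and]
    constructor
    · rintro ⟨⟨f1, f2⟩, ⟨h1, h2, h3, h4, h5⟩, rfl⟩
      refine ⟨?_, ?_, ?_, ?_, ?_⟩
      · rw [hprojt, hj]; exact h1
      · rw [hprojt, hj]; exact h2
      · exact (hps f1).symm.trans h3
      · exact (hps f2).symm.trans h4
      · exact Bool.eq_false_iff.mpr (fun ht => h5 ((hcompat f1 f2).mpr ht))
    · rintro ⟨h1, h2, h3, h4, h5⟩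
      refine ⟨(fun i => proj q.1 (pe.symm i), fun i => proj q.2 (pe.symm i)),
        ⟨?_, ?_, ?_, ?_, ?_⟩, ?_⟩
      · show proj q.1 (pe.symm 0) = false
        rw [hsymm0]; exact h1
      · show proj q.2 (pe.symm 0) = false
        rw [hsymm0]; exact h2
      · rw [hps, htupinv q.1]; exact h3
      · rw [hps, htupinv q.2]; exact h4
      · intro hcc
        have hv := (hcompat _ _).mp hcc
        rw [htupinv q.1, htupinv q.2] at hv
        rw [h5] at hv
        exact Bool.false_ne_true hv
      · show (tupP pm (fun i => proj q.1 (pe.symm i)), tupP pm (fun i => proj q.2 (pe.symm i))) = q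
        rw [htupinv q.1, htupinv q.2]
  have key := Set.ncard_image_of_injective
    {p : (Fin 6 → Bool) × (Fin 6 → Bool) |
      p.1 0 = false ∧ p.2 0 = false ∧ ps p.1 T = 1 ∧ ps p.2 T = 2 ∧
        ¬ CharCompatible p.1 p.2} hPhiinj
  rw [← key, himg, Set.ncard_coe_finset]
  exact countN j
end
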